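/- arXiv:math/0405601 — 7 statements merged into one kernel-verified Lean document; each statement's English description precedes it below -/
import Mathlib

section
/- Let X₁, X₂, … be 4-wise independent ±1 random variables with mean zero, and S_n = ∑_{i=1}^n X_i. Then for every M > 0, P(S_n² > M) ≥ (n − M)² / (3n² − 2n) for all n > M; in particular liminf_{n→∞} P(S_n² > M) ≥ 1/3 for every fixed M. -/
open MeasureTheory ProbabilityTheory Filter

set_option linter.unusedSectionVars false
set_option linter.unusedVariables false
section Aux

variable {Ω : Type*} [MeasurableSpace Ω] {μ : Measure Ω} [IsProbabilityMeasure μ]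
  {X : ℕ → Ω → ℝ}

lemma aux_int_of_bound {f : Ω → ℝ} (hf : Measurable f) (C : ℝ) (h : ∀ ω, |f ω| ≤ C) :
    Integrable f μ :=
  (integrable_const C).mono' hf.aestronglyMeasurable
    (Filter.Eventually.of_forall fun ω => by simpa [Real.norm_eq_abs] using h ω)

lemma aux_integral_X (hmeas : ∀ i, Measurable (X i))
    (hrange : ∀ i ω, X i ω = 1 ∨ X i ω = -1)
    (hdist : ∀ i, μ {ω | X i ω = 1} = 1/2) (i : ℕ) :
    ∫ ω, X i ω ∂μ = 0 := by
  set A : Set Ω := {ω | X i ω = 1} with hA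
  have hAm : MeasurableSet A := by
    have : A = X i ⁻¹' {1} := by ext ω; simp [hA]
    rw [this]; exact (hmeas i) (measurableSet_singleton 1)
  have hXi : X i = fun ω => 2 * A.indicator (fun _ => (1:ℝ)) ω - 1 := by
    funext ω
    by_cases hω : ω ∈ A
    · have h1 : X i ω = 1 := hω
      rw [Set.indicator_of_mem hω, h1]; norm_num
    · have h1 : X i ω = -1 := (hrange i ω).resolve_left hω
      rw [Set.indicator_of_notMem hω, h1]; norm_num
  have hind : Integrable (A.indicator (fun _ => (1:ℝ))) μ :=
    (integrable_const 1).indicator hAm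
  rw [hXi, integral_sub (hind.const_mul 2) (integrable_const 1), integral_const_mul,
    integral_indicator_const _ hAm, measureReal_def, hdist i]
  simp

lemma aux_Xb (hrange : ∀ i ω, X i ω = 1 ∨ X i ω = -1) (i : ℕ) (ω : Ω) : |X i ω| ≤ 1 := by
  rcases hrange i ω with h | h <;> simp [h]

lemma aux_pair (hmeas : ∀ i, Measurable (X i))
    (hrange : ∀ i ω, X i ω = 1 ∨ X i ω = -1)
    (hdist : ∀ i, μ {ω | X i ω = 1} = 1/2)
    (h4indep : ∀ s : Finset ℕ, s.card ≤ 4 →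
      iIndepFun (fun i : s => X i) μ)
    {i j : ℕ} (hij : i ≠ j) :
    ∫ ω, X i ω * X j ω ∂μ = 0 := by
  have hcard : ({i, j} : Finset ℕ).card ≤ 4 :=
    le_trans (Finset.card_insert_le _ _) (by simp)
  have h := h4indep {i, j} hcard
  have hi : i ∈ ({i, j} : Finset ℕ) := by simp
  have hj : j ∈ ({i, j} : Finset ℕ) := by simp
  have hIndep : IndepFun (X i) (X j) μ :=
    h.indepFun (i := ⟨i, hi⟩) (j := ⟨j, hj⟩) (fun hh => hij (congrArg Subtype.val hh))
  have := hIndep.integral_mul_eq_mul_integral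
    (aux_int_of_bound (hmeas i) 1 (aux_Xb hrange i)).aestronglyMeasurable
    (aux_int_of_bound (hmeas j) 1 (aux_Xb hrange j)).aestronglyMeasurable
  simp only [Pi.mul_apply] at this ⊢
  rw [this,
    aux_integral_X hmeas hrange hdist i, aux_integral_X hmeas hrange hdist j, mul_zero]

lemma aux_quad (hmeas : ∀ i, Measurable (X i))
    (hrange : ∀ i ω, X i ω = 1 ∨ X i ω = -1)
    (hdist : ∀ i, μ {ω | X i ω = 1} = 1/2)
    (h4indep : ∀ s : Finset ℕ, s.card ≤ 4 →
      iIndepFun (fun i : s => X i) μ)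
    {i j k l : ℕ} (hij : i ≠ j) (hik : i ≠ k) (hil : i ≠ l)
    (hjk : j ≠ k) (hjl : j ≠ l) (hkl : k ≠ l) :
    ∫ ω, (X i ω * X j ω) * (X k ω * X l ω) ∂μ = 0 := by
  have hcard : ({i, j, k, l} : Finset ℕ).card ≤ 4 := by
    have h1 := Finset.card_insert_le i ({j, k, l} : Finset ℕ)
    have h2 := Finset.card_insert_le j ({k, l} : Finset ℕ)
    have h3 := Finset.card_insert_le k ({l} : Finset ℕ)
    simp only [Finset.card_singleton] at *
    omega
  have h := h4indep {i, j, k, l} hcard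
  have hi : i ∈ ({i, j, k, l} : Finset ℕ) := by simp
  have hj : j ∈ ({i, j, k, l} : Finset ℕ) := by simp
  have hk : k ∈ ({i, j, k, l} : Finset ℕ) := by simp
  have hl : l ∈ ({i, j, k, l} : Finset ℕ) := by simp
  have hIndep : IndepFun (X i * X j) (X k * X l) μ :=
    h.indepFun_mul_mul (fun m => hmeas m) ⟨i, hi⟩ ⟨j, hj⟩ ⟨k, hk⟩ ⟨l, hl⟩
      (fun hh => hik (congrArg Subtype.val hh)) (fun hh => hil (congrArg Subtype.val hh))
      (fun hh => hjk (congrArg Subtype.val hh)) (fun hh => hjl (congrArg Subtype.val hh))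
  have hintij : Integrable (X i * X j) μ :=
    aux_int_of_bound ((hmeas i).mul (hmeas j)) 1 (fun ω => by
      rw [Pi.mul_apply, abs_mul]
      exact mul_le_one₀ (aux_Xb hrange i ω) (abs_nonneg _) (aux_Xb hrange j ω))
  have hintkl : Integrable (X k * X l) μ :=
    aux_int_of_bound ((hmeas k).mul (hmeas l)) 1 (fun ω => by
      rw [Pi.mul_apply, abs_mul]
      exact mul_le_one₀ (aux_Xb hrange k ω) (abs_nonneg _) (aux_Xb hrange l ω))
  have := hIndep.integral_mul_eq_mul_integral hintij.aestronglyMeasurable hintkl.aestronglyMeasurable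
  rw [show (∫ ω, (X i ω * X j ω) * (X k ω * X l ω) ∂μ)
      = integral μ ((X i * X j) * (X k * X l)) from rfl, this,
    show integral μ (X i * X j) = ∫ ω, X i ω * X j ω ∂μ from rfl,
    aux_pair hmeas hrange hdist h4indep hij, zero_mul]

lemma aux_moments (hmeas : ∀ i, Measurable (X i))
    (hrange : ∀ i ω, X i ω = 1 ∨ X i ω = -1)
    (hdist : ∀ i, μ {ω | X i ω = 1} = 1/2)
    (h4indep : ∀ s : Finset ℕ, s.card ≤ 4 →
      iIndepFun (fun i : s => X i) μ)
    (n : ℕ) :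
    (∫ ω, (∑ i ∈ Finset.range n, X i ω) ^ 2 ∂μ) = n ∧
    (∫ ω, ((∑ i ∈ Finset.range n, X i ω) ^ 2) ^ 2 ∂μ) = 3 * (n : ℝ) ^ 2 - 2 * n := by
  classical
  set D : Finset (ℕ × ℕ) := (Finset.range n).offDiag with hD
  set T : Ω → ℝ := fun ω => ∑ p ∈ D, X p.1 ω * X p.2 ω with hT
  have hXXb : ∀ (p : ℕ × ℕ) ω, |X p.1 ω * X p.2 ω| ≤ 1 := fun p ω => by
    rw [abs_mul]
    exact mul_le_one₀ (aux_Xb hrange _ ω) (abs_nonneg _) (aux_Xb hrange _ ω)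
  have hXXint : ∀ p : ℕ × ℕ, Integrable (fun ω => X p.1 ω * X p.2 ω) μ := fun p =>
    aux_int_of_bound ((hmeas _).mul (hmeas _)) 1 (hXXb p)
  have hpt : ∀ ω, (∑ i ∈ Finset.range n, X i ω) ^ 2 = (n : ℝ) + T ω := by
    intro ω
    have h1 : (∑ i ∈ Finset.range n, X i ω) ^ 2
        = ∑ p ∈ (Finset.range n) ×ˢ (Finset.range n), X p.1 ω * X p.2 ω := by
      rw [sq, Finset.sum_mul_sum, Finset.sum_product]
    rw [h1, ← Finset.diag_union_offDiag (Finset.range n),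
      Finset.sum_union (Finset.disjoint_diag_offDiag _), Finset.sum_diag]
    congr 1
    rw [Finset.sum_congr rfl (fun i _ => show X i ω * X i ω = 1 by
      rcases hrange i ω with h | h <;> rw [h] <;> norm_num)]
    simp
  have hTm : Measurable T := Finset.measurable_sum _ (fun p _ => (hmeas _).mul (hmeas _))
  have hTint : Integrable T μ := integrable_finset_sum _ (fun p _ => hXXint p)
  have hET : ∫ ω, T ω ∂μ = 0 := by
    rw [hT, integral_finset_sum _ (fun p _ => hXXint p)]
    exact Finset.sum_eq_zero (fun p hp =>
      aux_pair hmeas hrange hdist h4indep (Finset.mem_offDiag.mp hp).2.2)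
  have hm1 : (∫ ω, (∑ i ∈ Finset.range n, X i ω) ^ 2 ∂μ) = n := by
    rw [show (fun ω => (∑ i ∈ Finset.range n, X i ω) ^ 2) = fun ω => (n : ℝ) + T ω from
      funext hpt]
    rw [integral_add (integrable_const _) hTint, hET, integral_const]
    simp
  refine ⟨hm1, ?_⟩
  have hTb : ∀ ω, |T ω| ≤ (D.card : ℝ) := by
    intro ω
    calc |T ω| ≤ ∑ p ∈ D, |X p.1 ω * X p.2 ω| := Finset.abs_sum_le_sum_abs _ _
    _ ≤ ∑ p ∈ D, 1 := Finset.sum_le_sum (fun p _ => hXXb p ω)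
    _ = D.card := by simp
  have hT2int : Integrable (fun ω => T ω ^ 2) μ :=
    aux_int_of_bound (hTm.pow_const 2) ((D.card : ℝ) ^ 2) (fun ω => by
      rw [abs_pow]
      exact pow_le_pow_left₀ (abs_nonneg _) (hTb ω) 2)
  have hterm : ∀ p ∈ D, ∀ q ∈ D,
      (∫ ω, (X p.1 ω * X p.2 ω) * (X q.1 ω * X q.2 ω) ∂μ)
        = if q = p ∨ q = p.swap then (1 : ℝ) else 0 := by
    intro p hp q hq
    obtain ⟨hp1, hp2, hp12⟩ := Finset.mem_offDiag.mp hp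
    obtain ⟨hq1, hq2, hq12⟩ := Finset.mem_offDiag.mp hq
    by_cases hcase : q = p ∨ q = p.swap
    · rw [if_pos hcase]
      have hone : (fun ω => (X p.1 ω * X p.2 ω) * (X q.1 ω * X q.2 ω)) = fun _ => (1 : ℝ) := by
        funext ω
        rcases hcase with h | h <;> rw [h]
        · rcases hrange p.1 ω with h1 | h1 <;> rcases hrange p.2 ω with h2 | h2 <;>
            rw [h1, h2] <;> norm_num
        · simp only [Prod.fst_swap, Prod.snd_swap]
          rcases hrange p.1 ω with h1 | h1 <;> rcases hrange p.2 ω with h2 | h2 <;>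
            rw [h1, h2] <;> norm_num
      rw [hone]
      simp
    · rw [if_neg hcase]
      push_neg at hcase
      obtain ⟨hqp, hqs⟩ := hcase
      by_cases h1 : q.1 = p.1
      · have h2 : q.2 ≠ p.2 := fun h => hqp (Prod.ext h1 h)
        rw [show (fun ω => (X p.1 ω * X p.2 ω) * (X q.1 ω * X q.2 ω))
            = fun ω => X p.2 ω * X q.2 ω from funext fun ω => by
          rw [h1]; rcases hrange p.1 ω with h | h <;> rw [h] <;> ring]
        exact aux_pair hmeas hrange hdist h4indep (Ne.symm h2)
      · by_cases h2 : q.1 = p.2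
        · have h3 : q.2 ≠ p.1 := fun h => hqs (Prod.ext h2 h)
          rw [show (fun ω => (X p.1 ω * X p.2 ω) * (X q.1 ω * X q.2 ω))
              = fun ω => X p.1 ω * X q.2 ω from funext fun ω => by
            rw [h2]; rcases hrange p.2 ω with h | h <;> rw [h] <;> ring]
          exact aux_pair hmeas hrange hdist h4indep (Ne.symm h3)
        · by_cases h3 : q.2 = p.1
          · rw [show (fun ω => (X p.1 ω * X p.2 ω) * (X q.1 ω * X q.2 ω))
                = fun ω => X p.2 ω * X q.1 ω from funext fun ω => by
              rw [h3]; rcases hrange p.1 ω with h | h <;> rw [h] <;> ring]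
            exact aux_pair hmeas hrange hdist h4indep (Ne.symm h2)
          · by_cases h4 : q.2 = p.2
            · rw [show (fun ω => (X p.1 ω * X p.2 ω) * (X q.1 ω * X q.2 ω))
                  = fun ω => X p.1 ω * X q.1 ω from funext fun ω => by
                rw [h4]; rcases hrange p.2 ω with h | h <;> rw [h] <;> ring]
              exact aux_pair hmeas hrange hdist h4indep (Ne.symm h1)
            · exact aux_quad hmeas hrange hdist h4indep hp12 (Ne.symm h1) (Ne.symm h3)
                (Ne.symm h2) (Ne.symm h4) hq12
  have hET2 : ∫ ω, T ω ^ 2 ∂μ = 2 * ((n : ℝ) ^ 2 - n) := by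
    have hexp : (fun ω => T ω ^ 2)
        = fun ω => ∑ p ∈ D, ∑ q ∈ D, (X p.1 ω * X p.2 ω) * (X q.1 ω * X q.2 ω) := by
      funext ω
      rw [hT, sq, Finset.sum_mul_sum]
    have hint2 : ∀ (p q : ℕ × ℕ),
        Integrable (fun ω => (X p.1 ω * X p.2 ω) * (X q.1 ω * X q.2 ω)) μ := fun p q =>
      aux_int_of_bound (((hmeas _).mul (hmeas _)).mul ((hmeas _).mul (hmeas _))) 1
        (fun ω => by
          rw [abs_mul]
          exact mul_le_one₀ (hXXb p ω) (abs_nonneg _) (hXXb q ω))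
    rw [hexp, integral_finset_sum _ (fun p _ => integrable_finset_sum _ (fun q _ => hint2 p q))]
    have hinner : ∀ p ∈ D,
        (∫ ω, ∑ q ∈ D, (X p.1 ω * X p.2 ω) * (X q.1 ω * X q.2 ω) ∂μ) = 2 := by
      intro p hp
      obtain ⟨hp1, hp2, hp12⟩ := Finset.mem_offDiag.mp hp
      rw [integral_finset_sum _ (fun q _ => hint2 p q),
        Finset.sum_congr rfl (fun q hq => hterm p hp q hq), ← Finset.sum_filter]
      have hswap : p.swap ∈ D := Finset.mem_offDiag.mpr ⟨hp2, hp1, Ne.symm hp12⟩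
      have hfil : D.filter (fun q => q = p ∨ q = p.swap) = {p, p.swap} := by
        ext q
        simp only [Finset.mem_filter, Finset.mem_insert, Finset.mem_singleton]
        constructor
        · rintro ⟨_, h⟩; exact h
        · rintro (rfl | rfl)
          exacts [⟨hp, Or.inl rfl⟩, ⟨hswap, Or.inr rfl⟩]
      have hps : p ≠ p.swap := fun h => hp12 (congrArg Prod.fst h)
      rw [hfil, Finset.sum_const, Finset.card_insert_of_notMem (by simpa using hps)]
      simp
    rw [Finset.sum_congr rfl hinner, Finset.sum_const, hD, Finset.offDiag_card,
      Finset.card_range]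
    have hle : n ≤ n * n := by
      rcases Nat.eq_zero_or_pos n with h | h
      · simp [h]
      · exact Nat.le_mul_of_pos_left n h
    rw [nsmul_eq_mul, Nat.cast_sub hle]
    push_cast
    ring
  rw [show (fun ω => ((∑ i ∈ Finset.range n, X i ω) ^ 2) ^ 2)
      = fun ω => ((n : ℝ) ^ 2 + (2 * n) * T ω) + T ω ^ 2 from funext fun ω => by
    rw [hpt ω]; ring]
  have hI1 : Integrable (fun ω => (n : ℝ) ^ 2 + 2 * (n : ℝ) * T ω) μ :=
    (integrable_const _).add (hTint.const_mul _)
  rw [integral_add hI1 hT2int, integral_add (integrable_const _) (hTint.const_mul _),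
    integral_const_mul, hET, hET2, integral_const]
  simp
  ring
lemma aux_PZ {Z : Ω → ℝ} (hZm : Measurable Z) (C : ℝ) (hZb : ∀ ω, |Z ω| ≤ C)
    {M EZ EZ2 : ℝ} (hM : 0 < M) (hEZ : ∫ ω, Z ω ∂μ = EZ)
    (hEZ2 : ∫ ω, Z ω ^ 2 ∂μ = EZ2) (hMEZ : M < EZ) (hEZ2pos : 0 < EZ2) :
    (EZ - M) ^ 2 / EZ2 ≤ (μ {ω | M < Z ω}).toReal := by
  have hZint : Integrable Z μ := aux_int_of_bound hZm C hZb
  have hZ2int : Integrable (fun ω => Z ω ^ 2) μ :=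
    aux_int_of_bound (hZm.pow_const 2) (C ^ 2) (fun ω => by
      rw [abs_pow]
      exact pow_le_pow_left₀ (abs_nonneg _) (hZb ω) 2)
  set A : Set Ω := {ω | M < Z ω} with hA
  have hAm : MeasurableSet A := measurableSet_lt measurable_const hZm
  have h_compl : ∫ ω in Aᶜ, Z ω ∂μ ≤ M := by
    have h1 : ∫ ω in Aᶜ, Z ω ∂μ ≤ ∫ ω in Aᶜ, M ∂μ :=
      setIntegral_mono_on hZint.integrableOn (integrable_const M).integrableOn hAm.compl
        (fun ω hω => le_of_not_gt (by simpa [hA] using hω))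
    have h2 : (μ Aᶜ).toReal ≤ 1 := by
      simpa using ENNReal.toReal_mono ENNReal.one_ne_top (prob_le_one (μ := μ) (s := Aᶜ))
    calc ∫ ω in Aᶜ, Z ω ∂μ ≤ ∫ ω in Aᶜ, M ∂μ := h1
    _ = (μ Aᶜ).toReal * M := by rw [setIntegral_const, smul_eq_mul]; rfl
    _ ≤ 1 * M := by exact mul_le_mul_of_nonneg_right h2 hM.le
    _ = M := one_mul M
  have h_A : EZ - M ≤ ∫ ω in A, Z ω ∂μ := by
    have hsplit := integral_add_compl hAm hZint
    rw [hEZ] at hsplit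
    linarith
  have ha_pos : 0 < (μ A).toReal := by
    by_contra h
    push_neg at h
    have h0 : (μ A).toReal = 0 := le_antisymm h ENNReal.toReal_nonneg
    have hμ0 : μ A = 0 := by
      have hne : μ A ≠ ⊤ := measure_ne_top μ A
      exact ((ENNReal.toReal_eq_zero_iff _).mp h0).resolve_right hne
    have hz : ∫ ω in A, Z ω ∂μ = 0 := by
      rw [Measure.restrict_eq_zero.mpr hμ0, integral_zero_measure]
    rw [hz] at h_A
    linarith
  set a : ℝ := (μ A).toReal with ha
  set c : ℝ := (EZ - M) / a with hc
  have hb : 0 < EZ - M := by linarith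
  have hcpos : 0 < c := div_pos hb ha_pos
  have key : ∀ x : ℝ, x ≤ 1 / (2 * c) * x ^ 2 + c / 2 := by
    intro x
    have h2c : (0 : ℝ) < 2 * c := by linarith
    rw [← sub_nonneg]
    have heq : 1 / (2 * c) * x ^ 2 + c / 2 - x = (x - c) ^ 2 / (2 * c) := by
      field_simp
      ring
    rw [heq]
    positivity
  have step : ∫ ω in A, Z ω ∂μ ≤ 1 / (2 * c) * EZ2 + c / 2 * a := by
    have h1 : ∫ ω in A, Z ω ∂μ ≤ ∫ ω in A, (1 / (2 * c) * Z ω ^ 2 + c / 2) ∂μ :=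
      setIntegral_mono_on hZint.integrableOn
        ((hZ2int.const_mul _).add (integrable_const _)).integrableOn hAm
        (fun ω _ => key (Z ω))
    have h2 : ∫ ω in A, (1 / (2 * c) * Z ω ^ 2 + c / 2) ∂μ
        = 1 / (2 * c) * ∫ ω in A, Z ω ^ 2 ∂μ + c / 2 * a := by
      rw [integral_add ((hZ2int.const_mul _).integrableOn) (integrable_const _).integrableOn,
        integral_const_mul, setIntegral_const, smul_eq_mul, measureReal_def, ← ha]
      ring
    have h3 : ∫ ω in A, Z ω ^ 2 ∂μ ≤ EZ2 := by
      rw [← hEZ2]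
      exact setIntegral_le_integral hZ2int (Filter.Eventually.of_forall fun ω => sq_nonneg _)
    have h4 : 0 < 1 / (2 * c) := by positivity
    calc ∫ ω in A, Z ω ∂μ ≤ 1 / (2 * c) * ∫ ω in A, Z ω ^ 2 ∂μ + c / 2 * a := by
          rw [← h2]; exact h1
    _ ≤ 1 / (2 * c) * EZ2 + c / 2 * a := by nlinarith
  have hfin : EZ - M ≤ 1 / (2 * c) * EZ2 + c / 2 * a := h_A.trans step
  rw [div_le_iff₀ hEZ2pos]
  have hane : a ≠ 0 := ha_pos.ne'
  have hbne : EZ - M ≠ 0 := hb.ne'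
  have e1 : 1 / (2 * c) = a / (2 * (EZ - M)) := by rw [hc]; field_simp
  have e2 : c / 2 * a = (EZ - M) / 2 := by rw [hc]; field_simp
  rw [e1, e2, div_mul_eq_mul_div] at hfin
  have h5 : (EZ - M) / 2 ≤ a * EZ2 / (2 * (EZ - M)) := by linarith
  rw [div_le_div_iff₀ (by norm_num) (by linarith)] at h5
  nlinarith [h5]
end Aux

/-- For a sequence of `4`-wise independent Rademacher variables with partial sums
`Sₙ`, for every `M > 0` and `n > M` one has
`P(Sₙ² > M) ≥ (n - M)² / (3n² - 2n)`; in particular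
`liminfₙ P(Sₙ² > M) ≥ 1/3` for every fixed `M > 0`. -/
theorem fourwise_independent_fat_tail
    {Ω : Type*} [MeasurableSpace Ω] (μ : Measure Ω) [IsProbabilityMeasure μ]
    (X : ℕ → Ω → ℝ) (hmeas : ∀ i, Measurable (X i))
    (hrange : ∀ i ω, X i ω = 1 ∨ X i ω = -1)
    (hdist : ∀ i, μ {ω | X i ω = 1} = 1/2)
    (h4indep : ∀ s : Finset ℕ, s.card ≤ 4 →
      iIndepFun (fun i : s => X i) μ) :
    (∀ M : ℝ, 0 < M → ∀ n : ℕ, M < n →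
      ((n : ℝ) - M) ^ 2 / (3 * (n : ℝ) ^ 2 - 2 * n) ≤
        (μ {ω | M < (∑ i ∈ Finset.range n, X i ω) ^ 2}).toReal) ∧
    (∀ M : ℝ, 0 < M →
      (1 : ℝ) / 3 ≤
        liminf (fun n : ℕ =>
          (μ {ω | M < (∑ i ∈ Finset.range n, X i ω) ^ 2}).toReal) atTop) := by
  have hpart1 : ∀ M : ℝ, 0 < M → ∀ n : ℕ, M < n →
      ((n : ℝ) - M) ^ 2 / (3 * (n : ℝ) ^ 2 - 2 * n) ≤
        (μ {ω | M < (∑ i ∈ Finset.range n, X i ω) ^ 2}).toReal := by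
    intro M hM n hMn
    obtain ⟨hEZ, hEZ2⟩ := aux_moments hmeas hrange hdist h4indep n
    have hnpos : 0 < n := by
      have : (0 : ℝ) < n := lt_trans hM hMn
      exact_mod_cast this
    have hn1 : (1 : ℝ) ≤ n := by exact_mod_cast hnpos
    have hD : 0 < 3 * (n : ℝ) ^ 2 - 2 * (n : ℝ) := by nlinarith
    have hSm : Measurable (fun ω => ∑ i ∈ Finset.range n, X i ω) :=
      Finset.measurable_sum _ (fun i _ => hmeas i)
    have hSb : ∀ ω, |∑ i ∈ Finset.range n, X i ω| ≤ (n : ℝ) := fun ω => by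
      calc |∑ i ∈ Finset.range n, X i ω| ≤ ∑ i ∈ Finset.range n, |X i ω| :=
        Finset.abs_sum_le_sum_abs _ _
      _ ≤ ∑ i ∈ Finset.range n, 1 := Finset.sum_le_sum (fun i _ => aux_Xb hrange i ω)
      _ = n := by simp
    exact aux_PZ (hSm.pow_const 2) ((n : ℝ) ^ 2)
      (fun ω => by rw [abs_pow]; exact pow_le_pow_left₀ (abs_nonneg _) (hSb ω) 2)
      hM hEZ hEZ2 hMn hD
  refine ⟨hpart1, ?_⟩
  intro M hM
  have hM0 : Tendsto (fun n : ℕ => M / (n : ℝ)) atTop (nhds 0) :=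
    tendsto_const_div_atTop_nhds_zero_nat M
  have h2 : Tendsto (fun n : ℕ => 2 / (n : ℝ)) atTop (nhds 0) :=
    tendsto_const_div_atTop_nhds_zero_nat 2
  have h1 : Tendsto (fun n : ℕ => ((1 : ℝ) - M / (n : ℝ)) ^ 2 / (3 - 2 / (n : ℝ)))
      atTop (nhds (1 / 3)) := by
    have := (((tendsto_const_nhds (x := (1 : ℝ))).sub hM0).pow 2).div
      (((tendsto_const_nhds (x := (3 : ℝ))).sub h2)) (by norm_num)
    norm_num at this
    exact this
  have htend : Tendsto (fun n : ℕ => ((n : ℝ) - M) ^ 2 / (3 * (n : ℝ) ^ 2 - 2 * n))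
      atTop (nhds (1 / 3)) := by
    apply Tendsto.congr' _ h1
    filter_upwards [eventually_ge_atTop 1] with n hn
    have hn0 : (n : ℝ) ≠ 0 := Nat.cast_ne_zero.mpr (by omega)
    have hge : (1 : ℝ) ≤ (n : ℝ) := by exact_mod_cast hn
    have hd1 : (0 : ℝ) < 3 * (n : ℝ) ^ 2 - 2 * n := by nlinarith
    have hd2 : (0 : ℝ) < 3 - 2 / (n : ℝ) := by
      have h22 : 2 / (n : ℝ) ≤ 2 := by
        rw [div_le_iff₀ (by linarith)]
        nlinarith
      linarith
    rw [div_eq_div_iff hd2.ne' hd1.ne']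
    field_simp
  have hlb : ∀ᶠ n : ℕ in atTop, ((n : ℝ) - M) ^ 2 / (3 * (n : ℝ) ^ 2 - 2 * n) ≤
      (μ {ω | M < (∑ i ∈ Finset.range n, X i ω) ^ 2}).toReal := by
    filter_upwards [eventually_gt_atTop ⌈M⌉₊] with n hn
    exact hpart1 M hM n (lt_of_le_of_lt (Nat.le_ceil M) (by exact_mod_cast hn))
  calc (1 : ℝ) / 3
      = liminf (fun n : ℕ => ((n : ℝ) - M) ^ 2 / (3 * (n : ℝ) ^ 2 - 2 * n)) atTop :=
        (htend.liminf_eq).symm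
  _ ≤ _ := by
      have hv1 : ∀ n : ℕ, (μ {ω | M < (∑ i ∈ Finset.range n, X i ω) ^ 2}).toReal ≤ 1 :=
        fun n => by
          simpa using ENNReal.toReal_mono ENNReal.one_ne_top (prob_le_one (μ := μ))
      exact liminf_le_liminf hlb htend.isBoundedUnder_ge
        ((isBoundedUnder_of ⟨1, fun n => hv1 n⟩).isCoboundedUnder_ge)
end

section
/- There exists a sequence of random variables X₁, X₂, … taking values ±1 with probability 1/2 each, pairwise independent, such that the partial sums S_n = ∑_{i=1}^n X_i are almost surely bounded: P(sup_n |S_n| < ∞) = 1. -/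
open MeasureTheory ProbabilityTheory

namespace PIBW

instance : TopologicalSpace (ZMod 2) := ⊥
instance : DiscreteTopology (ZMod 2) := ⟨rfl⟩

abbrev Om : Type := ℕ → ZMod 2

noncomputable def mu : Measure Om := Measure.addHaarMeasure ⊤

instance : IsProbabilityMeasure mu := by
  constructor
  have : ((⊤ : TopologicalSpace.PositiveCompacts Om) : Set Om) = Set.univ := rfl
  rw [mu, ← this]
  exact Measure.addHaarMeasure_self

instance : mu.IsAddLeftInvariant := by unfold mu; infer_instance

/-- The set of positions where `n` has a one bit. -/
def bits (n : ℕ) : Finset ℕ := (Finset.range (n + 1)).filter (fun k => n.testBit k)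

lemma mem_bits {k n : ℕ} : k ∈ bits n ↔ n.testBit k = true := by
  constructor
  · intro h; exact (Finset.mem_filter.1 h).2
  · intro h
    refine Finset.mem_filter.2 ⟨Finset.mem_range.2 ?_, h⟩
    have h2 : 2 ^ k ≤ n := by
      by_contra hc
      rw [Nat.testBit_eq_false_of_lt (Nat.lt_of_not_le hc)] at h
      exact Bool.false_ne_true h
    calc k < 2 ^ k := Nat.lt_two_pow_self
    _ ≤ n := h2
    _ < n + 1 := Nat.lt_succ_self n

/-- The linear functional `ω ↦ ∑_{k ∈ bits n} ω k`. -/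
def fh (n : ℕ) : Om →+ ZMod 2 where
  toFun ω := ∑ k ∈ bits n, ω k
  map_zero' := by simp
  map_add' ω δ := by simp [Finset.sum_add_distrib]

lemma fh_continuous (n : ℕ) : Continuous (fh n) := by
  show Continuous fun ω : Om => ∑ k ∈ bits n, ω k
  exact continuous_finset_sum _ (fun k _ => continuous_apply k)

lemma fh_measurable (n : ℕ) : Measurable (fh n) := (fh_continuous n).measurable

/-- the sign map -/
noncomputable def e (x : ZMod 2) : ℝ := if x = 0 then 1 else -1

lemma e_measurable : Measurable e := measurable_of_countable e

lemma zmod2_cases : ∀ x : ZMod 2, x = 0 ∨ x = 1 := by decide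

lemma e_add (x y : ZMod 2) : e (x + y) = e x * e y := by
  rcases zmod2_cases x with hx | hx <;> rcases zmod2_cases y with hy | hy <;>
    subst hx <;> subst hy <;>
    simp only [e, add_zero, zero_add, show (1 + 1 : ZMod 2) = 0 by decide] <;> norm_num

/-- Walsh function -/
noncomputable def w (n : ℕ) (ω : Om) : ℝ := e (fh n ω)

lemma w_measurable (n : ℕ) : Measurable (w n) := e_measurable.comp (fh_measurable n)

lemma w_pm (n : ℕ) (ω : Om) : w n ω = 1 ∨ w n ω = -1 := by
  unfold w e; split <;> simp

lemma abs_w (n : ℕ) (ω : Om) : |w n ω| = 1 := by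
  rcases w_pm n ω with h | h <;> rw [h] <;> norm_num

/-- Key uniformity lemma: a surjective measurable hom to a finite group pushes
Haar measure to the uniform measure. -/
lemma uniform {V : Type*} [AddCommGroup V] [Fintype V] [MeasurableSpace V]
    [MeasurableSingletonClass V] (φ : Om →+ V) (hm : Measurable φ)
    (hs : Function.Surjective φ) (v : V) :
    mu (φ ⁻¹' {v}) = (Fintype.card V : ENNReal)⁻¹ := by
  classical
  have key : ∀ v₁ v₂ : V, mu (φ ⁻¹' {v₁}) = mu (φ ⁻¹' {v₂}) := by
    intro v₁ v₂
    obtain ⟨δ, hδ⟩ := hs (v₂ - v₁)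
    have hset : (fun ω => δ + ω) ⁻¹' (φ ⁻¹' {v₂}) = φ ⁻¹' {v₁} := by
      ext ω
      simp only [Set.mem_preimage, Set.mem_singleton_iff, map_add, hδ]
      constructor
      · intro h
        have := congrArg (fun z => z - (v₂ - v₁)) h
        simpa using this
      · intro h; rw [h]; abel
    rw [← hset, measure_preimage_add]
  have hsum : ∑ v₂ : V, mu (φ ⁻¹' {v₂}) = 1 := by
    rw [sum_measure_preimage_singleton _ (fun v₂ _ => hm (measurableSet_singleton v₂))]
    simpa using measure_univ (μ := mu)
  have hconst : ∑ v₂ : V, mu (φ ⁻¹' {v₂}) = (Fintype.card V : ENNReal) * mu (φ ⁻¹' {v}) := by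
    rw [Finset.sum_congr rfl (fun v₂ _ => key v₂ v), Finset.sum_const, Finset.card_univ,
      nsmul_eq_mul]
  have hcard : (Fintype.card V : ENNReal) ≠ 0 := by
    simp [Fintype.card_ne_zero]
  have htop : (Fintype.card V : ENNReal) ≠ ⊤ := ENNReal.natCast_ne_top _
  have h1 : (Fintype.card V : ENNReal) * mu (φ ⁻¹' {v}) = 1 := by rw [← hconst, hsum]
  have h2 := congrArg (fun z => (Fintype.card V : ENNReal)⁻¹ * z) h1
  simpa [← mul_assoc, ENNReal.inv_mul_cancel hcard htop] using h2

/-! ### Surjectivity lemmas -/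

lemma fh_single (n k : ℕ) (v : ZMod 2) :
    fh n (Pi.single k v) = if n.testBit k then v else 0 := by
  have h1 : fh n (Pi.single k v) = ∑ j ∈ bits n, (Pi.single k v : Om) j := rfl
  have h2 : ∀ j : ℕ, (Pi.single k v : Om) j = if j = k then v else 0 := fun j =>
    Pi.single_apply k v j
  rw [h1]
  simp_rw [h2]
  rw [Finset.sum_ite_eq' (bits n) k (fun _ => v)]
  by_cases h : n.testBit k
  · rw [if_pos (mem_bits.2 h), if_pos h]
  · rw [if_neg (fun hc => h (mem_bits.1 hc)), if_neg h]

lemma exists_testBit {n : ℕ} (hn : n ≠ 0) : ∃ k, n.testBit k = true := by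
  by_contra hc
  push_neg at hc
  exact hn (Nat.zero_of_testBit_eq_false (fun i => by
    cases h : n.testBit i
    · rfl
    · exact absurd h (hc i)))

lemma fh_surjective {n : ℕ} (hn : n ≠ 0) : Function.Surjective (fh n) := by
  obtain ⟨k, hk⟩ := exists_testBit hn
  intro v
  exact ⟨Pi.single k v, by rw [fh_single, if_pos hk]⟩

lemma pair_surj {a b : ℕ} (ha : a ≠ 0) (hb : b ≠ 0) (hab : a ≠ b) :
    Function.Surjective ((fh a).prod (fh b)) := by
  have hdiff : ∃ k, a.testBit k ≠ b.testBit k := by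
    by_contra hc
    push_neg at hc
    exact hab (Nat.eq_of_testBit_eq hc)
  obtain ⟨k₀, hk₀⟩ := hdiff
  obtain ⟨ka, hka⟩ := exists_testBit ha
  obtain ⟨kb, hkb⟩ := exists_testBit hb
  have h10 : ∃ δ, fh a δ = 1 ∧ fh b δ = 0 := by
    cases h1 : a.testBit k₀ <;> cases h2 : b.testBit k₀
    · rw [h1, h2] at hk₀; exact absurd rfl hk₀
    · -- a bit false, b bit true at k₀ : use ka, possibly corrected
      cases h3 : b.testBit ka
      · exact ⟨Pi.single ka 1, by rw [fh_single, if_pos hka],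
          by rw [fh_single, if_neg (by simp [h3])]⟩
      · refine ⟨Pi.single ka 1 + Pi.single k₀ 1, ?_, ?_⟩
        · rw [map_add, fh_single, fh_single, if_pos hka, if_neg (by simp [h1])]; ring
        · rw [map_add, fh_single, fh_single, if_pos h3, if_pos h2]; decide
    · exact ⟨Pi.single k₀ 1, by rw [fh_single, if_pos h1],
        by rw [fh_single, if_neg (by simp [h2])]⟩
    · rw [h1, h2] at hk₀; exact absurd rfl hk₀
  have h01 : ∃ δ, fh a δ = 0 ∧ fh b δ = 1 := by
    cases h1 : a.testBit k₀ <;> cases h2 : b.testBit k₀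
    · rw [h1, h2] at hk₀; exact absurd rfl hk₀
    · exact ⟨Pi.single k₀ 1, by rw [fh_single, if_neg (by simp [h1])],
        by rw [fh_single, if_pos h2]⟩
    · cases h3 : a.testBit kb
      · exact ⟨Pi.single kb 1, by rw [fh_single, if_neg (by simp [h3])],
          by rw [fh_single, if_pos hkb]⟩
      · refine ⟨Pi.single kb 1 + Pi.single k₀ 1, ?_, ?_⟩
        · rw [map_add, fh_single, fh_single, if_pos h3, if_pos h1]; decide
        · rw [map_add, fh_single, fh_single, if_pos hkb, if_neg (by simp [h2])]; ring
    · rw [h1, h2] at hk₀; exact absurd rfl hk₀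
  obtain ⟨δ₁, hδ₁a, hδ₁b⟩ := h10
  obtain ⟨δ₂, hδ₂a, hδ₂b⟩ := h01
  rintro ⟨u, v⟩
  rcases zmod2_cases u with hu | hu <;> rcases zmod2_cases v with hv | hv <;> subst hu <;> subst hv
  · exact ⟨0, by simp⟩
  · exact ⟨δ₂, by simp [AddMonoidHom.prod_apply, hδ₂a, hδ₂b]⟩
  · exact ⟨δ₁, by simp [AddMonoidHom.prod_apply, hδ₁a, hδ₁b]⟩
  · exact ⟨δ₁ + δ₂, by simp [AddMonoidHom.prod_apply, hδ₁a, hδ₁b, hδ₂a, hδ₂b]⟩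

/-! ### Measure computations -/

lemma mu_fh_fiber {n : ℕ} (hn : n ≠ 0) (v : ZMod 2) :
    mu (fh n ⁻¹' {v}) = (2 : ENNReal)⁻¹ := by
  rw [uniform (fh n) (fh_measurable n) (fh_surjective hn) v]
  norm_num [ZMod.card]

lemma mu_pair_fiber {a b : ℕ} (ha : a ≠ 0) (hb : b ≠ 0) (hab : a ≠ b) (v : ZMod 2 × ZMod 2) :
    mu (((fh a).prod (fh b)) ⁻¹' {v}) = (4 : ENNReal)⁻¹ := by
  have hm : Measurable ((fh a).prod (fh b)) :=
    (fh_measurable a).prodMk (fh_measurable b)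
  rw [uniform _ hm (pair_surj ha hb hab) v]
  norm_num [Fintype.card_prod, ZMod.card]

lemma mu_w_eq_one {n : ℕ} (hn : n ≠ 0) : mu {ω | w n ω = 1} = 1/2 := by
  have : {ω : Om | w n ω = 1} = fh n ⁻¹' {0} := by
    ext ω
    simp only [Set.mem_setOf_eq, Set.mem_preimage, Set.mem_singleton_iff, w, e]
    split <;> simp_all <;> norm_num
  rw [this, mu_fh_fiber hn, one_div]

lemma indep_fh {a b : ℕ} (ha : a ≠ 0) (hb : b ≠ 0) (hab : a ≠ b) :
    IndepFun (fh a) (fh b) mu := by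
  rw [indepFun_iff_map_prod_eq_prod_map_map (fh_measurable a).aemeasurable
    (fh_measurable b).aemeasurable]
  refine Measure.ext_iff_singleton.2 (fun p => ?_)
  obtain ⟨x, y⟩ := p
  have hm : Measurable (fun ω => ((fh a) ω, (fh b) ω)) :=
    (fh_measurable a).prodMk (fh_measurable b)
  have hL : mu.map (fun ω => (fh a ω, fh b ω)) {(x, y)} = (4 : ENNReal)⁻¹ := by
    rw [Measure.map_apply hm (measurableSet_singleton _)]
    exact mu_pair_fiber ha hb hab (x, y)
  rw [hL, show ({(x, y)} : Set (ZMod 2 × ZMod 2)) = {x} ×ˢ {y} by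
    rw [Set.singleton_prod_singleton], Measure.prod_prod,
    Measure.map_apply (fh_measurable a) (measurableSet_singleton _),
    Measure.map_apply (fh_measurable b) (measurableSet_singleton _),
    mu_fh_fiber ha, mu_fh_fiber hb]
  rw [← ENNReal.mul_inv (by norm_num) (by norm_num)]
  norm_num

lemma indep_w {a b : ℕ} (ha : a ≠ 0) (hb : b ≠ 0) (hab : a ≠ b) :
    IndepFun (w a) (w b) mu :=
  (indep_fh ha hb hab).comp e_measurable e_measurable

/-! ### Walsh recursion and boundedness -/

lemma bits_two_pow (m : ℕ) : bits (2 ^ m) = {m} := by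
  ext k
  rw [mem_bits, Finset.mem_singleton, Nat.testBit_two_pow]
  simp [eq_comm]

lemma fh_two_pow (m : ℕ) (ω : Om) : fh (2 ^ m) ω = ω m := by
  show (∑ k ∈ bits (2 ^ m), ω k) = ω m
  rw [bits_two_pow, Finset.sum_singleton]

lemma bits_two_pow_add {m n : ℕ} (h : n < 2 ^ m) :
    bits (2 ^ m + n) = insert m (bits n) := by
  ext k
  rw [mem_bits, Finset.mem_insert, mem_bits]
  rcases lt_trichotomy k m with hk | hk | hk
  · rw [Nat.testBit_two_pow_add_gt hk]
    simp [Nat.ne_of_lt hk]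
  · subst hk
    rw [Nat.testBit_two_pow_add_eq, Nat.testBit_eq_false_of_lt h]
    simp
  · have h1 : 2 ^ m + n < 2 ^ k := by
      calc 2 ^ m + n < 2 ^ m + 2 ^ m := by omega
      _ = 2 ^ (m + 1) := by ring
      _ ≤ 2 ^ k := Nat.pow_le_pow_right (by norm_num) hk
    rw [Nat.testBit_eq_false_of_lt h1,
      Nat.testBit_eq_false_of_lt (lt_trans h (Nat.pow_lt_pow_right (by norm_num) hk))]
    simp [Nat.ne_of_gt hk]

lemma m_not_mem_bits {m n : ℕ} (h : n < 2 ^ m) : m ∉ bits n := by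
  rw [mem_bits, Nat.testBit_eq_false_of_lt h]
  simp

lemma w_two_pow_add {m n : ℕ} (h : n < 2 ^ m) (ω : Om) :
    w (2 ^ m + n) ω = w (2 ^ m) ω * w n ω := by
  have hf : fh (2 ^ m + n) ω = fh (2 ^ m) ω + fh n ω := by
    show (∑ k ∈ bits (2 ^ m + n), ω k) = fh (2 ^ m) ω + (∑ k ∈ bits n, ω k)
    rw [bits_two_pow_add h, Finset.sum_insert (m_not_mem_bits h), fh_two_pow]
  rw [w, hf, e_add, w, w]

noncomputable def D (N : ℕ) (ω : Om) : ℝ := ∑ n ∈ Finset.range N, w n ω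

lemma w_zero (ω : Om) : w 0 ω = 1 := by
  have : fh 0 ω = 0 := by
    show (∑ k ∈ bits 0, ω k) = 0
    have : bits 0 = ∅ := by
      ext k; rw [mem_bits]; simp
    rw [this, Finset.sum_empty]
  rw [w, this, e, if_pos rfl]

lemma D_rec {m r : ℕ} (h : r ≤ 2 ^ m) (ω : Om) :
    D (2 ^ m + r) ω = D (2 ^ m) ω + w (2 ^ m) ω * D r ω := by
  induction r with
  | zero => simp [D]
  | succ r ih =>
    have hr : r < 2 ^ m := h
    have hsplit : D (2 ^ m + r + 1) ω = D (2 ^ m + r) ω + w (2 ^ m + r) ω := by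
      rw [D, Finset.sum_range_succ]; rfl
    have hsplit2 : D (r + 1) ω = D r ω + w r ω := by
      rw [D, Finset.sum_range_succ]; rfl
    rw [show 2 ^ m + (r + 1) = (2 ^ m + r) + 1 by ring, hsplit, ih hr.le,
      w_two_pow_add hr, hsplit2]
    ring

lemma D_two_pow (m : ℕ) (ω : Om) :
    D (2 ^ m) ω = ∏ k ∈ Finset.range m, (1 + w (2 ^ k) ω) := by
  induction m with
  | zero => simp [D, w_zero]
  | succ m ih =>
    rw [show (2 : ℕ) ^ (m + 1) = 2 ^ m + 2 ^ m by ring, D_rec le_rfl,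
      Finset.prod_range_succ, ← ih]
    ring

lemma D_two_pow_zero {K m : ℕ} {ω : Om} (hK : ω K = 1) (hm : K < m) :
    D (2 ^ m) ω = 0 := by
  rw [D_two_pow]
  refine Finset.prod_eq_zero (Finset.mem_range.2 hm) ?_
  rw [w, fh_two_pow, hK]
  norm_num [e]

lemma abs_D_le (N : ℕ) (ω : Om) : |D N ω| ≤ N := by
  calc |D N ω| ≤ ∑ n ∈ Finset.range N, |w n ω| := Finset.abs_sum_le_sum_abs _ _
  _ = ∑ n ∈ Finset.range N, 1 := by simp [abs_w]
  _ = N := by simp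

lemma D_bound {K : ℕ} {ω : Om} (hK : ω K = 1) (N : ℕ) :
    |D N ω| ≤ 2 ^ (K + 1) := by
  induction N using Nat.strong_induction_on with
  | _ N ih =>
    by_cases hN : N ≤ 2 ^ (K + 1)
    · calc |D N ω| ≤ N := abs_D_le N ω
      _ ≤ (2 : ℝ) ^ (K + 1) := by
        rw [show ((2 : ℝ) ^ (K + 1)) = ((2 ^ (K + 1) : ℕ) : ℝ) by push_cast; ring]
        exact_mod_cast hN
    · push_neg at hN
      have hN0 : N ≠ 0 := (lt_of_le_of_lt (Nat.zero_le _) hN).ne'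
      set m := Nat.log 2 N with hm
      have h1 : 2 ^ m ≤ N := Nat.pow_log_le_self 2 hN0
      have h2 : N < 2 ^ (m + 1) := Nat.lt_pow_succ_log_self (by norm_num) N
      have hKm : K < m := by
        have : 2 ^ (K + 1) < 2 ^ (m + 1) := lt_of_lt_of_le hN h2.le
        have := (Nat.pow_lt_pow_iff_right (a := 2) (by norm_num)).1 this
        omega
      set r := N - 2 ^ m with hr
      have hrN : N = 2 ^ m + r := by omega
      have hr2 : r < 2 ^ m := by
        have : 2 ^ (m + 1) = 2 ^ m + 2 ^ m := by ring
        omega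
      have hrlt : r < N := by
        have : 0 < 2 ^ m := Nat.pow_pos (by norm_num)
        omega
      rw [hrN, D_rec hr2.le, D_two_pow_zero hK hKm, zero_add, abs_mul, abs_w, one_mul]
      exact ih r hrlt

/-! ### The almost sure event -/

def A : Set Om := {ω | ∃ k, ω k = 1}

lemma A_measurable : MeasurableSet A := by
  have : A = ⋃ k : ℕ, (fun ω : Om => ω k) ⁻¹' {1} := by
    ext ω; simp [A]
  rw [this]
  exact MeasurableSet.iUnion (fun k =>
    (measurable_pi_apply k) (measurableSet_singleton 1))

/-- projection onto the first `m` coordinates -/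
def proj (m : ℕ) : Om →+ (Fin m → ZMod 2) where
  toFun ω := fun k => ω k
  map_zero' := rfl
  map_add' _ _ := rfl

lemma proj_measurable (m : ℕ) : Measurable (proj m) :=
  measurable_pi_lambda _ (fun k => measurable_pi_apply (k : ℕ))

lemma proj_surjective (m : ℕ) : Function.Surjective (proj m) := by
  intro g
  refine ⟨fun j => if h : j < m then g ⟨j, h⟩ else 0, ?_⟩
  funext k
  show (if h : (k : ℕ) < m then g ⟨k, h⟩ else 0) = g k
  rw [dif_pos k.isLt]

lemma mu_compl_A : mu Aᶜ = 0 := by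
  have key : ∀ m : ℕ, mu Aᶜ ≤ (2 : ENNReal)⁻¹ ^ m := by
    intro m
    have hsub : Aᶜ ⊆ (proj m) ⁻¹' {0} := by
      intro ω hω
      simp only [A, Set.mem_compl_iff, Set.mem_setOf_eq, not_exists] at hω
      have : ∀ k, ω k = 0 := fun k => (zmod2_cases (ω k)).resolve_right (hω k)
      show proj m ω = 0
      funext k
      exact this k
    calc mu Aᶜ ≤ mu ((proj m) ⁻¹' {0}) := measure_mono hsub
    _ = (Fintype.card (Fin m → ZMod 2) : ENNReal)⁻¹ :=
        uniform (proj m) (proj_measurable m) (proj_surjective m) 0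
    _ = (2 : ENNReal)⁻¹ ^ m := by
        rw [Fintype.card_fun, ZMod.card, Fintype.card_fin]
        rw [← ENNReal.inv_pow]
        push_cast
        ring_nf
  by_contra hc
  obtain ⟨n, hn⟩ := ENNReal.exists_inv_two_pow_lt hc
  exact absurd (key n) (not_le.2 hn)

lemma mu_A : mu A = 1 := (prob_compl_eq_zero_iff A_measurable).1 mu_compl_A

lemma partial_sum (n : ℕ) (ω : Om) :
    ∑ i ∈ Finset.range n, w (i + 1) ω = D (n + 1) ω - 1 := by
  have h := Finset.sum_range_succ' (fun j => w j ω) n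
  rw [D, h, w_zero]; ring

end PIBW


/-- Theorem 1: there exists a sequence of pairwise independent Rademacher
variables whose partial sums are almost surely bounded. -/
theorem exists_pairwise_independent_bounded_walk :
    ∃ (Ω : Type) (_ : MeasurableSpace Ω) (μ : Measure Ω) (_ : IsProbabilityMeasure μ)
      (X : ℕ → Ω → ℝ),
      (∀ i, Measurable (X i)) ∧
      (∀ i ω, X i ω = 1 ∨ X i ω = -1) ∧
      (∀ i, μ {ω | X i ω = 1} = 1/2) ∧
      (∀ i j, i ≠ j → IndepFun (X i) (X j) μ) ∧
      μ {ω | ∃ C : ℝ, ∀ n : ℕ, |∑ i ∈ Finset.range n, X i ω| ≤ C} = 1 := by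
  classical
  refine ⟨PIBW.Om, inferInstance, PIBW.mu, inferInstance,
    fun i ω => PIBW.w (i + 1) ω, ?_, ?_, ?_, ?_, ?_⟩
  · exact fun i => PIBW.w_measurable (i + 1)
  · exact fun i ω => PIBW.w_pm (i + 1) ω
  · exact fun i => PIBW.mu_w_eq_one (Nat.succ_ne_zero i)
  · exact fun i j hij =>
      PIBW.indep_w (Nat.succ_ne_zero i) (Nat.succ_ne_zero j) (by omega)
  · refine le_antisymm prob_le_one ?_
    rw [← PIBW.mu_A]
    refine measure_mono ?_
    intro ω hω
    obtain ⟨K, hK⟩ := hω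
    refine ⟨2 ^ (K + 1) + 1, fun n => ?_⟩
    rw [PIBW.partial_sum]
    calc |PIBW.D (n + 1) ω - 1| ≤ |PIBW.D (n + 1) ω| + |(1 : ℝ)| := by
          rw [sub_eq_add_neg]
          exact (abs_add_le _ _).trans (by rw [abs_neg])
    _ ≤ 2 ^ (K + 1) + 1 := by
          have := PIBW.D_bound hK (n + 1)
          rw [abs_one]
          linarith
end

section
/- For the Gray walk S'_n = ∑_{i=0}^n X_i (with X_0 ≡ 1 and X_i = ∏_{j∈A_i} ξ_j, where A_i enumerates finite subsets of ℕ in infinite Gray code order and ξ_j are i.i.d. Rademacher), one has almost surely sup_n S'_n = −inf_n S'_n = 2^{J−1}, where J = min{j ≥ 1 : ξ_j = −1}. -/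
open MeasureTheory ProbabilityTheory

/-- The `i`-th word of the infinite (reflected binary) Gray code, viewed as a
finite subset of `{1, 2, 3, …}`: `j ∈ graySet i` iff the `(j-1)`-th bit of
`i XOR (i/2)` is `1` (so positions are indexed starting from `1`, as in the
paper). -/
def graySet (i : ℕ) : Finset ℕ :=
  (Finset.range (i + 2)).filter fun j => 1 ≤ j ∧ (i ^^^ (i >>> 1)).testBit (j - 1)


namespace GrayAux

lemma testBit_addpow {t m k : ℕ} (h : m < 2 ^ t) :
    (2 ^ t + m).testBit k = if k < t then m.testBit k else decide (k = t) := by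
  rcases lt_trichotomy k t with h1 | rfl | h1
  · simp [Nat.testBit_two_pow_add_gt h1, h1]
  · have hm : m.testBit k = false := Nat.testBit_lt_two_pow h
    simp [Nat.testBit_two_pow_add_eq, hm]
  · have hlt : 2 ^ t + m < 2 ^ k := by
      calc 2 ^ t + m < 2 ^ t + 2 ^ t := by omega
      _ = 2 ^ (t + 1) := by ring
      _ ≤ 2 ^ k := Nat.pow_le_pow_right (by norm_num) h1
    simp [Nat.testBit_lt_two_pow hlt, Nat.lt_asymm h1, (Nat.ne_of_gt h1)]

lemma testBit_subpow {t m k : ℕ} (h : m < 2 ^ t) :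
    (2 ^ t - 1 - m).testBit k = (decide (k < t) && !(m.testBit k)) := by
  have e : 2 ^ t - 1 - m = 2 ^ t - (m + 1) := by omega
  rw [e, Nat.testBit_two_pow_sub_succ h]

lemma g_lt {t i : ℕ} (h : i < 2 ^ t) : i ^^^ (i >>> 1) < 2 ^ t := by
  have h2 : i >>> 1 < 2 ^ t := by
    rw [Nat.shiftRight_eq_div_pow]
    exact lt_of_le_of_lt (Nat.div_le_self _ _) h
  exact Nat.xor_lt_two_pow h h2

lemma g_reflect {t m : ℕ} (h : m < 2 ^ t) :
    (2 ^ t + m) ^^^ ((2 ^ t + m) >>> 1) =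
      2 ^ t ^^^ ((2 ^ t - 1 - m) ^^^ ((2 ^ t - 1 - m) >>> 1)) := by
  apply Nat.eq_of_testBit_eq
  intro k
  simp only [Nat.testBit_xor, Nat.testBit_shiftRight, Nat.testBit_two_pow,
    testBit_addpow h, testBit_subpow h]
  rcases lt_trichotomy (k + 1) t with h1 | h1 | h1
  · have hk : k < t := by omega
    have hk2 : ¬ (k = t) := by omega
    have hk3 : ¬ (t = k) := by omega
    have hk4 : 1 + k < t := by omega
    simp [hk, hk2, hk3, hk4]
  · have hk : k < t := by omega
    have hk3 : ¬ (t = k) := by omega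
    have hk4 : ¬ (1 + k < t) := by omega
    have hk5 : 1 + k = t := by omega
    simp [hk, hk3, hk4, hk5]
  · have hk4 : ¬ (1 + k < t) := by omega
    have hk5 : ¬ (1 + k = t) := by omega
    have hk : ¬ (k < t) := by omega
    rcases eq_or_ne k t with rfl | hne
    · simp [hk4, hk5, hk]
    · simp [hk4, hk5, hk, hne, Ne.symm hne]

end GrayAux

namespace GrayAux2
open GrayAux

lemma graySet_eq (i : ℕ) : graySet i =
    Finset.image (· + 1) ((Finset.range (i + 1)).filter
      fun k => (i ^^^ (i >>> 1)).testBit k) := by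
  ext j
  simp only [graySet, Finset.mem_filter, Finset.mem_range, Finset.mem_image]
  constructor
  · rintro ⟨hj, hj1, hb⟩
    exact ⟨j - 1, ⟨by omega, hb⟩, by omega⟩
  · rintro ⟨k, ⟨hk, hb⟩, rfl⟩
    refine ⟨by omega, by omega, by simpa using hb⟩

noncomputable def xp (ξ : ℕ → ℝ) (i : ℕ) : ℝ := ∏ j ∈ graySet i, ξ j

noncomputable def T (ξ : ℕ → ℝ) (n : ℕ) : ℝ := ∑ i ∈ Finset.range n, xp ξ i

lemma xp_eq (ξ : ℕ → ℝ) (i N : ℕ) (hN : i + 1 ≤ N) :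
    xp ξ i = ∏ k ∈ Finset.range N,
      (if (i ^^^ (i >>> 1)).testBit k then ξ (k + 1) else 1) := by
  rw [xp, graySet_eq, Finset.prod_image (by intro x _ y _ h; simp only at h; omega), Finset.prod_filter]
  apply Finset.prod_subset (Finset.range_subset_range.2 hN)
  · intro k hk hk2
    have hik : i + 1 ≤ k := by
      simp only [Finset.mem_range] at hk hk2; omega
    have : i ^^^ (i >>> 1) < 2 ^ k :=
      g_lt (lt_of_lt_of_le (Nat.lt_two_pow_self (n := i)) (Nat.pow_le_pow_right (by norm_num) (by omega)))
    simp [Nat.testBit_lt_two_pow this]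

lemma xp_reflect (ξ : ℕ → ℝ) {t m : ℕ} (h : m < 2 ^ t) :
    xp ξ (2 ^ t + m) = ξ (t + 1) * xp ξ (2 ^ t - 1 - m) := by
  have hb : 2 ^ t - 1 - m < 2 ^ t := by have := Nat.two_pow_pos t; omega
  set N := 2 ^ t + m + 1 with hN
  rw [xp_eq ξ _ N (by omega), xp_eq ξ (2 ^ t - 1 - m) N (by omega)]
  have ht : t ∈ Finset.range N := by
    simp only [Finset.mem_range, hN]
    have := Nat.lt_two_pow_self (n := t); omega
  rw [← Finset.mul_prod_erase _ _ ht, ← Finset.mul_prod_erase _ _ ht]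
  have hgb : ((2 ^ t - 1 - m) ^^^ ((2 ^ t - 1 - m) >>> 1)).testBit t = false :=
    Nat.testBit_lt_two_pow (g_lt hb)
  have hga : ((2 ^ t + m) ^^^ ((2 ^ t + m) >>> 1)).testBit t = true := by
    rw [g_reflect h, Nat.testBit_xor, hgb, Nat.testBit_two_pow]
    simp
  rw [hga, hgb, if_pos rfl, if_neg (by simp), one_mul]
  congr 1
  apply Finset.prod_congr rfl
  intro k hk
  have hkt : k ≠ t := (Finset.mem_erase.1 hk).1
  rw [g_reflect h, Nat.testBit_xor, Nat.testBit_two_pow]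
  simp [Ne.symm hkt]

lemma T_add (ξ : ℕ → ℝ) (a b : ℕ) :
    T ξ (a + b) = T ξ a + ∑ k ∈ Finset.range b, xp ξ (a + k) := by
  induction b with
  | zero => simp
  | succ b ih =>
    have e : a + (b + 1) = (a + b) + 1 := by omega
    rw [e, T, Finset.sum_range_succ, ← T, ih, Finset.sum_range_succ, add_assoc]

lemma T_reflect (ξ : ℕ → ℝ) {t m : ℕ} (h : m ≤ 2 ^ t) :
    T ξ (2 ^ t + m) = T ξ (2 ^ t) + ξ (t + 1) * (T ξ (2 ^ t) - T ξ (2 ^ t - m)) := by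
  have h1 : T ξ (2 ^ t + m) = T ξ (2 ^ t) + ∑ k ∈ Finset.range m, xp ξ (2 ^ t + k) :=
    T_add ξ _ m
  have h2 : ∑ k ∈ Finset.range m, xp ξ (2 ^ t + k)
      = ξ (t + 1) * ∑ k ∈ Finset.range m, xp ξ (2 ^ t - 1 - k) := by
    rw [Finset.mul_sum]
    apply Finset.sum_congr rfl
    intro k hk
    exact xp_reflect ξ (lt_of_lt_of_le (Finset.mem_range.1 hk) h)
  have h3 : ∑ k ∈ Finset.range m, xp ξ (2 ^ t - 1 - k)
      = T ξ (2 ^ t) - T ξ (2 ^ t - m) := by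
    have e1 : ∀ k ∈ Finset.range m, xp ξ (2 ^ t - 1 - k) = xp ξ (2 ^ t - m + (m - 1 - k)) := by
      intro k hk
      have := Finset.mem_range.1 hk
      congr 1
      omega
    rw [Finset.sum_congr rfl e1, Finset.sum_range_reflect (fun j => xp ξ (2 ^ t - m + j)) m]
    have h4 : T ξ (2 ^ t) = T ξ (2 ^ t - m) + ∑ j ∈ Finset.range m, xp ξ (2 ^ t - m + j) := by
      have := T_add ξ (2 ^ t - m) m
      rwa [Nat.sub_add_cancel h] at this
    rw [h4]; ring
  rw [h1, h2, h3]

end GrayAux2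

namespace GrayAux2
open GrayAux

variable (ξ : ℕ → ℝ)

lemma T_zero : T ξ 0 = 0 := by simp [T]

lemma mem_graySet {i j : ℕ} (hj : j ∈ graySet i) :
    1 ≤ j ∧ (i ^^^ (i >>> 1)).testBit (j - 1) := by
  simp only [graySet, Finset.mem_filter] at hj
  exact hj.2

lemma xp_one {J : ℕ} (hbefore : ∀ j, 1 ≤ j → j < J → ξ j = 1)
    {i : ℕ} (hi : i < 2 ^ (J - 1)) : xp ξ i = 1 := by
  rw [xp]
  apply Finset.prod_eq_one
  intro j hj
  obtain ⟨hj1, hjb⟩ := mem_graySet hj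
  have hg : i ^^^ (i >>> 1) < 2 ^ (J - 1) := g_lt hi
  have hjJ : j < J := by
    by_contra hc
    have : J - 1 ≤ j - 1 := by omega
    have : i ^^^ (i >>> 1) < 2 ^ (j - 1) :=
      lt_of_lt_of_le hg (Nat.pow_le_pow_right (by norm_num) this)
    rw [Nat.testBit_lt_two_pow this] at hjb
    exact Bool.false_ne_true hjb
  exact hbefore j hj1 hjJ

lemma phase1 {J : ℕ} (hbefore : ∀ j, 1 ≤ j → j < J → ξ j = 1) :
    ∀ n, n ≤ 2 ^ (J - 1) → T ξ n = n := by
  intro n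
  induction n with
  | zero => intro _; simp [T]
  | succ n ih =>
    intro hn
    rw [T, Finset.sum_range_succ, ← T, ih (by omega), xp_one ξ hbefore (by omega)]
    push_cast
    ring

lemma phase2 {J : ℕ} (hJ : 1 ≤ J) (hbefore : ∀ j, 1 ≤ j → j < J → ξ j = 1)
    (hJneg : ξ J = -1) :
    ∀ m, m ≤ 2 ^ (J - 1) → T ξ (2 ^ (J - 1) + m) = (2 ^ (J - 1) : ℝ) - m := by
  intro m hm
  have hJ1 : J - 1 + 1 = J := by omega
  rw [T_reflect ξ hm, hJ1, hJneg, phase1 ξ hbefore _ le_rfl,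
    phase1 ξ hbefore _ (Nat.sub_le _ _)]
  have : ((2 ^ (J - 1) - m : ℕ) : ℝ) = (2 ^ (J - 1) : ℝ) - m := by
    push_cast [hm]; ring
  rw [this]
  push_cast
  ring

lemma pow_split (j : ℕ) : 2 ^ (j + 1) = 2 ^ j + 2 ^ j := by ring

lemma bound {J : ℕ} (hpm : ∀ j, ξ j = 1 ∨ ξ j = -1) (hJ : 1 ≤ J)
    (hbefore : ∀ j, 1 ≤ j → j < J → ξ j = 1) (hJneg : ξ J = -1) :
    ∀ j, J ≤ j → T ξ (2 ^ j) = 0 ∧ ∀ n, n ≤ 2 ^ j → |T ξ n| ≤ (2 ^ (J - 1) : ℝ) := by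
  intro j hj
  induction j, hj using Nat.le_induction with
  | base =>
    have h2J : 2 ^ J = 2 ^ (J - 1) + 2 ^ (J - 1) := by
      rw [← pow_split]; congr 1; omega
    constructor
    · rw [h2J, phase2 ξ hJ hbefore hJneg _ le_rfl]
      push_cast
      ring
    · intro n hn
      rcases le_or_gt n (2 ^ (J - 1)) with h | h
      · rw [phase1 ξ hbefore n h, abs_of_nonneg (by positivity)]
        exact_mod_cast h
      · have hm : n - 2 ^ (J - 1) ≤ 2 ^ (J - 1) := by omega
        have : n = 2 ^ (J - 1) + (n - 2 ^ (J - 1)) := by omega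
        rw [this, phase2 ξ hJ hbefore hJneg _ hm]
        rw [abs_le]
        constructor
        · have : ((n - 2 ^ (J - 1) : ℕ) : ℝ) ≤ (2 ^ (J - 1) : ℝ) := by
            exact_mod_cast hm
          linarith
        · have : (0 : ℝ) ≤ ((n - 2 ^ (J - 1) : ℕ) : ℝ) := Nat.cast_nonneg _
          linarith
  | succ j hj ih =>
    obtain ⟨ih0, ihb⟩ := ih
    have key : ∀ m, m ≤ 2 ^ j → T ξ (2 ^ j + m) = -(ξ (j + 1)) * T ξ (2 ^ j - m) := by
      intro m hm
      rw [T_reflect ξ hm, ih0]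
      ring
    constructor
    · rw [pow_split, key _ le_rfl, Nat.sub_self, T_zero]
      ring
    · intro n hn
      rcases le_or_gt n (2 ^ j) with h | h
      · exact ihb n h
      · have hm : n - 2 ^ j ≤ 2 ^ j := by
          rw [pow_split] at hn; omega
        have he : n = 2 ^ j + (n - 2 ^ j) := by omega
        rw [he, key _ hm, abs_mul, abs_neg]
        have : |ξ (j + 1)| = 1 := by
          rcases hpm (j + 1) with h1 | h1 <;> rw [h1] <;> norm_num
        rw [this, one_mul]
        exact ihb _ (Nat.sub_le _ _)

lemma det_main (hpm : ∀ j, ξ j = 1 ∨ ξ j = -1)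
    (J : ℕ) (hJ : 1 ≤ J) (hbefore : ∀ j, 1 ≤ j → j < J → ξ j = 1) (hJneg : ξ J = -1)
    (hinf : ∀ k, ∃ j, k < j ∧ ξ j = 1) :
    IsLUB (Set.range fun n => T ξ (n + 1)) ((2 : ℝ) ^ (J - 1)) ∧
    IsGLB (Set.range fun n => T ξ (n + 1)) (-((2 : ℝ) ^ (J - 1))) := by
  have habs : ∀ n : ℕ, |T ξ (n + 1)| ≤ (2 : ℝ) ^ (J - 1) := by
    intro n
    have h1 : n + 1 ≤ 2 ^ (J + (n + 1)) := by
      calc n + 1 ≤ 2 ^ (n + 1) := (Nat.lt_two_pow_self (n := n + 1)).le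
      _ ≤ 2 ^ (J + (n + 1)) := Nat.pow_le_pow_right (by norm_num) (by omega)
    exact (bound ξ hpm hJ hbefore hJneg (J + (n + 1)) (by omega)).2 _ h1
  have hmax : T ξ (2 ^ (J - 1) - 1 + 1) = (2 : ℝ) ^ (J - 1) := by
    have hpos : 1 ≤ 2 ^ (J - 1) := Nat.one_le_two_pow
    have : 2 ^ (J - 1) - 1 + 1 = 2 ^ (J - 1) := by omega
    rw [this, phase1 ξ hbefore _ le_rfl]
    push_cast
    ring
  have hmin : ∃ n : ℕ, T ξ (n + 1) = -((2 : ℝ) ^ (J - 1)) := by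
    obtain ⟨j', hj', hξ⟩ := hinf J
    set j := j' - 1 with hjdef
    have hjJ : J ≤ j := by omega
    have hj1 : j + 1 = j' := by omega
    have hle : 2 ^ (J - 1) ≤ 2 ^ j := Nat.pow_le_pow_right (by norm_num) (by omega)
    have hm : 2 ^ j - 2 ^ (J - 1) ≤ 2 ^ j := Nat.sub_le _ _
    have hsub : 2 ^ j - (2 ^ j - 2 ^ (J - 1)) = 2 ^ (J - 1) := by omega
    have hT0 := (bound ξ hpm hJ hbefore hJneg j hjJ).1
    have hval : T ξ (2 ^ j + (2 ^ j - 2 ^ (J - 1))) = -((2 : ℝ) ^ (J - 1)) := by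
      rw [T_reflect ξ hm, hT0, hj1, hξ, hsub, phase1 ξ hbefore _ le_rfl]
      push_cast
      ring
    have hpos : 1 ≤ 2 ^ j + (2 ^ j - 2 ^ (J - 1)) := by
      have : 1 ≤ 2 ^ j := Nat.one_le_two_pow
      omega
    refine ⟨2 ^ j + (2 ^ j - 2 ^ (J - 1)) - 1, ?_⟩
    rw [Nat.sub_add_cancel hpos, hval]
  constructor
  · constructor
    · rintro y ⟨n, rfl⟩
      exact (abs_le.1 (habs n)).2
    · intro b hb
      have := hb ⟨2 ^ (J - 1) - 1, rfl⟩
      simp only at this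
      rwa [hmax] at this
  · constructor
    · rintro y ⟨n, rfl⟩
      exact (abs_le.1 (habs n)).1
    · intro b hb
      obtain ⟨n, hn⟩ := hmin
      have := hb ⟨n, rfl⟩
      simp only at this
      rwa [hn] at this

end GrayAux2

namespace GrayAux2
open MeasureTheory ProbabilityTheory

variable {Ω : Type*} [MeasurableSpace Ω] (μ : MeasureTheory.Measure Ω)
  [IsProbabilityMeasure μ] (ξ' : ℕ → Ω → ℝ)

lemma ae_pm (hmeas : ∀ j, Measurable (ξ' j))
    (hdist : ∀ j, μ {ω | ξ' j ω = 1} = 1/2 ∧ μ {ω | ξ' j ω = -1} = 1/2) :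
    ∀ᵐ ω ∂μ, ∀ j, ξ' j ω = 1 ∨ ξ' j ω = -1 := by
  rw [ae_all_iff]
  intro j
  have hA : MeasurableSet {ω | ξ' j ω = 1} := (hmeas j) (measurableSet_singleton 1)
  have hB : MeasurableSet {ω | ξ' j ω = -1} := (hmeas j) (measurableSet_singleton (-1))
  have hd : Disjoint {ω | ξ' j ω = 1} {ω | ξ' j ω = -1} := by
    rw [Set.disjoint_left]
    intro ω h1 h2
    simp only [Set.mem_setOf_eq] at h1 h2
    rw [h1] at h2
    norm_num at h2
  have hu : μ ({ω | ξ' j ω = 1} ∪ {ω | ξ' j ω = -1}) = 1 := by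
    rw [measure_union hd hB, (hdist j).1, (hdist j).2]
    exact ENNReal.add_halves 1
  rw [ae_iff]
  have he : {ω | ¬ (ξ' j ω = 1 ∨ ξ' j ω = -1)} = ({ω | ξ' j ω = 1} ∪ {ω | ξ' j ω = -1})ᶜ := by
    ext ω
    simp [not_or]
  rw [he]
  rw [prob_compl_eq_zero_iff (hA.union hB)]
  exact hu

lemma ae_inf (hmeas : ∀ j, Measurable (ξ' j))
    (hindep : iIndepFun ξ' μ)
    (hdist : ∀ j, μ {ω | ξ' j ω = 1} = 1/2 ∧ μ {ω | ξ' j ω = -1} = 1/2) :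
    ∀ᵐ ω ∂μ, ∀ k, ∃ j, k < j ∧ ξ' j ω = 1 := by
  rw [ae_all_iff]
  intro k
  rw [ae_iff]
  have hhalf : ∀ j : ℕ, μ (ξ' j ⁻¹' ({1}ᶜ)) = 1/2 := by
    intro j
    have h1 : μ (ξ' j ⁻¹' {1}) = 1/2 := by
      have : ξ' j ⁻¹' {1} = {ω | ξ' j ω = 1} := by ext ω; simp
      rw [this]; exact (hdist j).1
    rw [Set.preimage_compl, measure_compl ((hmeas j) (measurableSet_singleton 1))
      (measure_ne_top μ _), h1, measure_univ]
    exact ENNReal.sub_half (by norm_num)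
  have hCm : ∀ m : ℕ,
      μ (⋂ j ∈ Finset.Ico (k+1) (k+1+m), ξ' j ⁻¹' ({1}ᶜ)) = (1/2 : ENNReal) ^ m := by
    intro m
    rw [hindep.measure_inter_preimage_eq_mul (Finset.Ico (k+1) (k+1+m))
      (sets := fun _ => ({1}ᶜ : Set ℝ))
      (fun i _ => (measurableSet_singleton 1).compl)]
    rw [Finset.prod_congr rfl (fun j _ => hhalf j), Finset.prod_const, Nat.card_Ico]
    congr 1
    omega
  have hsub : ∀ m : ℕ, {a | ¬∃ j, k < j ∧ ξ' j a = 1} ⊆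
      ⋂ j ∈ Finset.Ico (k+1) (k+1+m), ξ' j ⁻¹' ({1}ᶜ) := by
    intro m ω hω
    simp only [Set.mem_setOf_eq, not_exists, not_and] at hω
    refine Set.mem_iInter₂.2 fun j hj => ?_
    simp only [Finset.mem_Ico] at hj
    simp only [Set.mem_preimage, Set.mem_compl_iff, Set.mem_singleton_iff]
    exact hω j (by omega)
  have hle : ∀ m : ℕ, μ {a | ¬∃ j, k < j ∧ ξ' j a = 1} ≤ (1/2 : ENNReal) ^ m := by
    intro m
    calc μ _ ≤ μ (⋂ j ∈ Finset.Ico (k+1) (k+1+m), ξ' j ⁻¹' ({1}ᶜ)) := measure_mono (hsub m)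
    _ = _ := hCm m
  have h0 : μ {a | ¬∃ j, k < j ∧ ξ' j a = 1} ≤ 0 :=
    ge_of_tendsto' (ENNReal.tendsto_pow_atTop_nhds_zero_of_lt_one
      (by norm_num : (1/2 : ENNReal) < 1)) hle
  exact le_antisymm h0 zero_le

end GrayAux2

/-- The Gray walk `S'_n = ∑_{i=0}^n X_i`, with `X_i = ∏_{j ∈ A_i} ξ_j`,
satisfies a.s. `sup_n S'_n = -inf_n S'_n = 2^{J-1}` where
`J = min {j ≥ 1 : ξ_j = -1}`. -/
theorem gray_walk_sup_inf
    {Ω : Type*} [MeasurableSpace Ω] (μ : Measure Ω) [IsProbabilityMeasure μ]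
    (ξ : ℕ → Ω → ℝ) (hmeas : ∀ j, Measurable (ξ j))
    (hindep : iIndepFun ξ μ)
    (hdist : ∀ j, μ {ω | ξ j ω = 1} = 1/2 ∧ μ {ω | ξ j ω = -1} = 1/2)
    (S' : ℕ → Ω → ℝ)
    (hS' : ∀ n ω, S' n ω = ∑ i ∈ Finset.range (n + 1), ∏ j ∈ graySet i, ξ j ω) :
    ∀ᵐ ω ∂μ, ∀ J : ℕ, 1 ≤ J → (∀ j, 1 ≤ j → j < J → ξ j ω = 1) → ξ J ω = -1 →
      IsLUB (Set.range fun n => S' n ω) ((2 : ℝ) ^ (J - 1)) ∧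
      IsGLB (Set.range fun n => S' n ω) (-((2 : ℝ) ^ (J - 1))) := by
  filter_upwards [GrayAux2.ae_pm μ ξ hmeas hdist,
    GrayAux2.ae_inf μ ξ hmeas hindep hdist] with ω hpm hinf J hJ hbefore hJneg
  have hfun : (fun n : ℕ => S' n ω) = fun n => GrayAux2.T (fun j => ξ j ω) (n + 1) := by
    funext n
    rw [hS' n ω]
    rfl
  rw [show (Set.range fun n => S' n ω) = _ from congrArg Set.range hfun]
  exact GrayAux2.det_main (fun j => ξ j ω) hpm J hJ hbefore hJneg hinf
end

section
/- For the Gray walk, the maximum M = sup_n S_n satisfies E[M] = ∞, even though E[S_n] = 0 and E[S_n²] = n for every n. -/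
open MeasureTheory ProbabilityTheory

namespace GrayAux

def gray (i : ℕ) : ℕ := i ^^^ (i >>> 1)

lemma gray_zero : gray 0 = 0 := rfl

lemma gray_eq_zero {i : ℕ} (h : gray i = 0) : i = 0 := by
  have h2 : i = i >>> 1 := by
    have := xor_eq_zero_iff.mp h
    exact this
  rw [Nat.shiftRight_one] at h2
  omega

lemma gray_shiftRight (i m : ℕ) : gray i >>> m = gray (i >>> m) := by
  apply Nat.eq_of_testBit_eq
  intro b
  simp only [gray, Nat.testBit_xor, Nat.testBit_shiftRight]
  congr 2 <;> omega

lemma gray_lt_two_pow {i m : ℕ} (h : i < 2 ^ m) : gray i < 2 ^ m := by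
  by_contra hge
  push_neg at hge
  obtain ⟨b, hb, htb⟩ := Nat.exists_ge_and_testBit_of_ge_two_pow hge
  have h1 : (gray i).testBit b = (gray (i >>> m)).testBit (b - m) := by
    rw [← gray_shiftRight, Nat.testBit_shiftRight, Nat.add_sub_cancel' hb]
  have h2 : i >>> m = 0 := by
    simp [Nat.shiftRight_eq_div_pow, Nat.div_eq_of_lt h]
  rw [h2] at h1
  simp [gray_zero, htb] at h1

lemma gray_inj : Function.Injective gray := by
  intro a b hab
  induction a using Nat.strong_induction_on generalizing b with
  | _ a ih =>
    rcases Nat.eq_zero_or_pos a with ha | ha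
    · subst ha
      exact (gray_eq_zero (by rw [← hab, gray_zero])).symm
    · have hs : a >>> 1 = b >>> 1 := by
        apply ih (a >>> 1) (by rw [Nat.shiftRight_one]; omega)
        rw [← gray_shiftRight, ← gray_shiftRight, hab]
      have hb0 : a.testBit 0 = b.testBit 0 := by
        have h1 : (gray a).testBit 0 = (gray b).testBit 0 := by rw [hab]
        simp only [gray, Nat.testBit_xor, Nat.testBit_shiftRight] at h1
        have h2 : a.testBit 1 = b.testBit 1 := by
          have := congrArg (fun x => Nat.testBit x 0) hs
          simpa [Nat.testBit_shiftRight] using this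
        rw [h2] at h1
        rcases Bool.eq_false_or_eq_true (b.testBit 1) with h | h <;>
          simp [h] at h1 <;> simp [h1]
      rw [Nat.shiftRight_one] at hs
      have hm : a % 2 = b % 2 := by
        simp only [Nat.testBit_zero, decide_eq_decide] at hb0
        omega
      omega


/-- product of `ε (b+1)` over set bits `b` of `g`, up to bound `m` -/
def P (ε : ℕ → ℝ) (g m : ℕ) : ℝ :=
  ∏ b ∈ Finset.range m, (if g.testBit b then ε (b + 1) else 1)

def Q (ε : ℕ → ℝ) (g : ℕ) : ℝ := P ε g g

lemma P_stable (ε : ℕ → ℝ) {g m : ℕ} (h : g < 2 ^ m) :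
    ∀ m', m ≤ m' → P ε g m' = P ε g m := by
  intro m' hm
  induction m' with
  | zero =>
    have : m = 0 := by omega
    rw [this]
  | succ n ihn =>
    rcases Nat.lt_or_ge n m with h1 | h1
    · have : m = n + 1 := by omega
      rw [this]
    · rw [P, Finset.prod_range_succ, ← P, ihn h1]
      have : g.testBit n = false :=
        Nat.testBit_lt_two_pow (lt_of_lt_of_le h (Nat.pow_le_pow_right (by norm_num) h1))
      simp [this]

lemma Q_eq_P (ε : ℕ → ℝ) {g m : ℕ} (h : g < 2 ^ m) : Q ε g = P ε g m := by
  rcases Nat.lt_or_ge g m with h1 | h1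
  · exact (P_stable ε (Nat.lt_two_pow_self (n := g)) m h1.le).symm
  · exact (P_stable ε h g h1).symm ▸ rfl

lemma Q_zero (ε : ℕ → ℝ) : Q ε 0 = 1 := by simp [Q, P]

lemma Q_rec (ε : ℕ → ℝ) (g : ℕ) :
    Q ε g = (if g.testBit 0 then ε 1 else 1) * Q (fun j => ε (j + 1)) (g >>> 1) := by
  rw [Q_eq_P ε (show g < 2 ^ (g + 1) from lt_trans (Nat.lt_two_pow_self (n := g)) (by
        exact Nat.pow_lt_pow_right (by norm_num) (Nat.lt_succ_self g)))]
  rw [P, Finset.prod_range_succ']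
  rw [Q_eq_P (fun j => ε (j + 1)) (show g >>> 1 < 2 ^ g from
        lt_of_le_of_lt (by rw [Nat.shiftRight_one]; exact Nat.div_le_self g 2) (Nat.lt_two_pow_self (n := g)))]
  rw [mul_comm, P]
  congr 1
  apply Finset.prod_congr rfl
  intro b _
  simp [Nat.testBit_shiftRight, Nat.add_comm 1 b]

lemma Q_pm {ε : ℕ → ℝ} (hpm : ∀ j, 1 ≤ j → ε j = 1 ∨ ε j = -1) (g : ℕ) :
    Q ε g = 1 ∨ Q ε g = -1 := by
  rw [Q, P]
  apply Finset.prod_induction _ (fun x => x = 1 ∨ x = -1)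
  · rintro a b (ha | ha) (hb | hb) <;> simp [ha, hb]
  · left; rfl
  · intro b _
    split
    · exact hpm (b + 1) (by omega)
    · left; rfl

lemma Q_low {ε : ℕ → ℝ} {k : ℕ} (hlow : ∀ j, 1 ≤ j → j ≤ k → ε j = 1)
    {g : ℕ} (hg : g < 2 ^ k) : Q ε g = 1 := by
  rw [Q, P]
  apply Finset.prod_eq_one
  intro b _
  split
  case isTrue h =>
    have hb : 2 ^ b ≤ g := by
      by_contra hc
      push_neg at hc
      simp [Nat.testBit_lt_two_pow hc] at h
    have : b < k := by
      by_contra hc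
      push_neg at hc
      exact absurd (lt_of_le_of_lt hb hg) (not_lt.mpr (Nat.pow_le_pow_right (by norm_num) hc))
    exact hlow (b + 1) (by omega) (by omega)
  · rfl

/-- the walk increment -/
def W (ε : ℕ → ℝ) (i : ℕ) : ℝ := ∏ j ∈ graySet i, ε j

lemma gray_lt (i : ℕ) : gray i < 2 ^ (i + 1) :=
  gray_lt_two_pow (lt_trans (Nat.lt_two_pow_self (n := i)) (Nat.pow_lt_pow_right (by norm_num) (Nat.lt_succ_self i)))

lemma W_eq_Q (ε : ℕ → ℝ) (i : ℕ) : W ε i = Q ε (gray i) := by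
  rw [W, graySet, Finset.prod_filter, Q_eq_P ε (gray_lt i), P]
  rw [Finset.prod_range_succ']
  have h0 : (if 1 ≤ 0 ∧ (i ^^^ i >>> 1).testBit (0 - 1) then ε 0 else 1) = 1 := by
    simp
  rw [h0, mul_one]
  apply Finset.prod_congr rfl
  intro b _
  have : (1 ≤ b + 1 ∧ (i ^^^ i >>> 1).testBit (b + 1 - 1)) ↔ (gray i).testBit b := by
    simp [gray]
  simp only [this]

lemma graySet_zero : graySet 0 = ∅ := rfl

lemma W_zero (ε : ℕ → ℝ) : W ε 0 = 1 := by rw [W, graySet_zero, Finset.prod_empty]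

lemma gray_one : gray 1 = 1 := rfl

lemma W_one (ε : ℕ → ℝ) : W ε 1 = ε 1 := by
  rw [W_eq_Q, gray_one, Q_rec]
  simp [Q_zero]

lemma shiftRight_two_mul (t : ℕ) : (2 * t) >>> 1 = t := by
  rw [Nat.shiftRight_one]; omega

lemma shiftRight_two_mul_add_one (t : ℕ) : (2 * t + 1) >>> 1 = t := by
  rw [Nat.shiftRight_one]; omega

lemma gray_two_mul_shift (t : ℕ) : gray (2 * t) >>> 1 = gray t := by
  rw [gray_shiftRight, shiftRight_two_mul]

lemma gray_two_mul_add_one_shift (t : ℕ) : gray (2 * t + 1) >>> 1 = gray t := by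
  rw [gray_shiftRight, shiftRight_two_mul_add_one]

lemma testBit_gray_zero (i : ℕ) : (gray i).testBit 0 = ((i.testBit 0).xor (i.testBit 1)) := by
  simp only [gray, Nat.testBit_xor, Nat.testBit_shiftRight, Nat.add_zero]

lemma testBit_two_mul_zero (t : ℕ) : (2 * t).testBit 0 = false := by
  simp [Nat.testBit_zero]

lemma testBit_two_mul_one (t : ℕ) : (2 * t).testBit 1 = t.testBit 0 := by
  have := congrArg (fun x => Nat.testBit x 0) (shiftRight_two_mul t)
  simpa [Nat.testBit_shiftRight] using this

lemma testBit_two_mul_add_one_zero (t : ℕ) : (2 * t + 1).testBit 0 = true := by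
  simp [Nat.testBit_zero]

lemma testBit_two_mul_add_one_one (t : ℕ) : (2 * t + 1).testBit 1 = t.testBit 0 := by
  have := congrArg (fun x => Nat.testBit x 0) (shiftRight_two_mul_add_one t)
  simpa [Nat.testBit_shiftRight] using this

lemma W_two_mul (ε : ℕ → ℝ) (t : ℕ) :
    W ε (2 * t) = (if t.testBit 0 then ε 1 else 1) * W (fun j => ε (j + 1)) t := by
  rw [W_eq_Q, Q_rec, W_eq_Q, gray_two_mul_shift, testBit_gray_zero,
    testBit_two_mul_zero, testBit_two_mul_one]
  simp

lemma W_two_mul_add_one (ε : ℕ → ℝ) (t : ℕ) :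
    W ε (2 * t + 1) = (if t.testBit 0 then 1 else ε 1) * W (fun j => ε (j + 1)) t := by
  rw [W_eq_Q, Q_rec, W_eq_Q, gray_two_mul_add_one_shift, testBit_gray_zero,
    testBit_two_mul_add_one_zero, testBit_two_mul_add_one_one]
  cases h : t.testBit 0 <;> simp [h]

lemma W_odd_eq_neg {ε : ℕ → ℝ} (h1 : ε 1 = -1) (t : ℕ) :
    W ε (2 * t + 1) = - W ε (2 * t) := by
  rw [W_two_mul, W_two_mul_add_one, h1]
  cases h : t.testBit 0 <;> simp [h]

lemma W_odd_eq_even {ε : ℕ → ℝ} (h1 : ε 1 = 1) (t : ℕ) :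
    W ε (2 * t + 1) = W (fun j => ε (j + 1)) t ∧ W ε (2 * t) = W (fun j => ε (j + 1)) t := by
  rw [W_two_mul, W_two_mul_add_one, h1]
  cases h : t.testBit 0 <;> simp [h]

lemma W_pm {ε : ℕ → ℝ} (hpm : ∀ j, 1 ≤ j → ε j = 1 ∨ ε j = -1) (i : ℕ) :
    W ε i = 1 ∨ W ε i = -1 := by
  rw [W_eq_Q]; exact Q_pm hpm _

/-- partial sums of the walk -/
def T (ε : ℕ → ℝ) (n : ℕ) : ℝ := ∑ i ∈ Finset.Icc 1 n, W ε i

lemma T_zero (ε : ℕ → ℝ) : T ε 0 = 0 := by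
  rw [T]; simp

lemma T_succ (ε : ℕ → ℝ) (n : ℕ) : T ε (n + 1) = T ε n + W ε (n + 1) := by
  rw [T, T, Finset.sum_Icc_succ_top (by omega : 1 ≤ n + 1)]

lemma T_neg {ε : ℕ → ℝ} (hpm : ∀ j, 1 ≤ j → ε j = 1 ∨ ε j = -1) (h1 : ε 1 = -1) :
    ∀ n, T ε n ≤ 0 := by
  have hodd : ∀ m, T ε (2 * m + 1) = -1 := by
    intro m
    induction m with
    | zero => simpa [T_succ, T_zero, W_one] using h1
    | succ m ih =>
      have e1 : 2 * (m + 1) + 1 = (2 * m + 1) + 1 + 1 := by omega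
      rw [e1, T_succ, T_succ, ih]
      have e2 : 2 * m + 1 + 1 = 2 * (m + 1) := by omega
      rw [e2, W_odd_eq_neg h1]
      ring
  intro n
  rcases Nat.even_or_odd n with ⟨m, hm⟩ | ⟨m, hm⟩
  · rcases Nat.eq_zero_or_pos m with h | h
    · simp [hm, h, T_zero]
    · obtain ⟨m', rfl⟩ : ∃ m', m = m' + 1 := ⟨m - 1, by omega⟩
      have e1 : n = (2 * m' + 1) + 1 := by omega
      rw [e1, T_succ, hodd]
      have e2 : 2 * m' + 1 + 1 = 2 * (m' + 1) := by omega
      rw [e2]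
      rcases W_pm hpm (2 * (m' + 1)) with h | h <;> rw [h] <;> norm_num
  · have e1 : n = 2 * m + 1 := by omega
    rw [e1, hodd]
    norm_num

lemma T_le {k : ℕ} : ∀ (ε : ℕ → ℝ), (∀ j, 1 ≤ j → ε j = 1 ∨ ε j = -1) →
    (∀ j, 1 ≤ j → j ≤ k → ε j = 1) → ε (k + 1) = -1 →
    ∀ n, T ε n ≤ 2 ^ k - 1 := by
  induction k with
  | zero =>
    intro ε hpm _ hk n
    simpa using T_neg hpm hk n
  | succ k ih =>
    intro ε hpm hlow hk n
    have h1 : ε 1 = 1 := hlow 1 le_rfl (by omega)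
    set ε' : ℕ → ℝ := fun j => ε (j + 1) with hε'
    have hpm' : ∀ j, 1 ≤ j → ε' j = 1 ∨ ε' j = -1 := fun j hj => hpm (j + 1) (by omega)
    have hlow' : ∀ j, 1 ≤ j → j ≤ k → ε' j = 1 := fun j hj hjk => hlow (j + 1) (by omega) (by omega)
    have hk' : ε' (k + 1) = -1 := hk
    have IH := ih ε' hpm' hlow' hk'
    have Weq : ∀ t, W ε (2 * t) = W ε' t ∧ W ε (2 * t + 1) = W ε' t := by
      intro t
      obtain ⟨a, b⟩ := W_odd_eq_even h1 t
      exact ⟨b, a⟩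
    have hodd : ∀ m, T ε (2 * m + 1) = 1 + 2 * T ε' m := by
      intro m
      induction m with
      | zero =>
        rw [show 2 * 0 + 1 = 0 + 1 by omega, T_succ, T_zero, T_zero, W_one, h1]
        ring
      | succ m ihm =>
        have e1 : 2 * (m + 1) + 1 = (2 * m + 1) + 1 + 1 := by omega
        rw [e1, T_succ, T_succ, ihm,
          show 2 * m + 1 + 1 = 2 * (m + 1) by omega,
          (Weq (m + 1)).1, (Weq (m + 1)).2, T_succ]
        ring
    have hpow : (2 : ℝ) ^ (k + 1) = 2 * 2 ^ k := by rw [pow_succ]; ring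
    rcases Nat.even_or_odd n with ⟨m, hm⟩ | ⟨m, hm⟩
    · rcases Nat.eq_zero_or_pos m with h | h
      · rw [hm, h]
        simp only [Nat.mul_zero, Nat.add_zero, T_zero]
        have : (1 : ℝ) ≤ 2 ^ (k + 1) := one_le_pow₀ (by norm_num)
        linarith
      · obtain ⟨m', rfl⟩ : ∃ m', m = m' + 1 := ⟨m - 1, by omega⟩
        have e1 : n = (2 * m' + 1) + 1 := by omega
        rcases W_pm hpm' (m' + 1) with hw | hw
        · -- W ε' (m'+1) = 1 : use T n = T(2m'+3) - W ε (2m'+3)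
          have e2 : (2 * m' + 1) + 1 + 1 = 2 * (m' + 1) + 1 := by omega
          have key : T ε n = T ε ((2 * m' + 1) + 1 + 1) - W ε ((2 * m' + 1) + 1 + 1) := by
            rw [T_succ, e1]; ring
          rw [key, e2, hodd, (Weq (m' + 1)).2, hw]
          have := IH (m' + 1)
          rw [hpow]; linarith
        · have key : T ε n = T ε (2 * m' + 1) + W ε (2 * (m' + 1)) := by
            rw [e1, T_succ, show 2 * m' + 1 + 1 = 2 * (m' + 1) by omega]
          rw [key, hodd, (Weq (m' + 1)).1, hw]
          have := IH m'
          rw [hpow]; linarith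
    · have e1 : n = 2 * m + 1 := by omega
      rw [e1, hodd]
      have := IH m
      rw [hpow]; linarith

lemma W_eq_one_of_low {ε : ℕ → ℝ} {k : ℕ} (hlow : ∀ j, 1 ≤ j → j ≤ k → ε j = 1)
    {i : ℕ} (hi : i < 2 ^ k) : W ε i = 1 := by
  rw [W_eq_Q]
  exact Q_low hlow (gray_lt_two_pow hi)

lemma T_val {ε : ℕ → ℝ} {k : ℕ} (hlow : ∀ j, 1 ≤ j → j ≤ k → ε j = 1) :
    T ε (2 ^ k - 1) = ((2 ^ k - 1 : ℕ) : ℝ) := by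
  rw [T]
  have hcongr : ∀ i ∈ Finset.Icc 1 (2 ^ k - 1), W ε i = 1 := by
    intro i hi
    exact W_eq_one_of_low hlow (by
      have := (Finset.mem_Icc.mp hi).2
      have h2 : 1 ≤ 2 ^ k := Nat.one_le_two_pow
      omega)
  rw [Finset.sum_congr rfl hcongr, Finset.sum_const, Nat.card_Icc]
  simp

end GrayAux

open MeasureTheory ProbabilityTheory GrayAux
open scoped symmDiff ENNReal

section Prob

variable {Ω : Type*} [MeasurableSpace Ω] (μ : Measure Ω) [IsProbabilityMeasure μ]
variable {ξ : ℕ → Ω → ℝ}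

lemma graySet_mem_iff {j i : ℕ} : j ∈ graySet i ↔ 1 ≤ j ∧ (gray i).testBit (j - 1) := by
  rw [graySet, Finset.mem_filter, Finset.mem_range]
  constructor
  · rintro ⟨_, h⟩; exact h
  · rintro ⟨h1, h2⟩
    refine ⟨?_, h1, h2⟩
    have hb : 2 ^ (j - 1) ≤ gray i := by
      by_contra hc
      push_neg at hc
      simp [Nat.testBit_lt_two_pow hc] at h2
    have := lt_of_le_of_lt hb (gray_lt i)
    have : j - 1 < i + 1 := by
      by_contra hc
      push_neg at hc
      exact absurd this (not_lt.mpr (Nat.pow_le_pow_right (by norm_num) hc))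
    omega

lemma graySet_injective : Function.Injective graySet := by
  intro a b hab
  apply gray_inj
  apply Nat.eq_of_testBit_eq
  intro t
  have h1 : (t + 1 ∈ graySet a) = (t + 1 ∈ graySet b) := by rw [hab]
  simp only [graySet_mem_iff, Nat.add_sub_cancel] at h1
  have h2 : (1 ≤ t + 1) = True := by simp
  rw [h2] at h1
  simpa using h1

lemma graySet_nonempty {i : ℕ} (hi : 1 ≤ i) : (graySet i).Nonempty := by
  have hg : gray i ≠ 0 := fun h => by have := gray_eq_zero h; omega
  have : ∃ b, (gray i).testBit b := by
    by_contra hc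
    push_neg at hc
    exact hg (Nat.eq_of_testBit_eq fun b => by simp [hc b])
  obtain ⟨b, hb⟩ := this
  exact ⟨b + 1, graySet_mem_iff.mpr ⟨by omega, by simpa using hb⟩⟩

variable (hmeas : ∀ j, Measurable (ξ j))
variable (hdist : ∀ j, μ {ω | ξ j ω = 1} = 1/2 ∧ μ {ω | ξ j ω = -1} = 1/2)

lemma meas_eq_set (j : ℕ) (c : ℝ) : {ω | ξ j ω = c} = ξ j ⁻¹' {c} := rfl

include hmeas hdist in
lemma ae_pm : ∀ᵐ ω ∂μ, ∀ j, ξ j ω = 1 ∨ ξ j ω = -1 := by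
  rw [ae_all_iff]
  intro j
  have hU : μ ({ω | ξ j ω = 1} ∪ {ω | ξ j ω = -1}) = 1 := by
    rw [measure_union ?_ (by rw [meas_eq_set]; exact (hmeas j) (measurableSet_singleton _)),
      (hdist j).1, (hdist j).2]
    · rw [one_div, ENNReal.inv_two_add_inv_two]
    · rw [Set.disjoint_left]
      rintro ω h1 h2
      simp only [Set.mem_setOf_eq] at h1 h2
      rw [h1] at h2; norm_num at h2
  have hms : MeasurableSet ({ω | ξ j ω = 1} ∪ {ω | ξ j ω = -1}) := by
    rw [meas_eq_set, meas_eq_set]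
    exact ((hmeas j) (measurableSet_singleton _)).union ((hmeas j) (measurableSet_singleton _))
  have := prob_compl_eq_zero_iff hms |>.mpr hU
  refine measure_mono_null ?_ this
  intro ω hω
  simp only [Set.mem_compl_iff, Set.mem_union, Set.mem_setOf_eq] at hω ⊢
  tauto

include hmeas hdist in
lemma prod_int (s : Finset ℕ) : Integrable (fun ω => ∏ j ∈ s, ξ j ω) μ := by
  refine Integrable.mono' (integrable_const 1)
    (Finset.measurable_prod s fun j _ => hmeas j).aestronglyMeasurable ?_
  filter_upwards [ae_pm μ hmeas hdist] with ω h
  have : ∏ j ∈ s, ξ j ω = 1 ∨ ∏ j ∈ s, ξ j ω = -1 := by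
    apply Finset.prod_induction _ (fun x => x = 1 ∨ x = -1)
    · rintro a b (ha | ha) (hb | hb) <;> simp [ha, hb]
    · left; rfl
    · exact fun j _ => h j
  rcases this with h1 | h1 <;> rw [h1] <;> norm_num

include hmeas hdist in
lemma xi_integral (j : ℕ) : ∫ ω, ξ j ω ∂μ = 0 := by
  have hint : Integrable (ξ j) μ := by
    have := prod_int μ hmeas hdist {j}
    simpa using this
  have hPm : MeasurableSet {ω | ξ j ω = 1} := by
    rw [meas_eq_set]; exact (hmeas j) (measurableSet_singleton _)
  rw [← integral_add_compl hPm hint]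
  have h1 : ∫ ω in {ω | ξ j ω = 1}, ξ j ω ∂μ = (1 : ℝ) / 2 := by
    rw [setIntegral_congr_fun hPm (fun ω hω => hω)]
    rw [setIntegral_const, measureReal_def, (hdist j).1]
    norm_num [ENNReal.toReal_div]
  have h2 : ∫ ω in {ω | ξ j ω = 1}ᶜ, ξ j ω ∂μ = -(1 : ℝ) / 2 := by
    have hae : ∀ᵐ ω ∂μ.restrict {ω | ξ j ω = 1}ᶜ, ξ j ω = -1 := by
      rw [ae_restrict_iff' hPm.compl]
      filter_upwards [ae_pm μ hmeas hdist] with ω h hω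
      rcases h j with h1 | h1
      · exact absurd h1 hω
      · exact h1
    rw [integral_congr_ae hae, integral_const]
    have hc : μ {ω | ξ j ω = 1}ᶜ = 1 / 2 := by
      rw [prob_compl_eq_one_sub hPm, (hdist j).1, one_div, ENNReal.one_sub_inv_two]
    rw [measureReal_def, Measure.restrict_apply_univ, hc]
    norm_num [ENNReal.toReal_div]
  rw [h1, h2]
  ring

variable (hindep : iIndepFun ξ μ)

include hmeas hdist hindep in
lemma prod_integral_zero {s : Finset ℕ} (hs : s.Nonempty) :
    ∫ ω, ∏ j ∈ s, ξ j ω ∂μ = 0 := by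
  obtain ⟨j0, hj0⟩ := hs
  have hrw : (fun ω => ∏ j ∈ s, ξ j ω) = (fun ω => ∏ j ∈ s.erase j0, ξ j ω) * ξ j0 := by
    funext ω
    simp only [Pi.mul_apply]
    exact (Finset.prod_erase_mul s _ hj0).symm
  have hind : IndepFun (∏ j ∈ s.erase j0, ξ j) (ξ j0) μ :=
    hindep.indepFun_finset_prod_of_notMem hmeas (Finset.notMem_erase j0 s)
  have hprodeq : (∏ j ∈ s.erase j0, ξ j) = fun ω => ∏ j ∈ s.erase j0, ξ j ω := by
    funext ω; simp
  rw [hrw]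
  have := hind.integral_mul_eq_mul_integral ?_ ?_
  · rw [hprodeq] at this
    rw [this, xi_integral μ hmeas hdist j0, mul_zero]
  · rw [hprodeq]; exact (prod_int μ hmeas hdist _).aestronglyMeasurable
  · have := prod_int μ hmeas hdist {j0}
    exact (hmeas j0).aestronglyMeasurable

include hmeas hdist hindep in
lemma X_integral_zero {i : ℕ} (hi : 1 ≤ i) :
    ∫ ω, ∏ j ∈ graySet i, ξ j ω ∂μ = 0 :=
  prod_integral_zero μ hmeas hdist hindep (graySet_nonempty hi)

include hmeas hdist hindep in
lemma X_mul_X_integral {i i' : ℕ} (hi : 1 ≤ i) (hi' : 1 ≤ i') :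
    ∫ ω, (∏ j ∈ graySet i, ξ j ω) * (∏ j ∈ graySet i', ξ j ω) ∂μ =
      if i = i' then 1 else 0 := by
  split
  case isTrue h =>
    subst h
    have hae : (fun ω => (∏ j ∈ graySet i, ξ j ω) * (∏ j ∈ graySet i, ξ j ω))
        =ᵐ[μ] fun _ => (1 : ℝ) := by
      filter_upwards [ae_pm μ hmeas hdist] with ω h
      have : ∏ j ∈ graySet i, ξ j ω = 1 ∨ ∏ j ∈ graySet i, ξ j ω = -1 := by
        apply Finset.prod_induction _ (fun x => x = 1 ∨ x = -1)
        · rintro a b (ha | ha) (hb | hb) <;> simp [ha, hb]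
        · left; rfl
        · exact fun j _ => h j
      rcases this with h1 | h1 <;> rw [h1] <;> norm_num
    rw [integral_congr_ae hae]
    simp
  case isFalse h =>
    have hne : graySet i ≠ graySet i' := fun hc => h (graySet_injective hc)
    have hsd : (graySet i ∆ graySet i').Nonempty := by
      rw [Finset.nonempty_iff_ne_empty]
      intro hc
      exact hne (symmDiff_eq_bot.mp hc)
    have hae : (fun ω => (∏ j ∈ graySet i, ξ j ω) * (∏ j ∈ graySet i', ξ j ω))
        =ᵐ[μ] fun ω => ∏ j ∈ graySet i ∆ graySet i', ξ j ω := by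
      filter_upwards [ae_pm μ hmeas hdist] with ω h
      have key : ∀ A B : Finset ℕ,
          (∏ j ∈ A, ξ j ω) * (∏ j ∈ B, ξ j ω) = ∏ j ∈ A ∆ B, ξ j ω := by
        intro A B
        have h1 : (∏ j ∈ A ∪ B, ξ j ω) * (∏ j ∈ A ∩ B, ξ j ω)
            = (∏ j ∈ A, ξ j ω) * (∏ j ∈ B, ξ j ω) := Finset.prod_union_inter
        have h2 : A ∪ B = (A ∆ B) ∪ (A ∩ B) := by
          rw [Finset.union_comm (A ∆ B)]
          exact (inf_sup_symmDiff A B).symm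
        have h3 : Disjoint (A ∆ B) (A ∩ B) := disjoint_symmDiff_inf A B
        have h4 : ∏ j ∈ A ∩ B, ξ j ω * ξ j ω = ∏ j ∈ A ∩ B, (1 : ℝ) :=
          Finset.prod_congr rfl fun j _ => by rcases h j with hj | hj <;> rw [hj] <;> norm_num
        rw [← h1, h2, Finset.prod_union h3]
        rw [mul_assoc, ← Finset.prod_mul_distrib, h4]
        simp
      exact key _ _
    rw [integral_congr_ae hae]
    exact prod_integral_zero μ hmeas hdist hindep hsd

include hdist hindep in
lemma Ev_measure (m : ℕ) :
    μ (⋂ j ∈ Finset.Icc 1 (m + 1), ξ j ⁻¹' {(if j = m + 1 then (-1 : ℝ) else 1)})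
      = (1 / 2) ^ (m + 1) := by
  rw [hindep.meas_biInter
    (fun i _ => ⟨{if i = m + 1 then (-1 : ℝ) else 1}, measurableSet_singleton _, rfl⟩)]
  have hterm : ∀ j ∈ Finset.Icc 1 (m + 1),
      μ (ξ j ⁻¹' {(if j = m + 1 then (-1 : ℝ) else 1)}) = 1 / 2 := by
    intro j _
    split
    · rw [← meas_eq_set]; exact (hdist j).2
    · rw [← meas_eq_set]; exact (hdist j).1
  rw [Finset.prod_congr rfl hterm, Finset.prod_const, Nat.card_Icc]
  norm_num

end Prob

/-- For the Gray walk `S_n = ∑_{i=1}^n X_i` with `X_i = ∏_{j ∈ A_i} ξ_j`: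
`E[S_n] = 0` and `E[S_n²] = n` for every `n`, yet the supremum
`M = sup_n S_n` has infinite expectation. -/
theorem gray_walk_max_infinite_expectation
    {Ω : Type*} [MeasurableSpace Ω] (μ : Measure Ω) [IsProbabilityMeasure μ]
    (ξ : ℕ → Ω → ℝ) (hmeas : ∀ j, Measurable (ξ j))
    (hindep : iIndepFun ξ μ)
    (hdist : ∀ j, μ {ω | ξ j ω = 1} = 1/2 ∧ μ {ω | ξ j ω = -1} = 1/2)
    (S : ℕ → Ω → ℝ)
    (hS : ∀ n ω, S n ω = ∑ i ∈ Finset.Icc 1 n, ∏ j ∈ graySet i, ξ j ω) :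
    (∀ n : ℕ, ∫ ω, S n ω ∂μ = 0) ∧
    (∀ n : ℕ, ∫ ω, (S n ω) ^ 2 ∂μ = n) ∧
    (∫⁻ ω, ENNReal.ofReal (⨆ n : ℕ, S n ω) ∂μ = ⊤) := by
  refine ⟨?_, ?_, ?_⟩
  · -- mean zero
    intro n
    have heq : (fun ω => S n ω) = fun ω => ∑ i ∈ Finset.Icc 1 n, ∏ j ∈ graySet i, ξ j ω :=
      funext (hS n)
    rw [heq, integral_finset_sum _ (fun i _ => prod_int μ hmeas hdist _)]
    apply Finset.sum_eq_zero
    intro i hi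
    exact X_integral_zero μ hmeas hdist hindep (Finset.mem_Icc.mp hi).1
  · -- variance n
    intro n
    have heq : (fun ω => S n ω ^ 2) = fun ω =>
        ∑ i ∈ Finset.Icc 1 n, ∑ i' ∈ Finset.Icc 1 n,
          (∏ j ∈ graySet i, ξ j ω) * (∏ j ∈ graySet i', ξ j ω) := by
      funext ω
      rw [hS n ω, sq, Finset.sum_mul_sum]
    have hXXint : ∀ i i' : ℕ,
        Integrable (fun ω => (∏ j ∈ graySet i, ξ j ω) * (∏ j ∈ graySet i', ξ j ω)) μ := by
      intro i i'
      refine Integrable.mono' (integrable_const 1)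
        (((Finset.measurable_prod _ fun j _ => hmeas j).mul
          (Finset.measurable_prod _ fun j _ => hmeas j)).aestronglyMeasurable) ?_
      filter_upwards [ae_pm μ hmeas hdist] with ω h
      have hpm : ∀ s : Finset ℕ, ∏ j ∈ s, ξ j ω = 1 ∨ ∏ j ∈ s, ξ j ω = -1 := by
        intro s
        apply Finset.prod_induction _ (fun x => x = 1 ∨ x = -1)
        · rintro a b (ha | ha) (hb | hb) <;> simp [ha, hb]
        · left; rfl
        · exact fun j _ => h j
      rcases hpm (graySet i) with h1 | h1 <;> rcases hpm (graySet i') with h2 | h2 <;>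
        rw [h1, h2] <;> norm_num
    rw [heq, integral_finset_sum _ (fun i _ => integrable_finset_sum _ (fun i' _ => hXXint i i'))]
    have : ∀ i ∈ Finset.Icc 1 n,
        (∫ ω, ∑ i' ∈ Finset.Icc 1 n,
          (∏ j ∈ graySet i, ξ j ω) * (∏ j ∈ graySet i', ξ j ω) ∂μ) = 1 := by
      intro i hi
      rw [integral_finset_sum _ (fun i' _ => hXXint i i')]
      have hterm : ∀ i' ∈ Finset.Icc 1 n,
          (∫ ω, (∏ j ∈ graySet i, ξ j ω) * (∏ j ∈ graySet i', ξ j ω) ∂μ)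
            = if i = i' then 1 else 0 := fun i' hi' =>
        X_mul_X_integral μ hmeas hdist hindep (Finset.mem_Icc.mp hi).1 (Finset.mem_Icc.mp hi').1
      rw [Finset.sum_congr rfl hterm, Finset.sum_ite_eq, if_pos hi]
    rw [Finset.sum_congr rfl this, Finset.sum_const, Nat.card_Icc]
    simp
  · -- infinite expectation of the supremum
    set f : Ω → ℝ≥0∞ := fun ω => ENNReal.ofReal (⨆ n : ℕ, S n ω) with hf
    set G : Set Ω := ⋂ j, (ξ j ⁻¹' {1} ∪ ξ j ⁻¹' {-1}) with hG
    have hGmeas : MeasurableSet G :=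
      MeasurableSet.iInter fun j =>
        ((hmeas j) (measurableSet_singleton _)).union ((hmeas j) (measurableSet_singleton _))
    have hGfull : μ Gᶜ = 0 := by
      have h1 : ∀ᵐ ω ∂μ, ∀ j, ξ j ω = 1 ∨ ξ j ω = -1 := ae_pm μ hmeas hdist
      rw [ae_iff] at h1
      refine measure_mono_null ?_ h1
      intro ω hω
      simp only [hG, Set.mem_compl_iff, Set.mem_iInter, Set.mem_union, Set.mem_preimage,
        Set.mem_singleton_iff, not_forall] at hω
      simp only [Set.mem_setOf_eq, not_forall]
      obtain ⟨j, hj⟩ := hω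
      push_neg at hj
      push_neg
      exact ⟨j, hj.1, hj.2⟩
    set Ev : ℕ → Set Ω := fun m =>
      ⋂ j ∈ Finset.Icc 1 (m + 1), ξ j ⁻¹' {(if j = m + 1 then (-1 : ℝ) else 1)} with hEv
    have hEv_mem : ∀ m ω, ω ∈ Ev m ↔
        ∀ j, 1 ≤ j → j ≤ m + 1 → ξ j ω = (if j = m + 1 then (-1 : ℝ) else 1) := by
      intro m ω
      simp only [hEv, Set.mem_iInter, Set.mem_preimage, Set.mem_singleton_iff,
        Finset.mem_Icc]
      constructor
      · intro h j h1 h2; exact h j ⟨h1, h2⟩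
      · intro h j hj; exact h j hj.1 hj.2
    have hEv_meas : ∀ m, MeasurableSet (Ev m) := by
      intro m
      exact MeasurableSet.biInter (Finset.Icc 1 (m + 1)).countable_toSet
        fun j _ => (hmeas j) (measurableSet_singleton _)
    set F : ℕ → Set Ω := fun k => Ev (k + 1) ∩ G with hF
    have hF_meas : ∀ k, MeasurableSet (F k) := fun k => (hEv_meas (k + 1)).inter hGmeas
    have hF_disj : ∀ k k', k ≠ k' → ∀ ω, ω ∈ F k → ω ∈ F k' → False := by
      intro k k' hkk' ω hk hk'
      rcases Nat.lt_or_ge k k' with h | h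
      · have h1 : ξ (k + 2) ω = -1 := by
          have := (hEv_mem (k + 1) ω).mp hk.1 (k + 2) (by omega) (by omega)
          simpa using this
        have h2 : ξ (k + 2) ω = 1 := by
          have := (hEv_mem (k' + 1) ω).mp hk'.1 (k + 2) (by omega) (by omega)
          rw [if_neg (by omega)] at this
          exact this
        rw [h1] at h2; norm_num at h2
      · have h : k' < k := by omega
        have h1 : ξ (k' + 2) ω = -1 := by
          have := (hEv_mem (k' + 1) ω).mp hk'.1 (k' + 2) (by omega) (by omega)
          simpa using this
        have h2 : ξ (k' + 2) ω = 1 := by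
          have := (hEv_mem (k + 1) ω).mp hk.1 (k' + 2) (by omega) (by omega)
          rw [if_neg (by omega)] at this
          exact this
        rw [h1] at h2; norm_num at h2
    have hμF : ∀ k, μ (F k) = (1 / 2 : ℝ≥0∞) ^ (k + 2) := by
      intro k
      rw [hF]
      have := measure_inter_conull (μ := μ) (s := Ev (k + 1)) (t := G) hGfull
      rw [this, hEv]
      have := Ev_measure μ hdist hindep (k + 1)
      rw [this]
    -- lower bound for the sup on F k
    have hsup : ∀ k, ∀ ω ∈ F k,
        ENNReal.ofReal ((2 : ℝ) ^ (k + 1) - 1) ≤ f ω := by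
      intro k ω hω
      set ε : ℕ → ℝ := fun j => ξ j ω with hε
      have hpm : ∀ j, 1 ≤ j → ε j = 1 ∨ ε j = -1 := by
        intro j _
        have := hω.2
        simp only [hG, Set.mem_iInter, Set.mem_union, Set.mem_preimage,
          Set.mem_singleton_iff] at this
        exact this j
      have hlow : ∀ j, 1 ≤ j → j ≤ k + 1 → ε j = 1 := by
        intro j h1 h2
        have := (hEv_mem (k + 1) ω).mp hω.1 j h1 (by omega)
        rw [if_neg (by omega)] at this
        exact this
      have hα : ε (k + 1 + 1) = -1 := by
        have := (hEv_mem (k + 1) ω).mp hω.1 (k + 2) (by omega) (by omega)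
        simpa using this
      have hST : ∀ n, S n ω = T ε n := by
        intro n
        rw [hS n ω]
        rfl
      have hub : ∀ n, S n ω ≤ 2 ^ (k + 1) - 1 := by
        intro n
        rw [hST n]
        exact T_le ε hpm hlow hα n
      have hbdd : BddAbove (Set.range fun n => S n ω) := by
        refine ⟨2 ^ (k + 1) - 1, ?_⟩
        rintro x ⟨n, rfl⟩
        exact hub n
      have hval : S (2 ^ (k + 1) - 1) ω = (2 : ℝ) ^ (k + 1) - 1 := by
        rw [hST, T_val hlow]
        have h1 : (1 : ℕ) ≤ 2 ^ (k + 1) := Nat.one_le_two_pow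
        push_cast [Nat.cast_sub h1]
        ring
      have hle : (2 : ℝ) ^ (k + 1) - 1 ≤ ⨆ n : ℕ, S n ω := by
        rw [← hval]
        exact le_ciSup hbdd (2 ^ (k + 1) - 1)
      exact ENNReal.ofReal_le_ofReal hle
    -- the simple lower bound function
    set c : ℕ → ℝ≥0∞ := fun k => ENNReal.ofReal ((2 : ℝ) ^ (k + 1) - 1) with hc
    set g : Ω → ℝ≥0∞ := fun ω => ∑' k, Set.indicator (F k) (fun _ => c k) ω with hg
    have hg_le : g ≤ f := by
      intro ω
      by_cases hex : ∃ k, ω ∈ F k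
      · obtain ⟨k0, hk0⟩ := hex
        have h1 : g ω = c k0 := by
          have h2 : ∑' k, Set.indicator (F k) (fun _ => c k) ω
              = Set.indicator (F k0) (fun _ => c k0) ω :=
            tsum_eq_single k0 fun k hk =>
              Set.indicator_of_notMem (fun hmem => hF_disj k k0 hk ω hmem hk0) _
          show ∑' k, Set.indicator (F k) (fun _ => c k) ω = c k0
          rw [h2, Set.indicator_of_mem hk0]
        rw [h1]
        exact hsup k0 ω hk0
      · push_neg at hex
        have h1 : g ω = 0 := by
          rw [hg]
          convert tsum_zero with k
          exact Set.indicator_of_notMem (hex k) _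
        rw [h1]
        exact bot_le
    have hgl : ∫⁻ ω, g ω ∂μ = ∑' k, c k * μ (F k) := by
      rw [hg, lintegral_tsum (fun k => ((measurable_const).indicator (hF_meas k)).aemeasurable)]
      congr 1
      funext k
      rw [lintegral_indicator (hF_meas k), setLIntegral_const]
    have hterm : ∀ k, (1 / 4 : ℝ≥0∞) ≤ c k * μ (F k) := by
      intro k
      rw [hμF k, hc]
      have h1 : ((2 : ℝ≥0∞) ^ k) ≤ ENNReal.ofReal ((2 : ℝ) ^ (k + 1) - 1) := by
        have h2 : ((2 : ℝ) ^ k) ≤ (2 : ℝ) ^ (k + 1) - 1 := by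
          have : (1 : ℝ) ≤ 2 ^ k := one_le_pow₀ (by norm_num)
          rw [pow_succ]
          linarith
        calc ((2 : ℝ≥0∞) ^ k) = ENNReal.ofReal ((2 : ℝ) ^ k) := by
              rw [ENNReal.ofReal_pow (by norm_num)]
              norm_num
          _ ≤ _ := ENNReal.ofReal_le_ofReal h2
      calc (1 / 4 : ℝ≥0∞) = (2 : ℝ≥0∞) ^ k * (1 / 2) ^ (k + 2) := by
            rw [one_div, one_div, pow_add, ← mul_assoc, ← mul_pow,
              ENNReal.mul_inv_cancel (by norm_num) (by norm_num), one_pow, one_mul,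
              ← ENNReal.inv_pow]
            norm_num
        _ ≤ _ := mul_le_mul_left h1 _
    have htop : (⊤ : ℝ≥0∞) ≤ ∑' k, c k * μ (F k) := by
      calc (⊤ : ℝ≥0∞) = ∑' _ : ℕ, (1 / 4 : ℝ≥0∞) :=
            (ENNReal.tsum_const_eq_top_of_ne_zero (by norm_num)).symm
        _ ≤ _ := ENNReal.tsum_le_tsum hterm
    have : (⊤ : ℝ≥0∞) ≤ ∫⁻ ω, f ω ∂μ := by
      calc (⊤ : ℝ≥0∞) ≤ ∑' k, c k * μ (F k) := htop
        _ = ∫⁻ ω, g ω ∂μ := hgl.symm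
        _ ≤ ∫⁻ ω, f ω ∂μ := lintegral_mono hg_le
    exact top_le_iff.mp this
end

section
/- Let ξ₁, ξ₂, … be i.i.d. Rademacher variables, let k ≥ 1 and L > k with 4 | L. Let (X_i) be the sequence (ξ_i) conditioned on the event that ∏_{b=1}^L ξ_{aL+b} = 1 for every a ≥ 0. Then the X_i are k-wise independent ±1 variables, and for every j ≥ 1, ∑_{i=1}^{jL} X_i ≡ 0 (mod 4) almost surely. -/
open MeasureTheory ProbabilityTheory
open scoped ENNReal

section Aux

lemma sum_dvd_four {L : ℕ} (hL4 : 4 ∣ L) (v : Fin L → ℤ)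
    (hv : ∀ b, v b = 1 ∨ v b = -1) (hprod : ∏ b, v b = 1) :
    (4 : ℤ) ∣ ∑ b, v b := by
  classical
  set F := Finset.univ.filter (fun b => v b = -1) with hF
  set G := Finset.univ.filter (fun b => ¬ v b = -1) with hG
  have hprodF : ∏ b ∈ F, v b = (-1 : ℤ) ^ F.card := by
    rw [Finset.prod_congr rfl (fun b hb => (Finset.mem_filter.1 hb).2)]
    simp [hF]
  have hprodG : ∏ b ∈ G, v b = 1 := by
    apply Finset.prod_eq_one
    intro b hb
    rcases hv b with h | h
    · exact h
    · exact absurd h (Finset.mem_filter.1 hb).2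
  have hsplit : (∏ b ∈ F, v b) * ∏ b ∈ G, v b = 1 := by
    rw [hF, hG, Finset.prod_filter_mul_prod_filter_not]
    exact hprod
  have heven : Even F.card := by
    rw [hprodF, hprodG, mul_one] at hsplit
    exact (neg_one_pow_eq_one_iff_even (by norm_num : (-1 : ℤ) ≠ 1)).1 hsplit
  have hsumF : ∑ b ∈ F, v b = -(F.card : ℤ) := by
    rw [Finset.sum_congr rfl (fun b hb => (Finset.mem_filter.1 hb).2)]
    simp [hF]
  have hsumG : ∑ b ∈ G, v b = (G.card : ℤ) := by
    rw [Finset.sum_congr rfl (fun b hb => (hv b).resolve_right (Finset.mem_filter.1 hb).2)]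
    simp [hG]
  have hsum : ∑ b, v b = -(F.card : ℤ) + (G.card : ℤ) := by
    rw [← hsumF, ← hsumG, hF, hG, Finset.sum_filter_add_sum_filter_not]
  have hcards : F.card + G.card = L := by
    rw [hF, hG, Finset.card_filter_add_card_filter_not, Finset.card_univ,
      Fintype.card_fin]
  rw [hsum]
  rw [Nat.even_iff] at heven
  omega

variable {Ω : Type*} [MeasurableSpace Ω] {μ : Measure Ω} {L : ℕ} {X : ℕ → Ω → ℤ}

lemma event_measurable (hmeas : ∀ i, Measurable (X i)) (a : ℕ) (B : Finset (Fin L))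
    (ε : Fin L → ℤ) :
    MeasurableSet {ω | ∀ b ∈ B, X (a * L + b) ω = ε b} := by
  have h : {ω | ∀ b ∈ B, X (a * L + b) ω = ε b} =
      ⋂ b ∈ B, X (a * L + (b : ℕ)) ⁻¹' {ε b} := by
    ext ω; simp
  rw [h]
  exact MeasurableSet.biInter (B : Set (Fin L)).to_countable
    (fun b _ => (hmeas _) (measurableSet_singleton _))

lemma prod_pm_one {ε : Fin L → ℤ} (hε : ∀ b, ε b = 1 ∨ ε b = -1) (B : Finset (Fin L)) :
    (∏ b ∈ B, ε b) = 1 ∨ (∏ b ∈ B, ε b) = -1 := by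
  refine Finset.prod_induction ε (fun x => x = 1 ∨ x = -1) ?_ (Or.inl rfl)
    (fun b _ => hε b)
  rintro x y (rfl | rfl) (rfl | rfl) <;> norm_num

lemma block_lemma [IsProbabilityMeasure μ]
    (hmeas : ∀ i, Measurable (X i))
    (hrange : ∀ i ω, X i ω = 1 ∨ X i ω = -1)
    (hblockdist : ∀ a : ℕ, ∀ v : Fin L → ℤ, (∀ b, v b = 1 ∨ v b = -1) →
      μ {ω | ∀ b : Fin L, X (a * L + b) ω = v b} =
        if (∏ b, v b) = 1 then (2 : ℝ≥0∞)⁻¹ ^ (L - 1) else 0) :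
    ∀ (m a : ℕ) (B : Finset (Fin L)) (ε : Fin L → ℤ),
      (∀ b, ε b = 1 ∨ ε b = -1) → B.card + (m + 1) = L →
      μ {ω | ∀ b ∈ B, X (a * L + b) ω = ε b} = (2 : ℝ≥0∞)⁻¹ ^ B.card := by
  classical
  intro m
  induction m with
  | zero =>
    intro a B ε hε hcard
    have hcompl : Bᶜ.card = 1 := by
      rw [Finset.card_compl, Fintype.card_fin]; omega
    obtain ⟨b0, hb0⟩ := Finset.card_eq_one.1 hcompl
    have hb0B : b0 ∉ B := by
      have : b0 ∈ Bᶜ := by rw [hb0]; exact Finset.mem_singleton_self b0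
      simpa using this
    have hmemB : ∀ b : Fin L, b ≠ b0 → b ∈ B := by
      intro b hb
      by_contra hbB
      have : b ∈ Bᶜ := Finset.mem_compl.2 hbB
      rw [hb0, Finset.mem_singleton] at this
      exact hb this
    set v1 : Fin L → ℤ := Function.update ε b0 1 with hv1
    set v2 : Fin L → ℤ := Function.update ε b0 (-1) with hv2
    have hU : {ω | ∀ b ∈ B, X (a * L + b) ω = ε b} =
        {ω | ∀ b : Fin L, X (a * L + b) ω = v1 b} ∪
        {ω | ∀ b : Fin L, X (a * L + b) ω = v2 b} := by
      ext ω
      constructor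
      · intro h
        rcases hrange (a * L + b0) ω with h0 | h0
        · left; intro b
          by_cases hb : b = b0
          · subst hb; rw [hv1, Function.update_self]; exact h0
          · rw [hv1, Function.update_of_ne hb]; exact h b (hmemB b hb)
        · right; intro b
          by_cases hb : b = b0
          · subst hb; rw [hv2, Function.update_self]; exact h0
          · rw [hv2, Function.update_of_ne hb]; exact h b (hmemB b hb)
      · rintro (h | h) b hb
        · have hbne : b ≠ b0 := fun he => hb0B (he ▸ hb)
          rw [← Function.update_of_ne hbne 1 ε]; exact h b
        · have hbne : b ≠ b0 := fun he => hb0B (he ▸ hb)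
          rw [← Function.update_of_ne hbne (-1) ε]; exact h b
    have hdisj : Disjoint {ω | ∀ b : Fin L, X (a * L + b) ω = v1 b}
        {ω | ∀ b : Fin L, X (a * L + b) ω = v2 b} := by
      rw [Set.disjoint_left]
      intro ω h1 h2
      have e1 := h1 b0
      have e2 := h2 b0
      rw [hv1, Function.update_self] at e1
      rw [hv2, Function.update_self] at e2
      rw [e1] at e2
      norm_num at e2
    have hmeas2 : MeasurableSet {ω | ∀ b : Fin L, X (a * L + b) ω = v2 b} := by
      have := event_measurable hmeas a Finset.univ v2
      simpa using this
    have hBerase : Finset.univ.erase b0 = B := by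
      ext b
      simp only [Finset.mem_erase, Finset.mem_univ, and_true]
      constructor
      · exact fun h => hmemB b h
      · intro hb he; exact hb0B (he ▸ hb)
    have hprod1 : (∏ b, v1 b) = ∏ b ∈ B, ε b := by
      rw [← Finset.mul_prod_erase Finset.univ v1 (Finset.mem_univ b0), hBerase,
        hv1, Function.update_self, one_mul]
      exact Finset.prod_congr rfl fun b hb =>
        Function.update_of_ne (fun he => hb0B (by rw [← he]; exact hb)) _ _
    have hprod2 : (∏ b, v2 b) = -(∏ b ∈ B, ε b) := by
      rw [← Finset.mul_prod_erase Finset.univ v2 (Finset.mem_univ b0), hBerase,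
        hv2, Function.update_self]
      rw [neg_one_mul]
      congr 1
      exact Finset.prod_congr rfl fun b hb =>
        Function.update_of_ne (fun he => hb0B (by rw [← he]; exact hb)) _ _
    have hcard' : B.card = L - 1 := by omega
    rw [hU, measure_union hdisj hmeas2,
      hblockdist a v1 (fun b => by
        by_cases hb : b = b0
        · subst hb; rw [hv1, Function.update_self]; left; rfl
        · rw [hv1, Function.update_of_ne hb]; exact hε b),
      hblockdist a v2 (fun b => by
        by_cases hb : b = b0
        · subst hb; rw [hv2, Function.update_self]; right; rfl
        · rw [hv2, Function.update_of_ne hb]; exact hε b),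
      hprod1, hprod2, hcard']
    rcases prod_pm_one hε B with hP | hP <;> rw [hP] <;> norm_num
  | succ m ih =>
    intro a B ε hε hcard
    have hBne : ∃ b0, b0 ∉ B := by
      by_contra h
      push_neg at h
      have : B = Finset.univ := Finset.eq_univ_iff_forall.2 h
      rw [this, Finset.card_univ, Fintype.card_fin] at hcard
      omega
    obtain ⟨b0, hb0B⟩ := hBne
    set v1 : Fin L → ℤ := Function.update ε b0 1 with hv1
    set v2 : Fin L → ℤ := Function.update ε b0 (-1) with hv2
    have hU : {ω | ∀ b ∈ B, X (a * L + b) ω = ε b} =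
        {ω | ∀ b ∈ insert b0 B, X (a * L + b) ω = v1 b} ∪
        {ω | ∀ b ∈ insert b0 B, X (a * L + b) ω = v2 b} := by
      ext ω
      constructor
      · intro h
        rcases hrange (a * L + b0) ω with h0 | h0
        · left; intro b hb
          rcases Finset.mem_insert.1 hb with rfl | hbB
          · rw [hv1, Function.update_self]; exact h0
          · have hbne : b ≠ b0 := fun he => hb0B (he ▸ hbB)
            rw [hv1, Function.update_of_ne hbne]; exact h b hbB
        · right; intro b hb
          rcases Finset.mem_insert.1 hb with rfl | hbB
          · rw [hv2, Function.update_self]; exact h0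
          · have hbne : b ≠ b0 := fun he => hb0B (he ▸ hbB)
            rw [hv2, Function.update_of_ne hbne]; exact h b hbB
      · rintro (h | h) b hb
        · have hbne : b ≠ b0 := fun he => hb0B (he ▸ hb)
          rw [← Function.update_of_ne hbne 1 ε]
          exact h b (Finset.mem_insert_of_mem hb)
        · have hbne : b ≠ b0 := fun he => hb0B (he ▸ hb)
          rw [← Function.update_of_ne hbne (-1) ε]
          exact h b (Finset.mem_insert_of_mem hb)
    have hdisj : Disjoint {ω | ∀ b ∈ insert b0 B, X (a * L + b) ω = v1 b}
        {ω | ∀ b ∈ insert b0 B, X (a * L + b) ω = v2 b} := by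
      rw [Set.disjoint_left]
      intro ω h1 h2
      have e1 := h1 b0 (Finset.mem_insert_self b0 B)
      have e2 := h2 b0 (Finset.mem_insert_self b0 B)
      rw [hv1, Function.update_self] at e1
      rw [hv2, Function.update_self] at e2
      rw [e1] at e2
      norm_num at e2
    have hcardins : (insert b0 B).card = B.card + 1 :=
      Finset.card_insert_of_notMem hb0B
    have hv1pm : ∀ b, v1 b = 1 ∨ v1 b = -1 := fun b => by
      by_cases hb : b = b0
      · subst hb; rw [hv1, Function.update_self]; left; rfl
      · rw [hv1, Function.update_of_ne hb]; exact hε b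
    have hv2pm : ∀ b, v2 b = 1 ∨ v2 b = -1 := fun b => by
      by_cases hb : b = b0
      · subst hb; rw [hv2, Function.update_self]; right; rfl
      · rw [hv2, Function.update_of_ne hb]; exact hε b
    have h1 := ih a (insert b0 B) v1 hv1pm (by omega)
    have h2 := ih a (insert b0 B) v2 hv2pm (by omega)
    rw [hU, measure_union hdisj (event_measurable hmeas a _ v2), h1, h2, hcardins]
    rw [pow_succ, ← mul_add, ENNReal.inv_two_add_inv_two, mul_one]

end Aux
section Cross

variable {Ω : Type*} [MeasurableSpace Ω] {μ : Measure Ω} {L : ℕ} {X : ℕ → Ω → ℤ}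

lemma cross_lemma [IsProbabilityMeasure μ] (hL : 0 < L)
    (hmeas : ∀ i, Measurable (X i))
    (hrange : ∀ i ω, X i ω = 1 ∨ X i ω = -1)
    (hblockindep : iIndepFun
      (fun a ω => fun b : Fin L => X (a * L + b) ω) μ)
    (hblockdist : ∀ a : ℕ, ∀ v : Fin L → ℤ, (∀ b, v b = 1 ∨ v b = -1) →
      μ {ω | ∀ b : Fin L, X (a * L + b) ω = v b} =
        if (∏ b, v b) = 1 then (2 : ℝ≥0∞)⁻¹ ^ (L - 1) else 0)
    (t : Finset ℕ) (ε : ℕ → ℤ) (hε : ∀ i, ε i = 1 ∨ ε i = -1)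
    (hfib : ∀ a : ℕ, ((t.filter fun i => i / L = a)).card < L) :
    μ {ω | ∀ i ∈ t, X i ω = ε i} = (2 : ℝ≥0∞)⁻¹ ^ t.card := by
  classical
  set A : Finset ℕ := t.image (· / L) with hA
  set Ba : ℕ → Finset (Fin L) := fun a => Finset.univ.filter (fun b => a * L + (b : ℕ) ∈ t)
    with hBa
  set sets : ℕ → Set (Fin L → ℤ) :=
    fun a => ⋂ b ∈ Ba a, (fun f : Fin L → ℤ => f b) ⁻¹' {ε (a * L + (b : ℕ))} with hsets
  have hsetsmeas : ∀ a ∈ A, MeasurableSet (sets a) := by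
    intro a _
    exact MeasurableSet.biInter ((Ba a : Set (Fin L)).to_countable)
      (fun b _ => (measurable_pi_apply b) (measurableSet_singleton _))
  have hpre : ∀ a : ℕ, (fun ω => fun b : Fin L => X (a * L + b) ω) ⁻¹' sets a =
      {ω | ∀ b ∈ Ba a, X (a * L + (b : ℕ)) ω = ε (a * L + (b : ℕ))} := by
    intro a
    ext ω
    simp [hsets]
  have hdecomp : {ω | ∀ i ∈ t, X i ω = ε i} =
      ⋂ a ∈ A, (fun ω => fun b : Fin L => X (a * L + b) ω) ⁻¹' sets a := by
    ext ω
    simp only [Set.mem_setOf_eq, Set.mem_iInter, hpre, Finset.mem_filter, Finset.mem_univ,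
      true_and, hBa]
    constructor
    · intro h a _ b hb
      exact h _ hb
    · intro h i hi
      have haA : i / L ∈ A := Finset.mem_image_of_mem _ hi
      have hbdef : (i / L) * L + ((⟨i % L, Nat.mod_lt i hL⟩ : Fin L) : ℕ) = i := by
        show i / L * L + i % L = i
        rw [Nat.mul_comm]
        exact Nat.div_add_mod i L
      have := h (i / L) haA ⟨i % L, Nat.mod_lt i hL⟩ (by rw [hbdef]; exact hi)
      rw [hbdef] at this
      exact this
  have hcardBa : ∀ a : ℕ, (Ba a).card = ((t.filter fun i => i / L = a)).card := by
    intro a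
    refine Finset.card_bij' (fun b _ => a * L + (b : ℕ))
      (fun i _ => (⟨i % L, Nat.mod_lt i hL⟩ : Fin L)) ?_ ?_ ?_ ?_
    · intro b hb
      rw [hBa] at hb
      simp only [Finset.mem_filter, Finset.mem_univ, true_and] at hb
      refine Finset.mem_filter.2 ⟨hb, ?_⟩
      rw [Nat.mul_comm, Nat.mul_add_div hL, Nat.div_eq_of_lt b.isLt, add_zero]
    · intro i hi
      rw [Finset.mem_filter] at hi
      rw [hBa]
      simp only [Finset.mem_filter, Finset.mem_univ, true_and]
      have : a * L + i % L = i := by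
        rw [← hi.2, Nat.mul_comm]
        exact Nat.div_add_mod i L
      rw [this]
      exact hi.1
    · intro b hb
      apply Fin.ext
      show (a * L + (b : ℕ)) % L = (b : ℕ)
      rw [add_comm, Nat.add_mul_mod_self_right, Nat.mod_eq_of_lt b.isLt]
    · intro i hi
      rw [Finset.mem_filter] at hi
      show a * L + i % L = i
      rw [← hi.2, Nat.mul_comm]
      exact Nat.div_add_mod i L
  have hfibBa : ∀ a : ℕ, (Ba a).card < L := fun a => (hcardBa a) ▸ hfib a
  rw [hdecomp, hblockindep.measure_inter_preimage_eq_mul A hsetsmeas]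
  have hblocks : ∀ a ∈ A, μ ((fun ω => fun b : Fin L => X (a * L + b) ω) ⁻¹' sets a)
      = (2 : ℝ≥0∞)⁻¹ ^ (Ba a).card := by
    intro a _
    rw [hpre a]
    exact block_lemma hmeas hrange hblockdist (L - 1 - (Ba a).card) a (Ba a)
      (fun b => ε (a * L + (b : ℕ))) (fun b => hε _) (by have := hfibBa a; omega)
  rw [Finset.prod_congr rfl hblocks, Finset.prod_pow_eq_pow_sum]
  congr 1
  rw [Finset.card_eq_sum_card_fiberwise
    (fun i hi => Finset.mem_image_of_mem _ hi : ∀ i ∈ t, i / L ∈ A)]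
  exact Finset.sum_congr rfl fun a _ => hcardBa a

end Cross
section Main

variable {Ω : Type*} [MeasurableSpace Ω] {μ : Measure Ω} {L : ℕ} {X : ℕ → Ω → ℤ}

lemma marginal_lemma [IsProbabilityMeasure μ] (hL : 1 < L)
    (hmeas : ∀ i, Measurable (X i))
    (hrange : ∀ i ω, X i ω = 1 ∨ X i ω = -1)
    (hblockindep : iIndepFun
      (fun a ω => fun b : Fin L => X (a * L + b) ω) μ)
    (hblockdist : ∀ a : ℕ, ∀ v : Fin L → ℤ, (∀ b, v b = 1 ∨ v b = -1) →
      μ {ω | ∀ b : Fin L, X (a * L + b) ω = v b} =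
        if (∏ b, v b) = 1 then (2 : ℝ≥0∞)⁻¹ ^ (L - 1) else 0)
    (n : ℕ) (e : ℤ) (he : e = 1 ∨ e = -1) :
    μ {ω | X n ω = e} = (2 : ℝ≥0∞)⁻¹ := by
  have h := cross_lemma (Nat.lt_of_lt_of_le Nat.one_pos hL.le) hmeas hrange hblockindep
    hblockdist {n} (fun _ => e) (fun _ => he)
    (fun a => lt_of_le_of_lt (Finset.card_filter_le _ _) (by simpa using hL))
  simpa using h

end Main

/-- Let `4 ∣ L`, `k < L`, and let `(X_i)_{i ≥ 0}` be distributed as i.i.d.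
Rademacher variables conditioned on every block of length `L` having product
`1` (formally: the blocks `(X_{aL}, …, X_{aL+L-1})` are independent and each is
distributed as `L` i.i.d. Rademacher variables conditioned on their product
being `1`, i.e. each admissible sign pattern has probability `2^{-(L-1)}`).
Then the `X_i` are `k`-wise independent Rademacher variables, and every partial
sum up to a multiple of `L` is `≡ 0 (mod 4)` almost surely. -/
theorem conditioned_blocks_kwise_independent_mod_four
    {Ω : Type*} [MeasurableSpace Ω] (μ : Measure Ω) [IsProbabilityMeasure μ]
    (k L : ℕ) (hk : 0 < k) (hkL : k < L) (hL4 : 4 ∣ L)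
    (X : ℕ → Ω → ℤ) (hmeas : ∀ i, Measurable (X i))
    (hrange : ∀ i ω, X i ω = 1 ∨ X i ω = -1)
    (hblockindep : iIndepFun
      (fun a ω => fun b : Fin L => X (a * L + b) ω) μ)
    (hblockdist : ∀ a : ℕ, ∀ v : Fin L → ℤ, (∀ b, v b = 1 ∨ v b = -1) →
      μ {ω | ∀ b : Fin L, X (a * L + b) ω = v b} =
        if (∏ b, v b) = 1 then (2 : ℝ≥0∞)⁻¹ ^ (L - 1) else 0) :
    (∀ s : Finset ℕ, s.card ≤ k →
      iIndepFun (fun i : s => X i) μ) ∧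
    (∀ i, μ {ω | X i ω = 1} = 1/2) ∧
    (∀ j : ℕ, 1 ≤ j →
      ∀ᵐ ω ∂μ, (4 : ℤ) ∣ ∑ i ∈ Finset.range (j * L), X i ω) := by
  classical
  have hL : 1 < L := lt_of_le_of_lt hk hkL
  have hL0 : 0 < L := Nat.lt_of_lt_of_le Nat.one_pos hL.le
  refine ⟨?_, ?_, ?_⟩
  · -- k-wise independence
    intro s hs
    rw [iIndepFun_iff_measure_inter_preimage_eq_mul]
    intro S sets hsets
    by_cases hbad : ∃ i ∈ S, (1 : ℤ) ∉ sets i ∧ (-1 : ℤ) ∉ sets i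
    · obtain ⟨i0, hi0S, h1, h2⟩ := hbad
      have hempty : (fun i : s => X (i : ℕ)) i0 ⁻¹' sets i0 = ∅ := by
        ext ω
        simp only [Set.mem_preimage, Set.mem_empty_iff_false, iff_false]
        intro hmem
        rcases hrange (i0 : ℕ) ω with h | h <;> rw [h] at hmem
        · exact h1 hmem
        · exact h2 hmem
      have hzero : μ ((fun i : s => X (i : ℕ)) i0 ⁻¹' sets i0) = 0 := by
        rw [hempty]; exact measure_empty
      rw [Finset.prod_eq_zero hi0S hzero]
      refine measure_mono_null ?_ hzero
      intro ω hω
      rw [Set.mem_iInter₂] at hω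
      exact hω i0 hi0S
    · push_neg at hbad
      set p : s → Prop := fun i => ¬((1 : ℤ) ∈ sets i ∧ (-1 : ℤ) ∈ sets i) with hp
      set T : Finset s := S.filter p with hT
      set ε : ℕ → ℤ :=
        fun n => if h : ∃ hn : n ∈ s, (1 : ℤ) ∈ sets ⟨n, hn⟩ then 1 else -1 with hε
      have hεcoe : ∀ i : s, ε (i : ℕ) = if (1 : ℤ) ∈ sets i then 1 else -1 := by
        intro i
        by_cases h1 : (1 : ℤ) ∈ sets i
        · rw [if_pos h1, hε]
          refine dif_pos ⟨i.2, ?_⟩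
          have : (⟨(i : ℕ), i.2⟩ : s) = i := Subtype.ext rfl
          rwa [this]
        · rw [if_neg h1, hε]
          refine dif_neg ?_
          rintro ⟨hn, hmem⟩
          apply h1
          have : (⟨(i : ℕ), hn⟩ : s) = i := Subtype.ext rfl
          rwa [this] at hmem
      have hεpm : ∀ n, ε n = 1 ∨ ε n = -1 := fun n => by
        rw [hε]; dsimp only; split
        · exact Or.inl rfl
        · exact Or.inr rfl
      have hpreT : ∀ i ∈ T, (X (i : ℕ)) ⁻¹' sets i = {ω | X (i : ℕ) ω = ε (i : ℕ)} := by
        intro i hiT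
        rw [hT, Finset.mem_filter] at hiT
        obtain ⟨hiS, hip⟩ := hiT
        by_cases h1 : (1 : ℤ) ∈ sets i
        · have h2 : (-1 : ℤ) ∉ sets i := fun h => hip ⟨h1, h⟩
          ext ω
          simp only [Set.mem_preimage, Set.mem_setOf_eq, hεcoe i, if_pos h1]
          rcases hrange (i : ℕ) ω with h | h <;> rw [h]
          · simp [h1]
          · simp [h2]
        · have h2 : (-1 : ℤ) ∈ sets i := hbad i hiS h1
          ext ω
          simp only [Set.mem_preimage, Set.mem_setOf_eq, hεcoe i, if_neg h1]
          rcases hrange (i : ℕ) ω with h | h <;> rw [h]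
          · simp [h1]
          · simp [h2]
      have hpreU : ∀ i ∈ S, ¬ p i → (X (i : ℕ)) ⁻¹' sets i = Set.univ := by
        intro i _ hip
        obtain ⟨h1, h2⟩ := not_not.1 hip
        ext ω
        simp only [Set.mem_preimage, Set.mem_univ, iff_true]
        rcases hrange (i : ℕ) ω with h | h <;> rw [h] <;> assumption
      have hset : (⋂ i ∈ S, (fun i : s => X (i : ℕ)) i ⁻¹' sets i)
          = {ω | ∀ n ∈ T.image (fun i : s => (i : ℕ)), X n ω = ε n} := by
        ext ω
        rw [Set.mem_iInter₂]
        constructor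
        · intro h n hn
          rw [Finset.mem_image] at hn
          obtain ⟨i, hiT, rfl⟩ := hn
          have hmem := h i (Finset.mem_of_mem_filter i hiT)
          rw [hpreT i hiT] at hmem
          exact hmem
        · intro h i hiS
          by_cases hip : p i
          · have hiT : i ∈ T := Finset.mem_filter.2 ⟨hiS, hip⟩
            rw [hpreT i hiT]
            exact h (i : ℕ) (Finset.mem_image_of_mem _ hiT)
          · rw [hpreU i hiS hip]; exact Set.mem_univ ω
      have hcardT : (T.image (fun i : s => (i : ℕ))).card = T.card :=
        Finset.card_image_of_injective T Subtype.coe_injective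
      have hcardk : (T.image (fun i : s => (i : ℕ))).card ≤ k := by
        rw [hcardT]
        calc T.card ≤ S.card := Finset.card_filter_le _ _
          _ ≤ Fintype.card s := Finset.card_le_univ S
          _ = s.card := Fintype.card_coe s
          _ ≤ k := hs
      have hlhs := cross_lemma hL0 hmeas hrange hblockindep hblockdist
        (T.image (fun i : s => (i : ℕ))) ε hεpm
        (fun a => lt_of_le_of_lt (le_trans (Finset.card_filter_le _ _) hcardk) hkL)
      rw [hset, hlhs, hcardT]
      have hhalf : ∀ i ∈ S.filter p, μ ((fun i : s => X (i : ℕ)) i ⁻¹' sets i)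
          = (2 : ℝ≥0∞)⁻¹ := by
        intro i hiT
        rw [← hT] at hiT
        show μ (X (i : ℕ) ⁻¹' sets i) = (2 : ℝ≥0∞)⁻¹
        rw [hpreT i hiT]
        exact marginal_lemma hL hmeas hrange hblockindep hblockdist (i : ℕ)
          (ε (i : ℕ)) (hεpm _)
      have hone : ∀ i ∈ S.filter (fun i => ¬ p i),
          μ ((fun i : s => X (i : ℕ)) i ⁻¹' sets i) = 1 := by
        intro i hi
        rw [Finset.mem_filter] at hi
        show μ (X (i : ℕ) ⁻¹' sets i) = 1
        rw [hpreU i hi.1 hi.2]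
        exact measure_univ
      rw [← Finset.prod_filter_mul_prod_filter_not S p,
        Finset.prod_congr rfl hhalf, Finset.prod_congr rfl hone,
        Finset.prod_const, Finset.prod_const_one, mul_one, hT]
  · -- marginals
    intro i
    rw [marginal_lemma hL hmeas hrange hblockindep hblockdist i 1 (Or.inl rfl), one_div]
  · -- mod 4
    have hgood : ∀ᵐ ω ∂μ, ∀ a : ℕ, (∏ b : Fin L, X (a * L + b) ω) = 1 := by
      rw [ae_all_iff]
      intro a
      rw [ae_iff]
      set E : (Fin L → Bool) → Set Ω := fun c =>
        {ω | (∀ b : Fin L, X (a * L + b) ω = (if c b then 1 else -1)) ∧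
          (∏ b : Fin L, (if c b then (1 : ℤ) else -1)) ≠ 1} with hE
      have hsub : {ω | ¬ (∏ b : Fin L, X (a * L + b) ω) = 1} ⊆ ⋃ c, E c := by
        intro ω hω
        simp only [Set.mem_setOf_eq] at hω
        refine Set.mem_iUnion.2 ⟨fun b => decide (X (a * L + b) ω = 1), ?_, ?_⟩
        · intro b
          rcases hrange (a * L + b) ω with h | h <;> simp [h]
        · have hcongr : ∀ b : Fin L,
              (if decide (X (a * L + b) ω = 1) then (1 : ℤ) else -1) = X (a * L + b) ω := by
            intro b
            rcases hrange (a * L + b) ω with h | h <;> simp [h]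
          rw [Finset.prod_congr rfl (fun b _ => hcongr b)]
          exact hω
      have hEnull : ∀ c, μ (E c) = 0 := by
        intro c
        by_cases hc : (∏ b : Fin L, (if c b then (1 : ℤ) else -1)) = 1
        · have : E c = ∅ := by
            ext ω; simp [hE, hc]
          rw [this]; exact measure_empty
        · refine measure_mono_null (fun ω h => h.1) ?_
          have hd := hblockdist a (fun b => if c b then (1 : ℤ) else -1)
            (fun b => by by_cases h : c b <;> simp [h])
          rw [if_neg hc] at hd
          exact hd
      exact measure_mono_null hsub (measure_iUnion_null hEnull)
    intro j hj
    filter_upwards [hgood] with ω hω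
    clear hj
    induction j with
    | zero => simp
    | succ j ih =>
      have hstep : (j + 1) * L = j * L + L := by ring
      rw [hstep, Finset.sum_range_add]
      refine dvd_add ih ?_
      have hsum : ∑ i ∈ Finset.range L, X (j * L + i) ω
          = ∑ b : Fin L, X (j * L + (b : ℕ)) ω :=
        (Fin.sum_univ_eq_sum_range (fun i => X (j * L + i) ω) L).symm
      rw [hsum]
      exact sum_dvd_four hL4 (fun b => X (j * L + (b : ℕ)) ω) (fun b => hrange _ ω) (hω j)
end

section
/- Let m be even, N a positive even integer, and A = min over even residues j of #{v ∈ {±1}^N : ∑ v_i ≡ j (mod m)}. Then 2^N − (m/2)·A ≤ C·2^N·e^{−cN/m²} for absolute constants c, C > 0. -/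
open Finset

open Complex in

lemma sum_exp_filter (m : ℕ) (hm : 0 < m) (s : ℤ) :
    ∑ k ∈ Finset.range m, Complex.exp (2 * (Real.pi:ℂ) * Complex.I * s * k / m) =
      if (m:ℤ) ∣ s then (m:ℂ) else 0 := by
  have hm0 : (m:ℂ) ≠ 0 := Nat.cast_ne_zero.mpr hm.ne'
  have hpi : (2 * (Real.pi:ℂ) * Complex.I) ≠ 0 := by
    simp [Complex.I_ne_zero, Complex.ofReal_ne_zero, Real.pi_ne_zero]
  have h : ∀ k : ℕ, Complex.exp (2 * (Real.pi:ℂ) * Complex.I * s * k / m)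
      = Complex.exp (2 * (Real.pi:ℂ) * Complex.I * s / m) ^ k := by
    intro k
    rw [← Complex.exp_nat_mul]
    ring_nf
  simp_rw [h]
  set z := Complex.exp (2 * (Real.pi:ℂ) * Complex.I * s / m) with hz
  by_cases hd : (m:ℤ) ∣ s
  · have hz1 : z = 1 := by
      obtain ⟨t, ht⟩ := hd
      have hs : (s:ℂ) = (m:ℂ) * (t:ℂ) := by exact_mod_cast congrArg (Int.cast : ℤ → ℂ) ht
      have : (2 * (Real.pi:ℂ) * Complex.I * s / m) = t * (2 * (Real.pi:ℂ) * Complex.I) := by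
        rw [hs]; field_simp
      rw [hz, this]
      exact Complex.exp_int_mul_two_pi_mul_I t
    simp [hz1, hd]
  · have hzne : z ≠ 1 := by
      intro h1
      rw [hz, Complex.exp_eq_one_iff] at h1
      obtain ⟨n, hn⟩ := h1
      apply hd
      refine ⟨n, ?_⟩
      have h3 : (2 * (Real.pi:ℂ) * Complex.I) * ((s:ℂ)/m) = (2 * (Real.pi:ℂ) * Complex.I) * n := by
        linear_combination hn
      have h4 : (s:ℂ)/m = n := mul_left_cancel₀ hpi h3
      have h5 : (s:ℂ) = (m:ℂ) * n := by
        field_simp at h4; linear_combination h4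
      exact_mod_cast h5
    rw [geom_sum_eq hzne]
    have hzm : z ^ m = 1 := by
      rw [hz, ← Complex.exp_nat_mul]
      have : (m:ℂ) * (2 * (Real.pi:ℂ) * Complex.I * s / m) = s * (2 * (Real.pi:ℂ) * Complex.I) := by
        field_simp
      rw [this]
      exact Complex.exp_int_mul_two_pi_mul_I s
    simp [hzm, hd]

open Complex in

lemma count_complex (N m : ℕ) (hm : 0 < m) (j : ℕ) :
    (m : ℂ) * ((Finset.univ.filter (fun σ : Fin N → Bool =>
        (m : ℤ) ∣ ((∑ i, if σ i then (1:ℤ) else -1) - (j:ℤ)))).card : ℂ)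
    = ∑ k ∈ Finset.range m,
        Complex.exp ((-(2 * Real.pi * j * k / m) : ℝ) * Complex.I) *
          (((2 * Real.cos (2 * Real.pi * k / m) : ℝ) : ℂ)) ^ N := by
  have hm0 : (m:ℂ) ≠ 0 := Nat.cast_ne_zero.mpr hm.ne'
  -- step 1: LHS as a sum of indicators
  have step1 : (m : ℂ) * ((Finset.univ.filter (fun σ : Fin N → Bool =>
        (m : ℤ) ∣ ((∑ i, if σ i then (1:ℤ) else -1) - (j:ℤ)))).card : ℂ)
      = ∑ σ : Fin N → Bool,
          if (m : ℤ) ∣ ((∑ i, if σ i then (1:ℤ) else -1) - (j:ℤ)) then (m:ℂ) else 0 := by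
    rw [Finset.sum_ite, Finset.sum_const, Finset.sum_const_zero, add_zero, nsmul_eq_mul,
      mul_comm]
  rw [step1]
  -- step 2: indicator as exponential sum, swap
  have step2 : ∀ σ : Fin N → Bool,
      (if (m : ℤ) ∣ ((∑ i, if σ i then (1:ℤ) else -1) - (j:ℤ)) then (m:ℂ) else 0)
      = ∑ k ∈ Finset.range m,
          Complex.exp (2 * (Real.pi:ℂ) * Complex.I *
            (((∑ i, if σ i then (1:ℤ) else -1) - (j:ℤ)) : ℤ) * k / m) := by
    intro σ
    rw [sum_exp_filter m hm]
  simp_rw [step2]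
  rw [Finset.sum_comm]
  refine Finset.sum_congr rfl ?_
  intro k _
  -- now fix k; compute inner sum over σ
  have split : ∀ σ : Fin N → Bool,
      Complex.exp (2 * (Real.pi:ℂ) * Complex.I *
            (((∑ i, if σ i then (1:ℤ) else -1) - (j:ℤ)) : ℤ) * k / m)
      = Complex.exp ((-(2 * Real.pi * j * k / m) : ℝ) * Complex.I) *
        ∏ i : Fin N, (if σ i then Complex.exp (((2 * Real.pi * k / m : ℝ)) * Complex.I)
          else Complex.exp ((-(2 * Real.pi * k / m : ℝ)) * Complex.I)) := by
    intro σ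
    have prodeq : ∏ i : Fin N, (if σ i then Complex.exp (((2 * Real.pi * k / m : ℝ)) * Complex.I)
          else Complex.exp ((-(2 * Real.pi * k / m : ℝ)) * Complex.I))
        = Complex.exp (∑ i : Fin N, (((if σ i then (1:ℤ) else -1) : ℤ) : ℂ) *
            (((2 * Real.pi * k / m : ℝ)) * Complex.I)) := by
      rw [Complex.exp_sum]
      refine Finset.prod_congr rfl ?_
      intro i _
      by_cases h : σ i <;> simp [h]
    rw [prodeq, ← Complex.exp_add]
    congr 1
    push_cast
    rw [← Finset.sum_mul]
    ring
  simp_rw [split]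
  rw [← Finset.mul_sum]
  congr 1
  -- ∑ over σ of product = (exp + exp)^N
  have : ∑ σ : Fin N → Bool, ∏ i : Fin N,
      (if σ i then Complex.exp (((2 * Real.pi * k / m : ℝ)) * Complex.I)
          else Complex.exp ((-(2 * Real.pi * k / m : ℝ)) * Complex.I))
      = ∏ i : Fin N, ∑ b : Bool, (if b then Complex.exp (((2 * Real.pi * k / m : ℝ)) * Complex.I)
          else Complex.exp ((-(2 * Real.pi * k / m : ℝ)) * Complex.I)) := by
    rw [Finset.prod_univ_sum]
    rw [← Fintype.piFinset_univ]
  rw [this]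
  rw [Finset.prod_const, Finset.card_univ, Fintype.card_fin]
  congr 1
  rw [Fintype.sum_bool]
  simp only [if_true, if_false]
  push_cast
  rw [← Complex.two_cos]

lemma cos_le_exp_aux {x : ℝ} (h0 : 0 ≤ x) (h2 : x ≤ Real.pi/2) :
    Real.cos x ≤ Real.exp (-(x^2/8)) := by
  have hexp : 1 - x^2/8 ≤ Real.exp (-(x^2/8)) := by
    have := Real.add_one_le_exp (-(x^2/8)); linarith
  by_cases h1 : x ≤ 1
  · have hb := Real.cos_bound (by rw [abs_of_nonneg h0]; exact h1)
    rw [abs_le] at hb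
    have hb2 : Real.cos x ≤ 1 - x^2/2 + |x|^4 * (5/96) := by linarith [hb.2]
    rw [abs_of_nonneg h0] at hb2
    nlinarith [sq_nonneg x, pow_le_pow_left₀ h0 h1 4, sq_nonneg (x^2)]
  · push_neg at h1
    have hc : Real.cos x ≤ Real.cos 1 :=
      Real.cos_le_cos_of_nonneg_of_le_pi (by norm_num) (by linarith [Real.pi_gt_three]) h1.le
    have hc1 : Real.cos 1 ≤ 1 - 1/2 + 5/96 := by
      have hb := Real.cos_bound (x := 1) (by norm_num)
      rw [abs_le] at hb
      have := hb.2
      norm_num at this ⊢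
      linarith
    have hpi : Real.pi < 3.15 := Real.pi_lt_d2
    nlinarith [sq_nonneg x]

lemma absCos (m k : ℕ) (hm : 0 < m) (hme : Even m) (hk : k < m) (hk0 : k ≠ 0)
    (hkh : k ≠ m/2) :
    ∃ l : ℕ, 1 ≤ l ∧ 4*l ≤ m ∧
      ((k < m/2 ∧ (l = k ∨ l = m/2 - k)) ∨ (m/2 < k ∧ (l = k - m/2 ∨ l = m - k))) ∧
      |Real.cos (2*Real.pi*k/m)| = Real.cos (2*Real.pi*l/m) := by
  obtain ⟨h, rfl⟩ : ∃ h, m = 2*h := by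
    obtain ⟨r, hr⟩ := hme; exact ⟨r, by omega⟩
  have hh0 : 0 < h := by omega
  have hh2 : (2*h : ℕ)/2 = h := by omega
  have hm0 : ((2*h:ℕ):ℝ) ≠ 0 := by positivity
  have hmR : ((2*h:ℕ):ℝ) = 2*(h:ℝ) := by push_cast; ring
  have pi_pos := Real.pi_pos
  -- helper for k' < h, k' ≠ 0 : |cos (2πk'/m)| = cos (2π l/m) with l = min k' (h-k')
  have key : ∀ k' : ℕ, 0 < k' → k' < h →
      |Real.cos (2*Real.pi*k'/(2*h:ℕ))| =
        Real.cos (2*Real.pi*(min k' (h-k'))/(2*h:ℕ)) ∧ 4 * min k' (h-k') ≤ 2*h := by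
    intro k' h0' hh'
    rcases le_or_gt k' (h - k') with hc | hc
    · have hl : min k' (h-k') = k' := min_eq_left hc
      rw [hl]
      constructor
      · rw [abs_of_nonneg]
        apply Real.cos_nonneg_of_mem_Icc
        constructor
        · have : (0:ℝ) ≤ 2*Real.pi*k'/(2*h:ℕ) := by positivity
          linarith
        · rw [div_le_iff₀ (by positivity), hmR]
          have : (4:ℝ)*k' ≤ 2*(h:ℝ) := by
            have : 4*k' ≤ 2*h := by omega
            exact_mod_cast this
          nlinarith
      · omega
    · have hl : min k' (h-k') = h - k' := min_eq_right hc.le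
      rw [hl]
      have hxe : 2*Real.pi*k'/(2*h:ℕ) = Real.pi - 2*Real.pi*((h-k':ℕ))/(2*h:ℕ) := by
        have hcast : ((h-k':ℕ):ℝ) = (h:ℝ) - k' := by
          have : k' ≤ h := hh'.le
          push_cast [this]; ring
        rw [hcast, hmR]
        field_simp
        ring
      rw [hxe, Real.cos_pi_sub, abs_neg]
      constructor
      · rw [abs_of_nonneg]
        apply Real.cos_nonneg_of_mem_Icc
        constructor
        · have : (0:ℝ) ≤ 2*Real.pi*((h-k':ℕ))/(2*h:ℕ) := by positivity
          linarith
        · rw [div_le_iff₀ (by positivity), hmR]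
          have : (4:ℝ)*((h-k':ℕ)) ≤ 2*(h:ℝ) := by
            have : 4*(h-k') ≤ 2*h := by omega
            exact_mod_cast this
          nlinarith
      · omega
  rcases lt_or_gt_of_ne (by rw [hh2] at hkh ⊢; exact hkh : k ≠ (2*h)/2) with hlt | hgt
  · rw [hh2] at hlt
    obtain ⟨e1, e2⟩ := key k (Nat.pos_of_ne_zero hk0) hlt
    exact ⟨min k (h-k), by omega, by omega, Or.inl ⟨by omega, by omega⟩, e1⟩
  · rw [hh2] at hgt
    -- k > h : cos(2πk/m) = cos(2π(k-h)/m + π) = - cos(2π(k-h)/m)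
    have hxe : 2*Real.pi*k/(2*h:ℕ) = 2*Real.pi*((k-h:ℕ))/(2*h:ℕ) + Real.pi := by
      have hcast : ((k-h:ℕ):ℝ) = (k:ℝ) - h := by
        have : h ≤ k := hgt.le
        push_cast [this]; ring
      rw [hcast, hmR]
      field_simp
      ring
    rw [hxe, Real.cos_add_pi, abs_neg]
    have hk'0 : 0 < k - h := by omega
    have hk'h : k - h < h := by omega
    obtain ⟨e1, e2⟩ := key (k-h) hk'0 hk'h
    refine ⟨min (k-h) (h-(k-h)), by omega, by omega, Or.inr ⟨by omega, by omega⟩, e1⟩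

lemma geom_le_two {r : ℝ} (h0 : 0 ≤ r) (h2 : r ≤ 1/2) (n : ℕ) :
    ∑ i ∈ Finset.range n, r ^ i ≤ 2 := by
  have hne : r ≠ 1 := by linarith
  rw [geom_sum_eq hne]
  have hr : 0 ≤ r ^ n := pow_nonneg h0 n
  have : (r^n - 1)/(r-1) = (1 - r^n)/(1-r) := by
    rw [div_eq_div_iff (by linarith) (by linarith)]; ring
  rw [this]
  rw [div_le_iff₀ (by linarith)]
  nlinarith

lemma sum_pow_le_aux (s : Finset ℕ) (g : ℕ → ℕ) (hg : ∀ x ∈ s, ∀ y ∈ s, g x = g y → x = y)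
    (h1 : ∀ k ∈ s, 1 ≤ g k) {q r : ℝ} (hq0 : 0 ≤ q) (hqr : q ≤ r) (hr : r ≤ 1/2) :
    ∑ k ∈ s, q ^ (g k) ≤ 2 * q := by
  have hr0 : 0 ≤ r := le_trans hq0 hqr
  rw [← Finset.sum_image (f := fun y : ℕ => q ^ y) hg]
  set t := s.image g with ht
  have h1t : ∀ y ∈ t, 1 ≤ y := by
    intro y hy
    obtain ⟨x, hx, rfl⟩ := Finset.mem_image.mp hy
    exact h1 x hx
  have step : ∑ y ∈ t, q ^ y ≤ q * ∑ y ∈ t, r ^ (y - 1) := by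
    rw [Finset.mul_sum]
    apply Finset.sum_le_sum
    intro y hy
    have hy1 := h1t y hy
    have : q ^ y = q * q ^ (y-1) := by
      rw [← pow_succ']
      congr 1
      omega
    rw [this]
    exact mul_le_mul_of_nonneg_left (pow_le_pow_left₀ hq0 hqr _) hq0
  have step2 : ∑ y ∈ t, r ^ (y - 1) ≤ 2 := by
    rw [← Finset.sum_image (f := fun i : ℕ => r ^ i)
      (by intro x hx y hy hxy; have := h1t x hx; have := h1t y hy; simp only at hxy; omega)]
    have hsub : t.image (fun y => y - 1) ⊆ Finset.range (t.sup id) := by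
      intro i hi
      obtain ⟨y, hy, rfl⟩ := Finset.mem_image.mp hi
      have := h1t y hy
      have hle : y ≤ t.sup id := Finset.le_sup (f := id) hy
      rw [Finset.mem_range]
      omega
    calc ∑ i ∈ t.image (fun y => y - 1), r ^ i
        ≤ ∑ i ∈ Finset.range (t.sup id), r ^ i :=
          Finset.sum_le_sum_of_subset_of_nonneg hsub (fun i _ _ => pow_nonneg hr0 i)
      _ ≤ 2 := geom_le_two hr0 hr _
  calc ∑ y ∈ t, q ^ y ≤ q * ∑ y ∈ t, r ^ (y-1) := step
    _ ≤ q * 2 := mul_le_mul_of_nonneg_left step2 hq0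
    _ = 2 * q := by ring

lemma count_real (N m : ℕ) (hm : 0 < m) (j : ℕ) :
    (m : ℝ) * ((Finset.univ.filter (fun σ : Fin N → Bool =>
        (m : ℤ) ∣ ((∑ i, if σ i then (1:ℤ) else -1) - (j:ℤ)))).card : ℝ)
    = ∑ k ∈ Finset.range m,
        Real.cos (2*Real.pi*j*k/m) * (2 * Real.cos (2*Real.pi*k/m))^N := by
  have hc := congrArg Complex.re (count_complex N m hm j)
  rw [Complex.re_sum] at hc
  simp only [← Complex.ofReal_pow, Complex.mul_re, Complex.ofReal_re, Complex.ofReal_im,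
    Complex.exp_ofReal_mul_I_re, Complex.natCast_re, Complex.natCast_im, mul_zero, sub_zero,
    zero_mul, Real.cos_neg] at hc
  exact_mod_cast hc

lemma term_bound (N m k : ℕ) (hm : 0 < m) (hme : Even m) (hk : k < m) (hk0 : k ≠ 0)
    (hkh : k ≠ m/2) :
    ∃ l : ℕ,
      ((k < m/2 ∧ (l = k ∨ l = m/2 - k)) ∨ (m/2 < k ∧ (l = k - m/2 ∨ l = m - k))) ∧
      |Real.cos (2*Real.pi*k/m)| ^ N ≤
        (Real.exp (-(Real.pi^2/2) * N / (m:ℝ)^2)) ^ l := by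
  obtain ⟨l, hl1, hl4, hlcases, hlabs⟩ := absCos m k hm hme hk hk0 hkh
  refine ⟨l, hlcases, ?_⟩
  have pi_pos := Real.pi_pos
  have hm0 : (0:ℝ) < m := by exact_mod_cast hm
  set x : ℝ := 2*Real.pi*l/m with hx
  have hx0 : 0 ≤ x := by positivity
  have hx2 : x ≤ Real.pi/2 := by
    rw [hx, div_le_iff₀ hm0]
    have h4 : (4:ℝ)*l ≤ m := by exact_mod_cast hl4
    nlinarith
  have hcosnn : 0 ≤ Real.cos x := by rw [← hlabs]; exact abs_nonneg _
  calc |Real.cos (2*Real.pi*k/m)| ^ N = Real.cos x ^ N := by rw [hlabs]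
    _ ≤ (Real.exp (-(x^2/8))) ^ N :=
        pow_le_pow_left₀ hcosnn (cos_le_exp_aux hx0 hx2) N
    _ = Real.exp (N * (-(x^2/8))) := by rw [Real.exp_nat_mul]
    _ ≤ Real.exp (l * ((-(Real.pi^2/2) * N / (m:ℝ)^2))) := by
        apply Real.exp_le_exp.2
        rw [hx]
        have hl1R : (1:ℝ) ≤ l := by exact_mod_cast hl1
        have hN0 : (0:ℝ) ≤ N := by positivity
        have key : (l:ℝ) ≤ (l:ℝ)^2 := by nlinarith
        have hx2eq : (2*Real.pi*l/m)^2 = 4*Real.pi^2*(l:ℝ)^2/(m:ℝ)^2 := by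
          field_simp; ring
        rw [hx2eq]
        have hfac : (l:ℝ) * (-(Real.pi ^ 2 / 2) * N / (m:ℝ) ^ 2) -
            (N:ℝ) * -(4 * Real.pi ^ 2 * (l:ℝ) ^ 2 / (m:ℝ) ^ 2 / 8) =
            (Real.pi^2 * N / (2 * (m:ℝ)^2)) * ((l:ℝ)^2 - (l:ℝ)) := by
          field_simp
          ring
        have hnn : (0:ℝ) ≤ (Real.pi^2 * N / (2 * (m:ℝ)^2)) * ((l:ℝ)^2 - (l:ℝ)) :=
          mul_nonneg (by positivity) (by linarith)
        linarith
    _ = (Real.exp (-(Real.pi^2/2) * N / (m:ℝ)^2)) ^ l := by rw [Real.exp_nat_mul]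

noncomputable def fTerm (N m j k : ℕ) : ℝ :=
  Real.cos (2*Real.pi*j*k/m) * (2 * Real.cos (2*Real.pi*k/m))^N

noncomputable def Gfun (mm hh : ℕ) (q : ℝ) (k : ℕ) : ℝ :=
  if k < hh then q^k + q^(hh-k) else q^(k-hh) + q^(mm-k)

lemma half_cast (m : ℕ) (hme : Even m) : ((m / 2 : ℕ) : ℝ) = (m:ℝ)/2 := by
  obtain ⟨r, hr⟩ := hme
  have h1 : m / 2 = r := by omega
  have h2 : (m:ℝ) = (r:ℝ) + (r:ℝ) := by exact_mod_cast congrArg (Nat.cast : ℕ → ℝ) hr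
  rw [h1, h2]; ring

lemma lower_bound (N m j : ℕ) (hNe : Even N) (hm : 0 < m) (hme : Even m)
    (hje : Even j) (hNm : m^2 ≤ N) :
    2*2^N - 2^N * (8 * Real.exp (-(Real.pi^2/2) * N / (m:ℝ)^2)) ≤
      ∑ k ∈ Finset.range m, fTerm N m j k := by
  obtain ⟨h, rfl⟩ : ∃ h, m = 2*h := by obtain ⟨r, hr⟩ := hme; exact ⟨r, by omega⟩
  have hh0 : 0 < h := by omega
  have hdiv : (2*h)/2 = h := by omega
  have pi_pos := Real.pi_pos
  have hq0 : (0:ℝ) < Real.exp (-(Real.pi^2/2) * N / ((2*h:ℕ):ℝ)^2) := Real.exp_pos _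
  set q : ℝ := Real.exp (-(Real.pi^2/2) * N / ((2*h:ℕ):ℝ)^2) with hqdef
  have hqhalf : q ≤ 1/2 := by
    have hmR : (0:ℝ) < ((2*h:ℕ):ℝ) := by positivity
    have h1 : -(Real.pi^2/2) * N / ((2*h:ℕ):ℝ)^2 ≤ -1 := by
      rw [div_le_iff₀ (by positivity)]
      have hNm2 : (((2*h:ℕ)):ℝ)^2 ≤ (N:ℝ) := by exact_mod_cast hNm
      have hpi2 : (2:ℝ) ≤ Real.pi^2/2 := by nlinarith [Real.pi_gt_three]
      nlinarith
    calc q ≤ Real.exp (-1) := Real.exp_le_exp.2 h1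
      _ ≤ 1/2 := by
        rw [Real.exp_neg, inv_le_comm₀ (Real.exp_pos 1) (by norm_num)]
        linarith [Real.exp_one_gt_d9]
  have h0mem : (0:ℕ) ∈ Finset.range (2*h) := Finset.mem_range.2 (by omega)
  have hhmem : h ∈ (Finset.range (2*h)).erase 0 :=
    Finset.mem_erase.2 ⟨by omega, Finset.mem_range.2 (by omega)⟩
  rw [← Finset.add_sum_erase _ (fTerm N (2*h) j) h0mem,
    ← Finset.add_sum_erase _ (fTerm N (2*h) j) hhmem]
  have hf0 : fTerm N (2*h) j 0 = 2^N := by simp [fTerm]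
  have hcast2h : ((2*h:ℕ):ℝ) = 2*(h:ℝ) := by push_cast; ring
  have hhne : (h:ℝ) ≠ 0 := by positivity
  have hfh : fTerm N (2*h) j h = 2^N := by
    obtain ⟨t, ht⟩ := hje
    have hjR : (j:ℝ) = 2*t := by rw [ht]; push_cast; ring
    unfold fTerm
    rw [hcast2h, hjR]
    rw [show 2*Real.pi*(2*(t:ℝ))*(h:ℝ)/(2*(h:ℝ)) = (t:ℝ)*(2*Real.pi) by
      field_simp]
    rw [show 2*Real.pi*(h:ℝ)/(2*(h:ℝ)) = Real.pi by field_simp]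
    rw [Real.cos_nat_mul_two_pi, Real.cos_pi]
    rw [show (2:ℝ) * (-1) = -2 by norm_num, hNe.neg_pow]
    ring
  rw [hf0, hfh]
  have h2N : (0:ℝ) < 2^N := by positivity
  have hfG : ∀ k ∈ ((Finset.range (2*h)).erase 0).erase h,
      -(2^N * Gfun (2*h) h q k) ≤ fTerm N (2*h) j k := by
    intro k hk
    simp only [Finset.mem_erase, Finset.mem_range] at hk
    obtain ⟨hkh, hk0, hkm⟩ := hk
    obtain ⟨l, hlcase, hlbound⟩ :=
      term_bound N (2*h) k (by omega) ⟨h, by omega⟩ hkm hk0 (by omega)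
    rw [hdiv] at hlcase
    rw [← hqdef] at hlbound
    have habs : |fTerm N (2*h) j k| ≤ 2^N * Gfun (2*h) h q k := by
      have h1 : |fTerm N (2*h) j k| ≤ 2^N * |Real.cos (2*Real.pi*k/((2*h:ℕ):ℝ))|^N := by
        unfold fTerm
        rw [abs_mul, abs_pow, abs_mul]
        have hc1 : |Real.cos (2*Real.pi*(j:ℝ)*k/((2*h:ℕ):ℝ))| ≤ 1 := Real.abs_cos_le_one _
        have hc2 : (0:ℝ) ≤ (|2| * |Real.cos (2*Real.pi*k/((2*h:ℕ):ℝ))|)^N := by positivity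
        calc |Real.cos (2*Real.pi*(j:ℝ)*(k:ℝ)/((2*h:ℕ):ℝ))| *
              (|2| * |Real.cos (2*Real.pi*(k:ℝ)/((2*h:ℕ):ℝ))|)^N
            ≤ 1 * (|2| * |Real.cos (2*Real.pi*(k:ℝ)/((2*h:ℕ):ℝ))|)^N :=
              mul_le_mul_of_nonneg_right hc1 hc2
          _ = 2^N * |Real.cos (2*Real.pi*(k:ℝ)/((2*h:ℕ):ℝ))|^N := by
              rw [one_mul, mul_pow, abs_of_nonneg (by norm_num : (0:ℝ) ≤ 2)]
      have h2 : q^l ≤ Gfun (2*h) h q k := by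
        unfold Gfun
        rcases hlcase with ⟨hlt, hl⟩ | ⟨hgt, hl⟩
        · rw [if_pos hlt]
          rcases hl with rfl | rfl
          · have : (0:ℝ) ≤ q^(h-l) := by positivity
            linarith
          · have : (0:ℝ) ≤ q^k := by positivity
            linarith
        · rw [if_neg (by omega)]
          rcases hl with rfl | rfl
          · have : (0:ℝ) ≤ q^(2*h-k) := by positivity
            linarith
          · have : (0:ℝ) ≤ q^(k-h) := by positivity
            linarith
      calc |fTerm N (2*h) j k| ≤ 2^N * |Real.cos (2*Real.pi*k/((2*h:ℕ):ℝ))|^N := h1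
        _ ≤ 2^N * q^l := mul_le_mul_of_nonneg_left hlbound (by positivity)
        _ ≤ 2^N * Gfun (2*h) h q k := mul_le_mul_of_nonneg_left h2 (by positivity)
    linarith [neg_abs_le (fTerm N (2*h) j k), habs]
  have hGsum : ∑ k ∈ ((Finset.range (2*h)).erase 0).erase h, Gfun (2*h) h q k ≤ 8 * q := by
    rw [← Finset.sum_filter_add_sum_filter_not _ (fun k => k < h)]
    have hpart1 : ∑ k ∈ (((Finset.range (2*h)).erase 0).erase h).filter (fun k => k < h),
        Gfun (2*h) h q k ≤ 4 * q := by
      have heq : ∀ k ∈ (((Finset.range (2*h)).erase 0).erase h).filter (fun k => k < h),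
          Gfun (2*h) h q k = q^k + q^(h-k) := by
        intro k hk
        rw [Finset.mem_filter] at hk
        unfold Gfun
        rw [if_pos hk.2]
      rw [Finset.sum_congr rfl heq, Finset.sum_add_distrib]
      have hb1 : ∑ k ∈ (((Finset.range (2*h)).erase 0).erase h).filter (fun k => k < h),
          q^k ≤ 2*q := by
        apply sum_pow_le_aux _ id (fun x _ y _ hxy => hxy) ?_ hq0.le le_rfl hqhalf
        intro k hk
        rw [Finset.mem_filter, Finset.mem_erase, Finset.mem_erase] at hk
        have hk0 : k ≠ 0 := hk.1.2.1
        show 1 ≤ k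
        omega
      have hb2 : ∑ k ∈ (((Finset.range (2*h)).erase 0).erase h).filter (fun k => k < h),
          q^(h-k) ≤ 2*q := by
        apply sum_pow_le_aux _ (fun k => h - k) ?_ ?_ hq0.le le_rfl hqhalf
        · intro x hx y hy hxy
          rw [Finset.mem_filter] at hx hy
          have hx2 : x < h := hx.2
          have hy2 : y < h := hy.2
          have hxy' : h - x = h - y := hxy
          omega
        · intro k hk
          rw [Finset.mem_filter] at hk
          have hk2 : k < h := hk.2
          show 1 ≤ h - k
          omega
      linarith
    have hpart2 : ∑ k ∈ (((Finset.range (2*h)).erase 0).erase h).filter (fun k => ¬ k < h),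
        Gfun (2*h) h q k ≤ 4 * q := by
      have heq : ∀ k ∈ (((Finset.range (2*h)).erase 0).erase h).filter (fun k => ¬ k < h),
          Gfun (2*h) h q k = q^(k-h) + q^(2*h-k) := by
        intro k hk
        rw [Finset.mem_filter] at hk
        unfold Gfun
        rw [if_neg hk.2]
      rw [Finset.sum_congr rfl heq, Finset.sum_add_distrib]
      have hb1 : ∑ k ∈ (((Finset.range (2*h)).erase 0).erase h).filter (fun k => ¬ k < h),
          q^(k-h) ≤ 2*q := by
        apply sum_pow_le_aux _ (fun k => k - h) ?_ ?_ hq0.le le_rfl hqhalf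
        · intro x hx y hy hxy
          rw [Finset.mem_filter, Finset.mem_erase, Finset.mem_erase] at hx hy
          have hx1 : x ≠ h := hx.1.1
          have hy1 : y ≠ h := hy.1.1
          have hx2 : ¬ x < h := hx.2
          have hy2 : ¬ y < h := hy.2
          have hxy' : x - h = y - h := hxy
          omega
        · intro k hk
          rw [Finset.mem_filter, Finset.mem_erase, Finset.mem_erase] at hk
          have hk1 : k ≠ h := hk.1.1
          have hk2 : ¬ k < h := hk.2
          show 1 ≤ k - h
          omega
      have hb2 : ∑ k ∈ (((Finset.range (2*h)).erase 0).erase h).filter (fun k => ¬ k < h),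
          q^(2*h-k) ≤ 2*q := by
        apply sum_pow_le_aux _ (fun k => 2*h - k) ?_ ?_ hq0.le le_rfl hqhalf
        · intro x hx y hy hxy
          rw [Finset.mem_filter, Finset.mem_erase, Finset.mem_erase,
            Finset.mem_range] at hx hy
          have hx3 : x < 2*h := hx.1.2.2
          have hy3 : y < 2*h := hy.1.2.2
          have hxy' : 2*h - x = 2*h - y := hxy
          omega
        · intro k hk
          rw [Finset.mem_filter, Finset.mem_erase, Finset.mem_erase,
            Finset.mem_range] at hk
          have hk3 : k < 2*h := hk.1.2.2
          show 1 ≤ 2*h - k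
          omega
      linarith
    linarith
  have hSsum : -(2^N * (8*q)) ≤ ∑ k ∈ ((Finset.range (2*h)).erase 0).erase h,
      fTerm N (2*h) j k := by
    have step1 : ∑ k ∈ ((Finset.range (2*h)).erase 0).erase h, -(2^N * Gfun (2*h) h q k)
        ≤ ∑ k ∈ ((Finset.range (2*h)).erase 0).erase h, fTerm N (2*h) j k :=
      Finset.sum_le_sum hfG
    have step2 : ∑ k ∈ ((Finset.range (2*h)).erase 0).erase h, -(2^N * Gfun (2*h) h q k)
        = -(2^N * ∑ k ∈ ((Finset.range (2*h)).erase 0).erase h, Gfun (2*h) h q k) := by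
      rw [Finset.mul_sum, ← Finset.sum_neg_distrib]
    have step3 : -(2^N * (8*q)) ≤
        -(2^N * ∑ k ∈ ((Finset.range (2*h)).erase 0).erase h, Gfun (2*h) h q k) := by
      have := mul_le_mul_of_nonneg_left hGsum h2N.le
      linarith
    linarith [step1, step2 ▸ step1, step3]
  linarith

/-- Trimming bound: for `m` even, `N` even, if `A` is the minimum over even
residues `j` modulo `m` of the number of sign vectors `v ∈ {±1}^N` with
`∑ vᵢ ≡ j (mod m)`, then `2^N - (m/2)·A ≤ C·2^N·exp(-cN/m²)` for absolute
constants `c, C > 0`. -/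
theorem trimmed_count_bound :
    ∃ C : ℝ, 0 < C ∧ ∃ c : ℝ, 0 < c ∧
      ∀ (N m : ℕ), 0 < N → Even N → 0 < m → Even m →
      ∀ A : ℕ,
        A = sInf {a : ℕ | ∃ j ∈ Finset.range m, Even j ∧
          a = (Finset.univ.filter (fun σ : Fin N → Bool =>
                (m : ℤ) ∣ ((∑ i, if σ i then (1 : ℤ) else -1) - (j : ℤ)))).card} →
        (2 : ℝ) ^ N - ((m / 2 : ℕ) : ℝ) * A ≤
          C * 2 ^ N * Real.exp (-c * N / (m : ℝ) ^ 2) := by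
  refine ⟨200, by norm_num, Real.pi^2/2, by positivity, ?_⟩
  intro N m hN hNe hm hme A hA
  have pi_pos := Real.pi_pos
  have hexp5 : Real.exp (Real.pi^2/2) ≤ 200 := by
    have h1 : Real.pi^2/2 ≤ 5 := by nlinarith [Real.pi_lt_d2]
    calc Real.exp (Real.pi^2/2) ≤ Real.exp 5 := Real.exp_le_exp.2 h1
      _ = Real.exp 1 ^ 5 := by
          rw [← Real.exp_nat_mul]; norm_num
      _ ≤ 2.7182818286^5 :=
          pow_le_pow_left₀ (Real.exp_pos 1).le Real.exp_one_lt_d9.le 5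
      _ ≤ 200 := by norm_num
  have hq0 : (0:ℝ) < Real.exp (-(Real.pi^2/2) * N / (m:ℝ)^2) := Real.exp_pos _
  have hm0R : (0:ℝ) < m := by exact_mod_cast hm
  have h2N : (0:ℝ) < 2^N := by positivity
  have hmem : A ∈ {a : ℕ | ∃ j ∈ Finset.range m, Even j ∧
          a = (Finset.univ.filter (fun σ : Fin N → Bool =>
                (m : ℤ) ∣ ((∑ i, if σ i then (1 : ℤ) else -1) - (j : ℤ)))).card} := by
    rw [hA]
    exact Nat.sInf_mem ⟨_, 0, Finset.mem_range.2 hm, Even.zero, rfl⟩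
  obtain ⟨j, hjm, hje, hAj⟩ := hmem
  have hAnn : (0:ℝ) ≤ ((m / 2 : ℕ) : ℝ) * A := by positivity
  by_cases hNm : N < m^2
  · have hq1 : 1/200 ≤ Real.exp (-(Real.pi^2/2) * N / (m:ℝ)^2) := by
      have h1 : -(Real.pi^2/2) ≤ -(Real.pi^2/2) * N / (m:ℝ)^2 := by
        rw [neg_mul, neg_div, neg_le_neg_iff, div_le_iff₀ (by positivity)]
        have hNm2 : (N:ℝ) ≤ (m:ℝ)^2 := by exact_mod_cast hNm.le
        nlinarith [sq_nonneg Real.pi]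
      calc (1:ℝ)/200 ≤ 1/(Real.exp (Real.pi^2/2)) :=
            one_div_le_one_div_of_le (Real.exp_pos _) hexp5
        _ = Real.exp (-(Real.pi^2/2)) := by rw [Real.exp_neg, one_div]
        _ ≤ _ := Real.exp_le_exp.2 h1
    have key : 200 * 2^N * (1/200) ≤ 200 * 2^N * Real.exp (-(Real.pi^2/2) * N / (m:ℝ)^2) :=
      mul_le_mul_of_nonneg_left hq1 (by positivity)
    have : 200 * 2^N * (1/200 : ℝ) = 2^N := by ring
    linarith
  · push_neg at hNm
    have hcR := count_real N m hm j
    rw [← hAj] at hcR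
    have hsum_eq : ∑ k ∈ Finset.range m,
        Real.cos (2*Real.pi*j*k/m) * (2 * Real.cos (2*Real.pi*k/m))^N
        = ∑ k ∈ Finset.range m, fTerm N m j k :=
      Finset.sum_congr rfl (fun k _ => rfl)
    rw [hsum_eq] at hcR
    have hlow := lower_bound N m j hNe hm hme hje hNm
    rw [← hcR] at hlow
    have hhR : ((m / 2 : ℕ) : ℝ) = (m:ℝ)/2 := half_cast m hme
    have hfinal : ((m / 2 : ℕ) : ℝ) * A ≥ 2^N - 2^N * (4 * Real.exp (-(Real.pi^2/2) * N / (m:ℝ)^2)) := by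
      rw [hhR]
      nlinarith [hlow]
    have hbd : 2^N * (4 * Real.exp (-(Real.pi^2/2) * N / (m:ℝ)^2)) ≤
        200 * 2^N * Real.exp (-(Real.pi^2/2) * N / (m:ℝ)^2) := by
      nlinarith [hq0, h2N]
    linarith
end

section
/- Let ξ₁, ξ₂, … be i.i.d. Rademacher variables, N ≥ k+1, and group them into blocks Ξ_a = (ξ_{Na−N+1}, …, ξ_{Na}). Let S ⊆ {±1}^N and let B = min{b : #{a ≤ b : Ξ_a ∉ S} = k+1} (assumed a.s. finite). Suppose Y is an event measurable with respect to (ξ₁,…,ξ_{BN}) such that P(Y | X ∩ S(σ,b)) = P(Y) for every b and every σ ⊆ {1,…,b−1} with |σ| = b−(k+1), where S(σ,b) = {Ξ_a ∈ S ⇔ a ∈ σ, ∀a ≤ b} and X = {ξ_{i₁}=δ₁,…,ξ_{i_k}=δ_k} is any cylinder event on k coordinates. Then P(X | Y) = P(X) = 2^{−k}. -/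
open MeasureTheory ProbabilityTheory
open scoped Classical
open scoped ENNReal

/-- The key independence lemma. Let `ξ₁, ξ₂, …` be i.i.d. Rademacher, grouped
into blocks `Ξ_a = (ξ_{Na-N+1}, …, ξ_{Na})` for `a = 1, 2, …`, let
`S ⊆ {±1}^N`, and let `B` be the first time `b` at which exactly `k+1` of the
blocks `Ξ_1, …, Ξ_b` fall outside `S` (assumed a.s. finite). Let
`X = {ξ_{i₁} = δ₁, …, ξ_{i_k} = δ_k}` be a cylinder event on `k` coordinates,
and for `σ ⊆ {1, …, b-1}` with `|σ| = b - (k+1)` let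
`S(σ,b) = {Ξ_a ∈ S ⇔ a ∈ σ, ∀ a ≤ b}`. If the event `Y` satisfies
`P(Y ∩ (X ∩ S(σ,b))) = P(Y)·P(X ∩ S(σ,b))` for all such `σ, b`, then
`P(X ∩ Y) = 2^{-k}·P(Y)` (i.e. `P(X | Y) = P(X)`) and `P(X) = 2^{-k}`. -/
theorem key_independence_lemma
    {Ω : Type*} [MeasurableSpace Ω] (μ : Measure Ω) [IsProbabilityMeasure μ]
    (k N : ℕ) (hk : 0 < k) (hN : k + 1 ≤ N)
    (ξ : ℕ → Ω → ℤ) (hmeas : ∀ i, Measurable (ξ i))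
    (hindep : iIndepFun ξ μ)
    (hrange : ∀ i ω, ξ i ω = 1 ∨ ξ i ω = -1)
    (hdist : ∀ i, μ {ω | ξ i ω = 1} = 1/2)
    (S : Set (Fin N → ℤ)) (hS : MeasurableSet S)
    (Ξ : ℕ → Ω → Fin N → ℤ)
    (hΞ : ∀ a ω (t : Fin N), Ξ a ω t = ξ (N * a - N + (t : ℕ) + 1) ω)
    (hBfin : ∀ᵐ ω ∂μ, ∃ b : ℕ,
      ((Finset.Icc 1 b).filter fun a => Ξ a ω ∉ S).card = k + 1)
    (i : Fin k → ℕ) (hi : StrictMono i) (hi1 : ∀ t, 1 ≤ i t)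
    (δ : Fin k → ℤ) (hδ : ∀ t, δ t = 1 ∨ δ t = -1)
    (X : Set Ω) (hX : X = {ω | ∀ t, ξ (i t) ω = δ t})
    (Sev : Finset ℕ → ℕ → Set Ω)
    (hSev : ∀ σ b, Sev σ b = {ω | ∀ a, 1 ≤ a → a ≤ b → (Ξ a ω ∈ S ↔ a ∈ σ)})
    (Y : Set Ω) (hYmeas : MeasurableSet Y)
    (hY : ∀ b : ℕ, ∀ σ : Finset ℕ, σ ⊆ Finset.Icc 1 (b - 1) →
      σ.card + (k + 1) = b →
      μ (Y ∩ (X ∩ Sev σ b)) = μ Y * μ (X ∩ Sev σ b)) :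
    μ (X ∩ Y) = (2 : ℝ≥0∞)⁻¹ ^ k * μ Y ∧ μ X = (2 : ℝ≥0∞)⁻¹ ^ k := by
  -- basic measurability facts
  have hξmeas : ∀ (j : ℕ) (d : ℤ), MeasurableSet {ω | ξ j ω = d} :=
    fun j d => (hmeas j) (measurableSet_singleton d)
  have hXmeas : MeasurableSet X := by
    rw [hX]
    have : {ω | ∀ t, ξ (i t) ω = δ t} = ⋂ t, {ω | ξ (i t) ω = δ t} := by
      ext ω; simp
    rw [this]
    exact MeasurableSet.iInter fun t => hξmeas _ _
  have hΞmeas : ∀ a, Measurable (Ξ a) := by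
    intro a
    apply measurable_pi_lambda
    intro t
    have h : (fun ω => Ξ a ω t) = ξ (N * a - N + (t : ℕ) + 1) := by
      ext ω; rw [hΞ]
    rw [h]; exact hmeas _
  have hSevMeas : ∀ σ b, MeasurableSet (Sev σ b) := by
    intro σ b
    rw [hSev]
    have h : {ω | ∀ a, 1 ≤ a → a ≤ b → (Ξ a ω ∈ S ↔ a ∈ σ)}
        = ⋂ a ∈ Finset.Icc 1 b, {ω | Ξ a ω ∈ S ↔ a ∈ σ} := by
      ext ω
      simp only [Set.mem_setOf_eq, Set.mem_iInter, Finset.mem_Icc, and_imp]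
    rw [h]
    refine MeasurableSet.biInter (Finset.Icc 1 b).countable_toSet fun a _ => ?_
    by_cases h' : a ∈ σ
    · simp only [h', iff_true]
      exact (hΞmeas a) hS
    · simp only [h', iff_false]
      exact ((hΞmeas a) hS).compl
  -- each Rademacher coordinate event has measure 1/2
  have hhalf : ∀ (j : ℕ) (d : ℤ), d = 1 ∨ d = -1 → μ {ω | ξ j ω = d} = 2⁻¹ := by
    intro j d hd
    have h1 : μ {ω | ξ j ω = 1} = 2⁻¹ := by rw [hdist j, one_div]
    rcases hd with rfl | rfl
    · exact h1
    · have hc : {ω | ξ j ω = (-1 : ℤ)} = {ω | ξ j ω = 1}ᶜ := by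
        ext ω
        simp only [Set.mem_setOf_eq, Set.mem_compl_iff]
        constructor
        · intro h h'; rw [h'] at h; norm_num at h
        · intro h; rcases hrange j ω with h' | h'
          · exact absurd h' h
          · exact h'
      rw [hc, measure_compl (hξmeas j 1) (measure_ne_top μ _), measure_univ, h1]
      exact ENNReal.one_sub_inv_two
  -- `μ X = 2⁻¹ ^ k` by independence
  have hμX : μ X = (2 : ℝ≥0∞)⁻¹ ^ k := by
    classical
    set d : ℕ → ℤ := fun j => if h : ∃ t, i t = j then δ h.choose else 1 with hd
    have hdi : ∀ t, d (i t) = δ t := by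
      intro t
      have h : ∃ t', i t' = i t := ⟨t, rfl⟩
      have hcs := h.choose_spec
      simp only [hd, dif_pos h]
      rw [hi.injective hcs]
    have hXeq : X = ⋂ j ∈ Finset.image i Finset.univ, ξ j ⁻¹' {d j} := by
      rw [hX]; ext ω
      simp only [Set.mem_setOf_eq, Set.mem_iInter, Finset.mem_image, Finset.mem_univ,
        true_and, Set.mem_preimage, Set.mem_singleton_iff]
      constructor
      · rintro h j ⟨t, rfl⟩; rw [hdi]; exact h t
      · intro h t; have := h (i t) ⟨t, rfl⟩; rwa [hdi] at this
    rw [hXeq, hindep.meas_biInter (fun j _ => ⟨{d j}, measurableSet_singleton _, rfl⟩),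
      Finset.prod_image (fun a _ b _ h => hi.injective h)]
    have hterm : ∀ t : Fin k, μ (ξ (i t) ⁻¹' {d (i t)}) = (2 : ℝ≥0∞)⁻¹ := by
      intro t
      rw [hdi]
      exact hhalf _ _ (hδ t)
    rw [Finset.prod_congr rfl fun t _ => hterm t, Finset.prod_const]
    simp
  -- the valid pairs (b, σ)
  set V : Set (ℕ × Finset ℕ) :=
    {p | p.2 ⊆ Finset.Icc 1 (p.1 - 1) ∧ p.2.card + (k + 1) = p.1} with hVdef
  have hVcount : V.Countable := Set.to_countable V
  -- on `Sev σ b`, the set σ is determined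
  have hσeq : ∀ (b : ℕ) (σ : Finset ℕ), σ ⊆ Finset.Icc 1 (b - 1) → ∀ ω ∈ Sev σ b,
      σ = (Finset.Icc 1 b).filter (fun a => Ξ a ω ∈ S) := by
    intro b σ hσ ω hω
    rw [hSev] at hω
    ext a
    simp only [Finset.mem_filter, Finset.mem_Icc]
    constructor
    · intro ha
      have hab := hσ ha
      rw [Finset.mem_Icc] at hab
      have h2 : a ≤ b := le_trans hab.2 (Nat.sub_le b 1)
      exact ⟨⟨hab.1, h2⟩, (hω a hab.1 h2).mpr ha⟩
    · rintro ⟨⟨h1, h2⟩, hin⟩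
      exact (hω a h1 h2).mp hin
  -- failure count on `Sev σ b` for a valid pair
  have hcard : ∀ (c : ℕ) (τ : Finset ℕ), τ ⊆ Finset.Icc 1 (c - 1) → τ.card + (k + 1) = c →
      ∀ ω ∈ Sev τ c, ((Finset.Icc 1 c).filter fun a => Ξ a ω ∉ S).card = k + 1 := by
    intro c τ hsub hc ω hω
    have hτ := hσeq c τ hsub ω hω
    have hsub' : τ ⊆ Finset.Icc 1 c :=
      hsub.trans (Finset.Icc_subset_Icc_right (Nat.sub_le c 1))
    have heq : (Finset.Icc 1 c).filter (fun a => Ξ a ω ∉ S) = Finset.Icc 1 c \ τ := by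
      rw [hτ]; exact Finset.filter_not _ _
    rw [heq, Finset.card_sdiff_of_subset hsub', Nat.card_Icc]
    omega
  -- disjointness
  have hdisj : V.PairwiseDisjoint (fun p : ℕ × Finset ℕ => Sev p.2 p.1) := by
    rintro ⟨b, σ⟩ hp ⟨b', σ'⟩ hq hne
    rw [Function.onFun, Set.disjoint_left]
    intro ω hω hω'
    apply hne
    obtain ⟨hσsub, hσcard⟩ := hp
    obtain ⟨hσsub', hσcard'⟩ := hq
    have habs : ∀ (c c' : ℕ) (τ τ' : Finset ℕ), τ ⊆ Finset.Icc 1 (c - 1) →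
        τ.card + (k + 1) = c → ω ∈ Sev τ c → τ' ⊆ Finset.Icc 1 (c' - 1) →
        τ'.card + (k + 1) = c' → ω ∈ Sev τ' c' → c < c' → False := by
      intro c c' τ τ' h1 h2 h3 h1' h2' h3' hlt
      have hc := hcard c τ h1 h2 ω h3
      have hc' := hcard c' τ' h1' h2' ω h3'
      have hb1 : 1 ≤ c' := by omega
      have hnot : Ξ c' ω ∉ S := by
        rw [hSev] at h3'
        intro hmem
        have hin := (h3' c' hb1 le_rfl).mp hmem
        have := h1' hin
        rw [Finset.mem_Icc] at this
        omega
      have hsub : insert c' ((Finset.Icc 1 c).filter fun a => Ξ a ω ∉ S)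
          ⊆ (Finset.Icc 1 c').filter fun a => Ξ a ω ∉ S := by
        intro a ha
        rw [Finset.mem_insert] at ha
        rcases ha with rfl | ha
        · rw [Finset.mem_filter, Finset.mem_Icc]
          exact ⟨⟨hb1, le_rfl⟩, hnot⟩
        · rw [Finset.mem_filter, Finset.mem_Icc] at ha ⊢
          exact ⟨⟨ha.1.1, le_trans ha.1.2 (le_of_lt hlt)⟩, ha.2⟩
      have hle := Finset.card_le_card hsub
      rw [Finset.card_insert_of_notMem (fun h => by
        rw [Finset.mem_filter, Finset.mem_Icc] at h
        exact absurd h.1.2 (by omega))] at hle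
      omega
    have hbb : b = b' := by
      rcases lt_trichotomy b b' with h | h | h
      · exact absurd (habs b b' σ σ' hσsub hσcard hω hσsub' hσcard' hω' h) id
      · exact h
      · exact absurd (habs b' b σ' σ hσsub' hσcard' hω' hσsub hσcard hω h) id
    subst hbb
    have hs1 := hσeq b σ hσsub ω hω
    have hs2 := hσeq b σ' hσsub' ω hω'
    rw [Prod.mk.injEq]
    exact ⟨rfl, hs1.trans hs2.symm⟩
  -- covering
  have hcover : ∀ᵐ ω ∂μ, ω ∈ ⋃ p ∈ V, Sev p.2 p.1 := by
    filter_upwards [hBfin] with ω hb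
    set c : ℕ → ℕ := fun b => ((Finset.Icc 1 b).filter fun a => Ξ a ω ∉ S).card with hcdef
    have hex : ∃ b, c b = k + 1 := hb
    set B := Nat.find hex with hBdef
    have hBspec : c B = k + 1 := Nat.find_spec hex
    have hmin : ∀ b < B, c b ≠ k + 1 := fun b hb' => Nat.find_min hex hb'
    have hc0 : c 0 = 0 := by simp [hcdef]
    have hB1 : 1 ≤ B := by
      rcases Nat.eq_zero_or_pos B with h | h
      · rw [h, hc0] at hBspec; omega
      · exact h
    have hstep : Finset.Icc 1 B = insert B (Finset.Icc 1 (B - 1)) := by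
      ext a
      rw [Finset.mem_insert, Finset.mem_Icc, Finset.mem_Icc]
      omega
    have hBnotmem : B ∉ Finset.Icc 1 (B - 1) := by
      rw [Finset.mem_Icc]; omega
    have hnotS : Ξ B ω ∉ S := by
      intro hmem
      have heq : c B = c (B - 1) := by
        show ((Finset.Icc 1 B).filter fun a => Ξ a ω ∉ S).card = _
        rw [hstep, Finset.filter_insert, if_neg (by simpa using hmem)]
      have := hmin (B - 1) (by omega)
      omega
    set σ := (Finset.Icc 1 B).filter (fun a => Ξ a ω ∈ S) with hσdef
    have hsplit : σ.card + c B = B := by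
      have h := Finset.card_filter_add_card_filter_not
        (s := Finset.Icc 1 B) (p := fun a => Ξ a ω ∈ S)
      rw [Nat.card_Icc] at h
      have hB' : B + 1 - 1 = B := by omega
      rw [hB'] at h
      exact h
    have hσsub : σ ⊆ Finset.Icc 1 (B - 1) := by
      intro a ha
      rw [hσdef, Finset.mem_filter, Finset.mem_Icc] at ha
      rw [Finset.mem_Icc]
      have hne : a ≠ B := fun h => hnotS (h ▸ ha.2)
      omega
    refine Set.mem_biUnion (show (B, σ) ∈ V from ⟨hσsub, show σ.card + (k + 1) = B by omega⟩) ?_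
    rw [hSev]
    intro a h1 h2
    rw [hσdef, Finset.mem_filter, Finset.mem_Icc]
    constructor
    · intro hmem; exact ⟨⟨h1, h2⟩, hmem⟩
    · rintro ⟨_, hmem⟩; exact hmem
  -- decomposition of any measurable set
  have hsum : ∀ A : Set Ω, MeasurableSet A →
      μ A = ∑' p : V, μ (A ∩ Sev p.1.2 p.1.1) := by
    intro A hA
    have hUmeas : MeasurableSet (⋃ p ∈ V, Sev p.2 p.1) :=
      MeasurableSet.biUnion hVcount fun p _ => hSevMeas _ _
    have hnull : μ (⋃ p ∈ V, Sev p.2 p.1)ᶜ = 0 := ae_iff.mp hcover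
    have hdiff : μ (A \ ⋃ p ∈ V, Sev p.2 p.1) = 0 :=
      measure_mono_null (Set.diff_subset_compl _ _) hnull
    have h1 : μ A = μ (A ∩ ⋃ p ∈ V, Sev p.2 p.1) := by
      rw [← measure_inter_add_diff A hUmeas, hdiff, add_zero]
    rw [h1, Set.inter_iUnion₂]
    rw [measure_biUnion hVcount (hdisj.mono fun p => Set.inter_subset_right)
      (fun p _ => hA.inter (hSevMeas _ _))]
  -- conclusion
  have hXY : μ (X ∩ Y) = μ Y * μ X := by
    rw [hsum (X ∩ Y) (hXmeas.inter hYmeas), hsum X hXmeas, ← ENNReal.tsum_mul_left]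
    apply tsum_congr
    rintro ⟨⟨b, σ⟩, hp⟩
    have heq : (X ∩ Y) ∩ Sev σ b = Y ∩ (X ∩ Sev σ b) := by
      ext ω
      simp only [Set.mem_inter_iff]
      tauto
    rw [heq, hY b σ hp.1 hp.2]
  exact ⟨by rw [hXY, hμX, mul_comm], hμX⟩
end
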